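/- arXiv:2411.08426 — 8 statements merged into one kernel-verified Lean document; each statement's English description precedes it below -/
import Mathlib

section
/- The strict Caylerian polynomial is the reverse of the weak Caylerian polynomial: for n ≥ 1, C°_n(t) = t^(n-1) · C_n(1/t), as an identity of Laurent polynomials (equivalently, the coefficient of t^k in C°_n equals the coefficient of t^(n-1-k) in C_n). -/
open Finset

def IsCayley {n : ℕ} (w : Fin n → ℕ) : Prop :=
  ∃ k ≤ n, Set.range w = Set.Icc 1 k

def desW {n : ℕ} (w : Fin n → ℕ) : ℕ :=
  (Finset.univ.filter (fun i : Fin (n - 1) =>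
    w ⟨i.val + 1, by have := i.isLt; omega⟩ ≤ w ⟨i.val, by have := i.isLt; omega⟩)).card

def desS {n : ℕ} (w : Fin n → ℕ) : ℕ :=
  (Finset.univ.filter (fun i : Fin (n - 1) =>
    w ⟨i.val + 1, by have := i.isLt; omega⟩ < w ⟨i.val, by have := i.isLt; omega⟩)).card

lemma isCayley_comp_rev {n : ℕ} (w : Fin n → ℕ) (h : IsCayley w) :
    IsCayley (w ∘ Fin.rev) := by
  obtain ⟨m, hm, hr⟩ := h
  refine ⟨m, hm, ?_⟩
  rw [Set.range_comp, Fin.rev_involutive.surjective.range_eq, Set.image_univ, hr]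

lemma aux_card {n : ℕ} (q : Fin n → Prop) [DecidablePred q] :
    (univ.filter (fun i => q (Fin.rev i))).card = (univ.filter q).card := by
  have h : univ.filter (fun i => q (Fin.rev i)) = (univ.filter q).image Fin.rev := by
    ext j
    simp only [mem_filter, mem_univ, true_and, mem_image]
    constructor
    · intro hq; exact ⟨Fin.rev j, hq, Fin.rev_rev j⟩
    · rintro ⟨i, hi, rfl⟩; rwa [Fin.rev_rev]
  rw [h, Finset.card_image_of_injective _ Fin.rev_injective]

lemma desS_comp_rev {n : ℕ} (w : Fin n → ℕ) :
    desS (w ∘ Fin.rev) + desW w = n - 1 := by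
  unfold desS desW
  have hiff : ∀ i ∈ (univ : Finset (Fin (n - 1))),
      ((w ∘ Fin.rev) ⟨i.val + 1, by have := i.isLt; omega⟩ <
       (w ∘ Fin.rev) ⟨i.val, by have := i.isLt; omega⟩)
      ↔ ¬ (w ⟨(Fin.rev i).val + 1, by have := (Fin.rev i).isLt; omega⟩ ≤
           w ⟨(Fin.rev i).val, by have := (Fin.rev i).isLt; omega⟩) := by
    intro i _
    have h1 := i.isLt
    simp only [Function.comp_apply]
    have hXT : w (Fin.rev (⟨i.val + 1, by omega⟩ : Fin n)) =
        w ⟨(Fin.rev i).val, by have := (Fin.rev i).isLt; omega⟩ :=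
      congrArg w (Fin.ext (by simp only [Fin.val_rev, Fin.val_mk]; omega))
    have hYZ : w (Fin.rev (⟨i.val, by omega⟩ : Fin n)) =
        w ⟨(Fin.rev i).val + 1, by have := (Fin.rev i).isLt; omega⟩ :=
      congrArg w (Fin.ext (by simp only [Fin.val_rev, Fin.val_mk]; omega))
    rw [hXT, hYZ]
    omega
  rw [filter_congr hiff,
    aux_card (fun j : Fin (n - 1) => ¬ (w ⟨j.val + 1, by have := j.isLt; omega⟩ ≤
      w ⟨j.val, by have := j.isLt; omega⟩)),
    add_comm, Finset.card_filter_add_card_filter_not]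
  simp

lemma comp_rev_rev {n : ℕ} (w : Fin n → ℕ) : (w ∘ Fin.rev) ∘ Fin.rev = w := by
  funext x; simp [Fin.rev_rev]

theorem strict_caylerian_reverse (n : ℕ) (hn : 1 ≤ n) (k : ℕ) (hk : k ≤ n - 1) :
    Set.ncard {w : Fin n → ℕ | IsCayley w ∧ desS w = k} =
      Set.ncard {w : Fin n → ℕ | IsCayley w ∧ desW w = n - 1 - k} := by
  have inj : Function.Injective (fun w : Fin n → ℕ => w ∘ Fin.rev) := by
    intro a b hab
    have := congrArg (fun w => w ∘ (Fin.rev : Fin n → Fin n)) hab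
    simpa [comp_rev_rev] using this
  have key : {w : Fin n → ℕ | IsCayley w ∧ desS w = k} =
      (fun w : Fin n → ℕ => w ∘ Fin.rev) '' {w : Fin n → ℕ | IsCayley w ∧ desW w = n - 1 - k} := by
    ext w
    simp only [Set.mem_setOf_eq, Set.mem_image]
    constructor
    · rintro ⟨hc, hd⟩
      refine ⟨w ∘ Fin.rev, ⟨isCayley_comp_rev w hc, ?_⟩, comp_rev_rev w⟩
      have h2 := desS_comp_rev (w ∘ Fin.rev)
      rw [comp_rev_rev] at h2
      omega
    · rintro ⟨v, ⟨hc, hd⟩, rfl⟩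
      refine ⟨isCayley_comp_rev v hc, ?_⟩
      have h2 := desS_comp_rev v
      omega
  rw [key, Set.ncard_image_of_injective _ inj]
end

section
/- For all m, n ≥ 0: n! · |Genmat_m[n]| = Σ_{k=0}^{n} c(n,k) · m^k · fub(k), where c(n,k) is the unsigned Stirling number of the first kind and fub(k) is the k-th Fubini number. -/
open Finset

noncomputable def fubini (n : ℕ) : ℕ :=
  Set.ncard {L : List (Finset (Fin n)) |
    (∀ B ∈ L, B.Nonempty) ∧ L.Pairwise Disjoint ∧ ∀ x, ∃ B ∈ L, x ∈ B}

noncomputable def stirling1 (n k : ℕ) : ℕ :=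
  Set.ncard {σ : Equiv.Perm (Fin n) |
    (n - σ.support.card) + Multiset.card σ.cycleType = k}

noncomputable def GenmatCard (m n : ℕ) : ℕ :=
  Set.ncard {p : Σ k : ℕ, Matrix (Fin m) (Fin k) ℕ |
    (∑ i, ∑ j, p.2 i j) = n ∧ ∀ j, ∃ i, 0 < p.2 i j}


variable {n : ℕ}

def scSetoid (σ : Equiv.Perm (Fin n)) : Setoid (Fin n) :=
  ⟨σ.SameCycle, ⟨fun _ => Equiv.Perm.SameCycle.refl σ _, fun h => h.symm, fun h h' => h.trans h'⟩⟩

lemma sameCycle_fixed {σ : Equiv.Perm (Fin n)} {x y : Fin n} (h : σ.SameCycle x y)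
    (hx : σ x = x) : y = x := by
  obtain ⟨i, hi⟩ := h
  rw [← hi, Equiv.Perm.zpow_apply_eq_self_of_apply_eq_self hx]

noncomputable def cycleEquiv (σ : Equiv.Perm (Fin n)) :
    Quotient (scSetoid σ) ≃ ({x : Fin n // σ x = x} ⊕ {c : Equiv.Perm (Fin n) // c ∈ σ.cycleFactorsFinset}) := by
  classical
  refine Equiv.ofBijective (Quotient.lift (fun x => if h : σ x = x then Sum.inl ⟨x, h⟩ else
    Sum.inr ⟨σ.cycleOf x, Equiv.Perm.cycleOf_mem_cycleFactorsFinset_iff.2 (by simp [Equiv.Perm.mem_support, h])⟩)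
    ?_) ⟨?_, ?_⟩
  · intro a b hab
    have hab' : σ.SameCycle a b := hab
    by_cases ha : σ a = a
    · have hb : b = a := sameCycle_fixed hab' ha
      subst hb; rfl
    · have hb : ¬ σ b = b := fun hb => ha (sameCycle_fixed hab'.symm hb ▸ hb)
      simp only [dif_neg ha, dif_neg hb]
      congr 1
      exact Subtype.ext (Equiv.Perm.SameCycle.cycleOf_eq hab')
  · -- injective
    intro q1 q2
    induction q1 using Quotient.inductionOn with | _ a =>
    induction q2 using Quotient.inductionOn with | _ b =>
    intro hab
    rw [Quotient.lift_mk, Quotient.lift_mk] at hab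
    by_cases ha : σ a = a <;> by_cases hb : σ b = b
    · rw [dif_pos ha, dif_pos hb] at hab
      simp only [Sum.inl.injEq, Subtype.mk.injEq] at hab
      rw [hab]
    · rw [dif_pos ha, dif_neg hb] at hab
      exact absurd hab (by simp)
    · rw [dif_neg ha, dif_pos hb] at hab
      exact absurd hab (by simp)
    · rw [dif_neg ha, dif_neg hb] at hab
      simp only [Sum.inr.injEq, Subtype.mk.injEq] at hab
      apply Quotient.sound
      have hbmem : b ∈ (σ.cycleOf a).support := by
        rw [hab, Equiv.Perm.mem_support_cycleOf_iff]
        exact ⟨Equiv.Perm.SameCycle.refl σ b, by simp [Equiv.Perm.mem_support, hb]⟩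
      exact (Equiv.Perm.mem_support_cycleOf_iff.1 hbmem).1
  · -- surjective
    rintro (⟨x, hx⟩ | ⟨c, hc⟩)
    · exact ⟨⟦x⟧, by simp [hx]⟩
    · obtain ⟨hcyc, hsupp⟩ := Equiv.Perm.mem_cycleFactorsFinset_iff.1 hc
      obtain ⟨x, hx⟩ := hcyc.nonempty_support
      have hcx := hsupp x hx
      have hxs : x ∈ σ.support := by
        rw [Equiv.Perm.mem_support] at hx ⊢
        rw [← hcx]; exact hx
      refine ⟨⟦x⟧, ?_⟩
      have hfix : ¬ σ x = x := Equiv.Perm.mem_support.1 hxs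
      simp only [Quotient.lift_mk, dif_neg hfix]
      congr 1
      exact Subtype.ext (Equiv.Perm.cycle_is_cycleOf hx hc).symm

lemma card_quot (σ : Equiv.Perm (Fin n)) :
    Nat.card (Quotient (scSetoid σ)) = (n - σ.support.card) + Multiset.card σ.cycleType := by
  classical
  rw [Nat.card_eq_fintype_card, Fintype.card_congr (cycleEquiv σ), Fintype.card_sum]
  congr 1
  · have h : σ.support.card + Fintype.card {x // σ x = x} = n := by
      rw [Fintype.card_subtype]
      have h2 : σ.support = univ.filter (fun x => ¬ σ x = x) := by
        ext x; simp [Equiv.Perm.mem_support]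
      rw [h2, add_comm, Finset.card_filter_add_card_filter_not, Finset.card_univ,
        Fintype.card_fin]
    omega
  · rw [Equiv.Perm.cycleType_def, Multiset.card_map]
    simpa using Fintype.card_coe σ.cycleFactorsFinset

variable {c : ℕ}

lemma disj_get {L : List (Finset (Fin c))} (h2 : L.Pairwise Disjoint)
    {i j : Fin L.length} (hij : i ≠ j) : Disjoint (L.get i) (L.get j) := by
  rcases lt_or_gt_of_ne (fun h => hij (Fin.ext h)) with h | h
  · exact List.pairwise_iff_get.1 h2 i j h
  · exact (List.pairwise_iff_get.1 h2 j i h).symm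

lemma exists_unique_idx {L : List (Finset (Fin c))} (h2 : L.Pairwise Disjoint)
    (h3 : ∀ x, ∃ B ∈ L, x ∈ B) (x : Fin c) : ∃! j : Fin L.length, x ∈ L.get j := by
  obtain ⟨B, hB, hxB⟩ := h3 x
  obtain ⟨j, hj⟩ := List.mem_iff_get.1 hB
  subst hj
  refine ⟨j, hxB, ?_⟩
  intro j' hj'
  by_contra hne
  exact (Finset.disjoint_left.1 (disj_get h2 hne)) hj' hxB

noncomputable def idx {L : List (Finset (Fin c))} (h2 : L.Pairwise Disjoint)
    (h3 : ∀ x, ∃ B ∈ L, x ∈ B) (x : Fin c) : Fin L.length :=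
  (exists_unique_idx h2 h3 x).exists.choose

lemma idx_mem {L : List (Finset (Fin c))} (h2 : L.Pairwise Disjoint)
    (h3 : ∀ x, ∃ B ∈ L, x ∈ B) (x : Fin c) : x ∈ L.get (idx h2 h3 x) :=
  (exists_unique_idx h2 h3 x).exists.choose_spec

lemma idx_eq {L : List (Finset (Fin c))} (h2 : L.Pairwise Disjoint)
    (h3 : ∀ x, ∃ B ∈ L, x ∈ B) {x : Fin c} {j : Fin L.length} (hx : x ∈ L.get j) :
    idx h2 h3 x = j :=
  (exists_unique_idx h2 h3 x).unique (idx_mem h2 h3 x) hx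

lemma idx_surj {L : List (Finset (Fin c))} (h1 : ∀ B ∈ L, B.Nonempty)
    (h2 : L.Pairwise Disjoint) (h3 : ∀ x, ∃ B ∈ L, x ∈ B) :
    Function.Surjective (idx h2 h3) := by
  intro j
  obtain ⟨x, hx⟩ := h1 (L.get j) (List.get_mem L j)
  exact ⟨x, idx_eq h2 h3 hx⟩

lemma len_le {L : List (Finset (Fin c))} (h1 : ∀ B ∈ L, B.Nonempty)
    (h2 : L.Pairwise Disjoint) : L.length ≤ c := by
  classical
  have hrep : ∀ j : Fin L.length, ∃ x : Fin c, x ∈ L.get j := fun j => h1 (L.get j) (List.get_mem L j)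
  choose rep hrep using hrep
  have hinj : Function.Injective rep := by
    intro i j hij
    by_contra hne
    exact (Finset.disjoint_left.1 (disj_get h2 hne)) (hrep i) (hij ▸ hrep j)
  simpa using Fintype.card_le_of_injective rep hinj

lemma get_eq_filter {L : List (Finset (Fin c))} (h2 : L.Pairwise Disjoint)
    (h3 : ∀ x, ∃ B ∈ L, x ∈ B) (j : Fin L.length) :
    L.get j = Finset.univ.filter (fun x => idx h2 h3 x = j) := by
  classical
  ext x
  simp only [Finset.mem_filter, Finset.mem_univ, true_and]
  constructor
  · exact fun hx => idx_eq h2 h3 hx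
  · rintro rfl; exact idx_mem h2 h3 x

lemma sig_ext {N : ℕ} {P : ∀ K : Fin N, (Fin c → Fin (K : ℕ)) → Prop}
    (a b : Σ K : Fin N, {f : Fin c → Fin (K : ℕ) // P K f})
    (h1 : (a.1 : ℕ) = (b.1 : ℕ)) (h2 : ∀ x, ((a.2.1 x : ℕ) = (b.2.1 x : ℕ))) :
    a = b := by
  obtain ⟨⟨K, hK⟩, f, hf⟩ := a
  obtain ⟨⟨K', hK'⟩, f', hf'⟩ := b
  simp only at h1
  subst h1
  simp only [Sigma.mk.inj_iff, heq_eq_eq, Subtype.mk.injEq]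
  exact ⟨trivial, funext fun x => Fin.ext (h2 x)⟩

noncomputable def fubEquiv (N : ℕ) (hc : c ≤ N) :
    {L : List (Finset (Fin c)) |
      (∀ B ∈ L, B.Nonempty) ∧ L.Pairwise Disjoint ∧ ∀ x, ∃ B ∈ L, x ∈ B} ≃
    Σ K : Fin (N + 1), {f : Fin c → Fin (K : ℕ) // Function.Surjective f} := by
  classical
  refine Equiv.ofBijective (fun L =>
    ⟨⟨L.1.length, by
        have := len_le L.2.1 L.2.2.1
        omega⟩,
      fun x => idx L.2.2.1 L.2.2.2 x, idx_surj L.2.1 L.2.2.1 L.2.2.2⟩) ⟨?_, ?_⟩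
  · intro L1 L2 hL
    have hlen : L1.1.length = L2.1.length := by
      simpa using congrArg (fun s => (s.1 : ℕ)) hL
    have hidx : ∀ x, ((idx L1.2.2.1 L1.2.2.2 x : Fin L1.1.length) : ℕ)
        = ((idx L2.2.2.1 L2.2.2.2 x : Fin L2.1.length) : ℕ) := by
      intro x
      have := congrArg (fun s : Σ K : Fin (N+1), {f : Fin c → Fin (K:ℕ) // Function.Surjective f} =>
        ((s.2.1 x : ℕ))) hL
      simpa using this
    apply Subtype.ext
    apply List.ext_get hlen
    intro i hi1 hi2
    rw [get_eq_filter L1.2.2.1 L1.2.2.2 ⟨i, hi1⟩, get_eq_filter L2.2.2.1 L2.2.2.2 ⟨i, hi2⟩]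
    ext x
    simp only [Finset.mem_filter, Finset.mem_univ, true_and, Fin.ext_iff]
    rw [hidx x]
  · rintro ⟨K, f, hf⟩
    set g : Fin (K : ℕ) → Finset (Fin c) := fun j => Finset.univ.filter (fun x => f x = j) with hg
    have hcond1 : ∀ B ∈ List.ofFn g, B.Nonempty := by
      intro B hB
      obtain ⟨j, rfl⟩ := (List.mem_ofFn' g B).1 hB
      obtain ⟨x, hx⟩ := hf j
      exact ⟨x, by simp [hg, hx]⟩
    have hcond2 : (List.ofFn g).Pairwise Disjoint := by
      rw [List.pairwise_ofFn]
      intro i j hij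
      rw [Finset.disjoint_left]
      intro x hxi hxj
      simp only [hg, Finset.mem_filter] at hxi hxj
      exact absurd (hxi.2 ▸ hxj.2) (by simp [Fin.ext_iff]; omega)
    have hcond3 : ∀ x, ∃ B ∈ List.ofFn g, x ∈ B := by
      intro x
      exact ⟨g (f x), (List.mem_ofFn' g _).2 ⟨f x, rfl⟩, by simp [hg]⟩
    refine ⟨⟨List.ofFn g, hcond1, hcond2, hcond3⟩, ?_⟩
    apply sig_ext
    · simp [List.length_ofFn]
    · intro x
      have hxmem : x ∈ (List.ofFn g).get (Fin.cast (List.length_ofFn (f := g)).symm (f x)) := by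
        rw [List.get_ofFn]
        simp [hg]
      have := idx_eq hcond2 hcond3 hxmem
      simp only [this]
      rfl

lemma nat_card_sigma'' {ι : Type*} [Fintype ι] (f : ι → Type*) [∀ i, Finite (f i)] :
    Nat.card (Σ i, f i) = ∑ i, Nat.card (f i) := by
  classical
  haveI : ∀ i, Fintype (f i) := fun i => Fintype.ofFinite (f i)
  simp [Nat.card_eq_fintype_card, Fintype.card_sigma]

lemma fubini_eq (N : ℕ) (hc : c ≤ N) :
    fubini c = ∑ K ∈ Finset.range (N+1), Nat.card {f : Fin c → Fin K // Function.Surjective f} := by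
  rw [fubini, ← Nat.card_coe_set_eq, Nat.card_congr (fubEquiv N hc), nat_card_sigma'']
  exact Fin.sum_univ_eq_sum_range
    (fun K => Nat.card {f : Fin c → Fin K // Function.Surjective f}) (N+1)

lemma invariant_pow {β : Type*} {σ : Equiv.Perm (Fin n)} {g : Fin n → β}
    (hg : ∀ x, g (σ x) = g x) : ∀ (i : ℕ) (x : Fin n), g ((σ ^ i) x) = g x := by
  intro i
  induction i with
  | zero => intro x; rfl
  | succ i ih =>
    intro x
    rw [pow_succ', Equiv.Perm.mul_apply, hg, ih]

lemma invariant_sameCycle {β : Type*} {σ : Equiv.Perm (Fin n)} {g : Fin n → β}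
    (hg : ∀ x, g (σ x) = g x) {x y : Fin n} (h : σ.SameCycle x y) : g x = g y := by
  obtain ⟨i, _, _, hi⟩ := Equiv.Perm.SameCycle.exists_pow_eq σ h
  rw [← hi, invariant_pow hg]

noncomputable def quotLiftEquiv (σ : Equiv.Perm (Fin n)) {β γ : Type*} (P : γ → β → Prop) :
    {g : Fin n → β // (∀ x, g (σ x) = g x) ∧ ∀ j, ∃ x, P j (g x)} ≃
    {h : Quotient (scSetoid σ) → β // ∀ j, ∃ q, P j (h q)} where
  toFun g := ⟨Quotient.lift g.1 (fun _ _ hab => invariant_sameCycle g.2.1 hab),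
    fun j => (g.2.2 j).elim fun x hx => ⟨⟦x⟧, hx⟩⟩
  invFun h := ⟨fun x => h.1 ⟦x⟧,
    ⟨fun x => congrArg h.1 (Quotient.sound (show σ.SameCycle (σ x) x from ⟨-1, by simp⟩)),
     fun j => (h.2 j).elim fun q hq => q.exists_rep.elim fun x hxq => ⟨x, show P j (h.1 ⟦x⟧) by rw [hxq]; exact hq⟩⟩⟩
  left_inv g := Subtype.ext rfl
  right_inv h := Subtype.ext (funext (Quotient.ind fun x => rfl))

noncomputable def prodSplitEquiv {Q : Type*} (m K : ℕ) :
    {h : Q → Fin m × Fin K // ∀ j, ∃ q, (h q).2 = j} ≃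
    ((Q → Fin m) × {h2 : Q → Fin K // Function.Surjective h2}) where
  toFun h := ⟨fun q => (h.1 q).1, ⟨fun q => (h.1 q).2, h.2⟩⟩
  invFun p := ⟨fun q => (p.1 q, p.2.1 q), p.2.2⟩
  left_inv h := Subtype.ext rfl
  right_inv p := rfl

noncomputable def surjCongr {Q Q' β : Type*} (e : Q ≃ Q') :
    {h : Q → β // Function.Surjective h} ≃ {h : Q' → β // Function.Surjective h} :=
  Equiv.subtypeEquiv (Equiv.arrowCongr e (Equiv.refl β))
    (fun h => by
      constructor
      · intro hs b; obtain ⟨q, hq⟩ := hs b; exact ⟨e q, by simpa using hq⟩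
      · intro hs b; obtain ⟨q', hq⟩ := hs b; exact ⟨e.symm q', by simpa using hq⟩)

lemma inner_count (σ : Equiv.Perm (Fin n)) (m : ℕ) :
    Nat.card (Σ K : Fin (n+1), {g : Fin n → Fin m × Fin (K : ℕ) //
        (∀ x, g (σ x) = g x) ∧ ∀ j, ∃ x, (g x).2 = j}) =
    m ^ (Nat.card (Quotient (scSetoid σ))) * fubini (Nat.card (Quotient (scSetoid σ))) := by
  classical
  set Q := Quotient (scSetoid σ)
  haveI : Fintype Q := Fintype.ofFinite Q
  set c := Nat.card Q with hc
  have hcn : c ≤ n := by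
    have h1 := Nat.card_le_card_of_surjective (Quotient.mk (scSetoid σ)) Quotient.exists_rep
    rw [hc]
    simpa using h1
  have key : ∀ K : Fin (n+1), Nat.card {g : Fin n → Fin m × Fin (K : ℕ) //
      (∀ x, g (σ x) = g x) ∧ ∀ j, ∃ x, (g x).2 = j} =
      m ^ c * Nat.card {f : Fin c → Fin (K : ℕ) // Function.Surjective f} := by
    intro K
    have e := (quotLiftEquiv σ (fun (j : Fin (K:ℕ)) (b : Fin m × Fin (K:ℕ)) => b.2 = j)).trans
      ((prodSplitEquiv m (K : ℕ)).trans
        (Equiv.prodCongr (Equiv.arrowCongr (Fintype.equivFinOfCardEq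
              ((Nat.card_eq_fintype_card (α := Q)).symm.trans hc.symm : Fintype.card Q = c))
            (Equiv.refl (Fin m)))
          (surjCongr (Fintype.equivFinOfCardEq
              ((Nat.card_eq_fintype_card (α := Q)).symm.trans hc.symm : Fintype.card Q = c)))))
    rw [Nat.card_congr e, Nat.card_prod, Nat.card_fun]
    simp
  rw [nat_card_sigma'']
  simp only [key]
  rw [← Finset.mul_sum]
  congr 1
  rw [fubini_eq n hcn]
  exact Fin.sum_univ_eq_sum_range (fun K => Nat.card {f : Fin c → Fin K // Function.Surjective f}) (n+1)

-- entry bound and finiteness of constrained matrices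
lemma mat_entry_le {M : Matrix (Fin m) (Fin K) ℕ} (h : (∑ i, ∑ j, M i j) = n)
    (i : Fin m) (j : Fin K) : M i j ≤ n := by
  calc M i j ≤ ∑ j, M i j := Finset.single_le_sum (fun _ _ => Nat.zero_le _) (mem_univ j)
    _ ≤ ∑ i, ∑ j, M i j :=
        Finset.single_le_sum (f := fun i => ∑ j, M i j) (fun _ _ => Nat.zero_le _) (mem_univ i)
    _ = n := h

lemma finite_mat (P : Matrix (Fin m) (Fin K) ℕ → Prop) :
    Finite {M : Matrix (Fin m) (Fin K) ℕ // (∑ i, ∑ j, M i j) = n ∧ P M} := by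
  apply Finite.of_injective (fun M => (fun i j => (⟨M.1 i j,
    Nat.lt_succ_of_le (mat_entry_le M.2.1 i j)⟩ : Fin (n+1)) : Fin m → Fin K → Fin (n+1)))
  intro M1 M2 h
  apply Subtype.ext
  funext i j
  exact congrArg Fin.val (congrFun (congrFun h i) j)

-- fiber count matrix
def cnt (g : Fin n → Fin m × Fin K) : Matrix (Fin m) (Fin K) ℕ :=
  fun i j => (Finset.univ.filter (fun x => g x = (i, j))).card

lemma sum_cnt (g : Fin n → Fin m × Fin K) : (∑ i, ∑ j, cnt g i j) = n := by
  classical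
  have h := Finset.card_eq_sum_card_fiberwise (f := g) (s := Finset.univ) (t := Finset.univ)
    (fun x _ => mem_univ _)
  rw [Finset.card_univ, Fintype.card_fin, Fintype.sum_prod_type] at h
  exact h.symm

lemma onto_iff (g : Fin n → Fin m × Fin K) :
    (∀ j, ∃ x, (g x).2 = j) ↔ ∀ j, ∃ i, 0 < cnt g i j := by
  classical
  constructor
  · intro h j
    obtain ⟨x, hx⟩ := h j
    refine ⟨(g x).1, Finset.card_pos.2 ⟨x, ?_⟩⟩
    simp only [cnt, Finset.mem_filter, Finset.mem_univ, true_and]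
    exact Prod.ext rfl hx
  · intro h j
    obtain ⟨i, hi⟩ := h j
    obtain ⟨x, hx⟩ := Finset.card_pos.1 hi
    simp only [cnt, Finset.mem_filter, Finset.mem_univ, true_and] at hx
    exact ⟨x, by rw [hx]⟩

-- existence of a function with prescribed counts
lemma exists_g0 {M : Matrix (Fin m) (Fin K) ℕ} (h : (∑ i, ∑ j, M i j) = n) :
    ∃ g : Fin n → Fin m × Fin K, cnt g = M := by
  classical
  have hcard : Fintype.card (Σ q : Fin m × Fin K, Fin (M q.1 q.2)) = Fintype.card (Fin n) := by
    rw [Fintype.card_sigma, Fintype.card_fin, ← h, Fintype.sum_prod_type]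
    simp
  obtain e := Fintype.equivOfCardEq hcard
  refine ⟨fun x => (e.symm x).1, ?_⟩
  funext i j
  have h1 : cnt (fun x => (e.symm x).1) i j
      = Fintype.card {x : Fin n // (e.symm x).1 = (i, j)} := by
    rw [Fintype.card_subtype]; rfl
  rw [h1]
  haveI : Unique {q : Fin m × Fin K // q = (i, j)} :=
    ⟨⟨⟨(i, j), rfl⟩⟩, by rintro ⟨q, rfl⟩; rfl⟩
  have e2 : {x : Fin n // (e.symm x).1 = (i, j)} ≃
      ((q : {q : Fin m × Fin K // q = (i, j)}) × Fin (M (q : Fin m × Fin K).1 (q : Fin m × Fin K).2)) :=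
    (Equiv.subtypeEquiv e.symm (fun x => Iff.rfl)).symm.symm.trans
      (Equiv.subtypeSigmaEquiv (fun q : Fin m × Fin K => Fin (M q.1 q.2)) (fun q => q = (i, j)))
  rw [Fintype.card_congr e2, Fintype.card_sigma]
  rw [Fintype.sum_unique, Fintype.card_fin]
  have hd : ((default : {q : Fin m × Fin K // q = (i,j)}) : Fin m × Fin K) = (i, j) :=
    (default : {q : Fin m × Fin K // q = (i,j)}).2
  rw [hd]

lemma cnt_comp (g : Fin n → Fin m × Fin K) (ρ : Equiv.Perm (Fin n)) :
    cnt (fun x => g (ρ x)) = cnt g := by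
  classical
  funext i j
  apply Finset.card_bij (fun a _ => ρ a)
  · intro a ha
    simp only [cnt, Finset.mem_filter, Finset.mem_univ, true_and] at ha ⊢
    exact ha
  · intro a _ b _ hab
    exact ρ.injective hab
  · intro b hb
    refine ⟨ρ.symm b, ?_, by simp⟩
    simp only [cnt, Finset.mem_filter, Finset.mem_univ, true_and] at hb ⊢
    simpa using hb

lemma exists_perm_of_cnt_eq {g g' : Fin n → Fin m × Fin K} (h : cnt g = cnt g') :
    ∃ τ : Equiv.Perm (Fin n), ∀ x, g' (τ x) = g x := by
  classical
  have hfib : ∀ p : Fin m × Fin K, Fintype.card {x // g x = p} = Fintype.card {x // g' x = p} := by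
    intro p
    rw [Fintype.card_subtype, Fintype.card_subtype]
    have h2 := congrFun (congrFun h p.1) p.2
    simpa [cnt] using h2
  let F : ∀ p, {x // g x = p} ≃ {x // g' x = p} := fun p => Fintype.equivOfCardEq (hfib p)
  let τ : Fin n ≃ Fin n := (Equiv.sigmaFiberEquiv g).symm.trans
    ((Equiv.sigmaCongrRight F).trans (Equiv.sigmaFiberEquiv g'))
  refine ⟨τ, fun x => ?_⟩
  have hτ : τ x = (F (g x) ⟨x, rfl⟩).1 := rfl
  rw [hτ]
  exact (F (g x) ⟨x, rfl⟩).2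

lemma card_pairs {M : Matrix (Fin m) (Fin K) ℕ} (hM : (∑ i, ∑ j, M i j) = n) :
    Nat.card (Σ g : {g : Fin n → Fin m × Fin K // cnt g = M},
      {σ : Equiv.Perm (Fin n) // ∀ x, g.1 (σ x) = g.1 x}) = n.factorial := by
  classical
  obtain ⟨g₀, hg₀⟩ := exists_g0 hM
  have pick : ∀ g : {g : Fin n → Fin m × Fin K // cnt g = M},
      ∃ τ : Equiv.Perm (Fin n), ∀ x, g₀ (τ x) = g.1 x :=
    fun g => exists_perm_of_cnt_eq (g.2.trans hg₀.symm)
  choose τf hτ using pick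
  set F : (Σ g : {g : Fin n → Fin m × Fin K // cnt g = M},
      {σ : Equiv.Perm (Fin n) // ∀ x, g.1 (σ x) = g.1 x}) → Equiv.Perm (Fin n) :=
    fun s => τf s.1 * s.2.1 with hF
  have hg0F : ∀ s, ∀ x, g₀ (F s x) = s.1.1 x := by
    intro s x
    rw [hF]
    simp only [Equiv.Perm.mul_apply]
    rw [hτ s.1 (s.2.1 x), s.2.2 x]
  have hbij : Function.Bijective F := by
    constructor
    · rintro ⟨⟨gs, hgs⟩, σs, hσs⟩ ⟨⟨gt, hgt⟩, σt, hσt⟩ h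
      have hfun : gs = gt := by
        funext x
        exact ((hg0F ⟨⟨gs, hgs⟩, ⟨σs, hσs⟩⟩ x).symm.trans (by rw [h])).trans
          (hg0F ⟨⟨gt, hgt⟩, ⟨σt, hσt⟩⟩ x)
      subst hfun
      have hτeq : τf ⟨gs, hgs⟩ = τf ⟨gs, hgt⟩ := rfl
      simp only [hF] at h
      rw [hτeq] at h
      have hσ : σs = σt := mul_left_cancel h
      subst hσ
      rfl
    · intro ρ
      have hcnt : cnt (fun x => g₀ (ρ x)) = M := (cnt_comp g₀ ρ).trans hg₀
      set g : {g : Fin n → Fin m × Fin K // cnt g = M} := ⟨fun x => g₀ (ρ x), hcnt⟩ with hgdef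
      have hgg : ∀ y, g₀ (ρ y) = g.1 y := fun y => rfl
      refine ⟨⟨g, (τf g)⁻¹ * ρ, ?_⟩, ?_⟩
      · intro x
        have key : g₀ ((τf g) ((τf g)⁻¹ (ρ x))) = g.1 x := by
          rw [← Equiv.Perm.mul_apply, mul_inv_cancel, Equiv.Perm.one_apply]
        exact (hτ g ((τf g)⁻¹ (ρ x))).symm.trans key
      · show τf g * ((τf g)⁻¹ * ρ) = ρ
        exact mul_inv_cancel_left _ _
  rw [Nat.card_congr (Equiv.ofBijective F hbij), Nat.card_eq_fintype_card, Fintype.card_perm,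
    Fintype.card_fin]

lemma nat_card_sigma_const {ι : Type*} [Finite ι] (f : ι → Type*) [∀ i, Finite (f i)]
    (a : ℕ) (h : ∀ i, Nat.card (f i) = a) : Nat.card (Σ i, f i) = Nat.card ι * a := by
  classical
  haveI : Fintype ι := Fintype.ofFinite ι
  rw [nat_card_sigma'', Nat.card_eq_fintype_card]
  simp [h, Finset.sum_const, Finset.card_univ, mul_comm]

noncomputable def regroupEquiv (m K n : ℕ) :
    (Σ g : {g : Fin n → Fin m × Fin K // ∀ j, ∃ x, (g x).2 = j},
      {σ : Equiv.Perm (Fin n) // ∀ x, g.1 (σ x) = g.1 x}) ≃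
    (Σ M : {M : Matrix (Fin m) (Fin K) ℕ // (∑ i, ∑ j, M i j) = n ∧ ∀ j, ∃ i, 0 < M i j},
      Σ g : {g : Fin n → Fin m × Fin K // cnt g = M.1},
        {σ : Equiv.Perm (Fin n) // ∀ x, g.1 (σ x) = g.1 x}) where
  toFun s := ⟨⟨cnt s.1.1, sum_cnt s.1.1, (onto_iff s.1.1).1 s.1.2⟩, ⟨s.1.1, rfl⟩, s.2⟩
  invFun t := ⟨⟨t.2.1.1, (onto_iff t.2.1.1).2 (by rw [t.2.1.2]; exact t.1.2.2)⟩, t.2.2⟩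
  left_inv s := rfl
  right_inv t := by
    obtain ⟨⟨Mv, hMv⟩, ⟨g, hg⟩, σ⟩ := t
    revert σ
    obtain rfl : Mv = cnt g := hg.symm
    intro σ
    rfl

lemma perK (m K n : ℕ) :
    Nat.card (Σ g : {g : Fin n → Fin m × Fin K // ∀ j, ∃ x, (g x).2 = j},
      {σ : Equiv.Perm (Fin n) // ∀ x, g.1 (σ x) = g.1 x}) =
    Nat.card {M : Matrix (Fin m) (Fin K) ℕ //
      (∑ i, ∑ j, M i j) = n ∧ ∀ j, ∃ i, 0 < M i j} * n.factorial := by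
  classical
  haveI := finite_mat (n := n) (m := m) (K := K) (fun M => ∀ j, ∃ i, 0 < M i j)
  rw [Nat.card_congr (regroupEquiv m K n)]
  exact nat_card_sigma_const _ _ (fun M => card_pairs M.2.1)


noncomputable def swapEquiv (m n : ℕ) :
    (Σ σ : Equiv.Perm (Fin n), Σ K : Fin (n+1), {g : Fin n → Fin m × Fin (K : ℕ) //
        (∀ x, g (σ x) = g x) ∧ ∀ j, ∃ x, (g x).2 = j}) ≃
    (Σ K : Fin (n+1), Σ g : {g : Fin n → Fin m × Fin (K : ℕ) // ∀ j, ∃ x, (g x).2 = j},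
        {σ : Equiv.Perm (Fin n) // ∀ x, g.1 (σ x) = g.1 x}) where
  toFun s := ⟨s.2.1, ⟨s.2.2.1, s.2.2.2.2⟩, ⟨s.1, s.2.2.2.1⟩⟩
  invFun t := ⟨t.2.2.1, t.1, t.2.1.1, t.2.2.2, t.2.1.2⟩
  left_inv s := rfl
  right_inv t := rfl

lemma genmat_k_le {m n k : ℕ} {M : Matrix (Fin m) (Fin k) ℕ}
    (h1 : (∑ i, ∑ j, M i j) = n) (h2 : ∀ j, ∃ i, 0 < M i j) : k ≤ n := by
  have hcol : ∀ j : Fin k, 1 ≤ ∑ i, M i j := by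
    intro j
    obtain ⟨i, hi⟩ := h2 j
    calc 1 ≤ M i j := hi
      _ ≤ ∑ i, M i j := Finset.single_le_sum (f := fun i' => M i' j) (fun _ _ => Nat.zero_le _) (Finset.mem_univ i)
  calc k = ∑ _j : Fin k, 1 := by simp
    _ ≤ ∑ j, ∑ i, M i j := Finset.sum_le_sum (fun j _ => hcol j)
    _ = ∑ i, ∑ j, M i j := Finset.sum_comm
    _ = n := h1

noncomputable def genmatEquiv (m n : ℕ) :
    {p : Σ k : ℕ, Matrix (Fin m) (Fin k) ℕ |
      (∑ i, ∑ j, p.2 i j) = n ∧ ∀ j, ∃ i, 0 < p.2 i j} ≃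
    (Σ K : Fin (n+1), {M : Matrix (Fin m) (Fin (K : ℕ)) ℕ //
      (∑ i, ∑ j, M i j) = n ∧ ∀ j, ∃ i, 0 < M i j}) where
  toFun p := ⟨⟨p.1.1, Nat.lt_succ_of_le (genmat_k_le p.2.1 p.2.2)⟩, p.1.2, p.2⟩
  invFun t := ⟨⟨(t.1 : ℕ), t.2.1⟩, t.2.2⟩
  left_inv p := rfl
  right_inv t := rfl

lemma stirling1_eq_filter (n k : ℕ) [DecidablePred fun σ : Equiv.Perm (Fin n) =>
      Nat.card (Quotient (scSetoid σ)) = k] :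
    stirling1 n k = (Finset.univ.filter
      (fun σ : Equiv.Perm (Fin n) => Nat.card (Quotient (scSetoid σ)) = k)).card := by
  classical
  calc stirling1 n k
      = Nat.card {σ : Equiv.Perm (Fin n) //
          (n - σ.support.card) + Multiset.card σ.cycleType = k} := by
        rw [stirling1, ← Nat.card_coe_set_eq]
        rfl
    _ = Nat.card {σ : Equiv.Perm (Fin n) // Nat.card (Quotient (scSetoid σ)) = k} :=
        Nat.card_congr (Equiv.subtypeEquivRight (fun σ =>
          Iff.intro (fun h => (card_quot σ).trans h) (fun h => (card_quot σ).symm.trans h)))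
    _ = Fintype.card {σ : Equiv.Perm (Fin n) // Nat.card (Quotient (scSetoid σ)) = k} :=
        Nat.card_eq_fintype_card
    _ = (Finset.univ.filter
          (fun σ : Equiv.Perm (Fin n) => Nat.card (Quotient (scSetoid σ)) = k)).card := by
        rw [Fintype.card_subtype]

theorem genmat_card_stirling (m n : ℕ) :
    Nat.factorial n * GenmatCard m n =
      ∑ k ∈ Finset.range (n + 1), stirling1 n k * m ^ k * fubini k := by
  classical
  -- the central counting object
  set ST := (Σ σ : Equiv.Perm (Fin n), Σ K : Fin (n+1), {g : Fin n → Fin m × Fin (K : ℕ) //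
      (∀ x, g (σ x) = g x) ∧ ∀ j, ∃ x, (g x).2 = j}) with hST
  -- LHS
  have hL : Nat.card ST = Nat.factorial n * GenmatCard m n := by
    rw [hST, Nat.card_congr (swapEquiv m n), nat_card_sigma'']
    have hperK : ∀ K : Fin (n+1),
        Nat.card (Σ g : {g : Fin n → Fin m × Fin (K : ℕ) // ∀ j, ∃ x, (g x).2 = j},
          {σ : Equiv.Perm (Fin n) // ∀ x, g.1 (σ x) = g.1 x}) =
        Nat.card {M : Matrix (Fin m) (Fin (K : ℕ)) ℕ //
          (∑ i, ∑ j, M i j) = n ∧ ∀ j, ∃ i, 0 < M i j} * Nat.factorial n :=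
      fun K => perK m (K : ℕ) n
    rw [Finset.sum_congr rfl (fun K _ => hperK K), ← Finset.sum_mul]
    haveI : ∀ K : Fin (n+1), Finite {M : Matrix (Fin m) (Fin (K : ℕ)) ℕ //
        (∑ i, ∑ j, M i j) = n ∧ ∀ j, ∃ i, 0 < M i j} :=
      fun K => finite_mat (fun M => ∀ j, ∃ i, 0 < M i j)
    rw [GenmatCard, ← Nat.card_coe_set_eq, Nat.card_congr (genmatEquiv m n),
      nat_card_sigma'']
    ring
  -- RHS
  have hR : Nat.card ST = ∑ k ∈ Finset.range (n + 1),
      stirling1 n k * m ^ k * fubini k := by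
    haveI : ∀ σ : Equiv.Perm (Fin n), Finite (Σ K : Fin (n+1),
        {g : Fin n → Fin m × Fin (K : ℕ) //
          (∀ x, g (σ x) = g x) ∧ ∀ j, ∃ x, (g x).2 = j}) := fun σ => inferInstance
    rw [hST, nat_card_sigma'']
    have hinner : ∀ σ : Equiv.Perm (Fin n),
        Nat.card (Σ K : Fin (n+1), {g : Fin n → Fin m × Fin (K : ℕ) //
          (∀ x, g (σ x) = g x) ∧ ∀ j, ∃ x, (g x).2 = j}) =
        m ^ (Nat.card (Quotient (scSetoid σ))) * fubini (Nat.card (Quotient (scSetoid σ))) :=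
      fun σ => inner_count σ m
    rw [Finset.sum_congr rfl (fun σ _ => hinner σ)]
    have hmaps : ∀ σ : Equiv.Perm (Fin n), σ ∈ Finset.univ →
        Nat.card (Quotient (scSetoid σ)) ∈ Finset.range (n+1) := by
      intro σ _
      rw [Finset.mem_range, Nat.lt_succ_iff]
      have h1 := Nat.card_le_card_of_surjective (Quotient.mk (scSetoid σ)) Quotient.exists_rep
      simpa using h1
    rw [← Finset.sum_fiberwise_of_maps_to hmaps
      (fun σ => m ^ (Nat.card (Quotient (scSetoid σ))) * fubini (Nat.card (Quotient (scSetoid σ))))]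
    apply Finset.sum_congr rfl
    intro k _
    have hconst : ∀ σ ∈ Finset.univ.filter
        (fun σ : Equiv.Perm (Fin n) => Nat.card (Quotient (scSetoid σ)) = k),
        m ^ (Nat.card (Quotient (scSetoid σ))) * fubini (Nat.card (Quotient (scSetoid σ)))
          = m ^ k * fubini k := by
      intro σ hσ
      rw [Finset.mem_filter] at hσ
      rw [hσ.2]
    rw [Finset.sum_congr rfl hconst, Finset.sum_const, smul_eq_mul,
      ← stirling1_eq_filter n k, mul_assoc]
  rw [← hL, hR]
end

section
/- For all n ≥ 0: n! · |Mat[n]| = Σ_{k=0}^{n} fub(k)^2 · c(n,k), where Mat[n] is the set of Burge matrices of size n, c(n,k) is the unsigned Stirling number of the first kind, and fub is the Fubini number. -/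
open Finset

section M0
variable {α : Type*} [Fintype α]

/-- the number of distinct values of f -/
noncomputable def rOf (f : α → ℕ) : ℕ := (Finset.univ.image f).card

def RangeInit (f : α → ℕ) : Prop := ∀ m, (∃ x, f x = m) ↔ m < rOf f

lemma rangeInit_of_exists {f : α → ℕ} (r : ℕ) (h : ∀ m, (∃ x, f x = m) ↔ m < r) :
    RangeInit f := by
  have himg : Finset.univ.image f = Finset.range r := by
    ext m
    simp only [Finset.mem_image, Finset.mem_univ, true_and, Finset.mem_range]
    exact h m
  have : rOf f = r := by rw [rOf]; rw [himg, Finset.card_range]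
  intro m; rw [this]; exact h m

lemma rOf_comp_surj {β : Type*} [Fintype β] (p : β → α) (hp : Function.Surjective p)
    (g : α → ℕ) : rOf (g ∘ p) = rOf g := by
  unfold rOf
  congr 1
  ext m
  simp only [Finset.mem_image, Finset.mem_univ, true_and, Function.comp_apply]
  exact ⟨fun ⟨b, hb⟩ => ⟨p b, hb⟩, fun ⟨a, ha⟩ => by obtain ⟨b, rfl⟩ := hp a; exact ⟨b, ha⟩⟩

lemma rangeInit_comp_surj {β : Type*} [Fintype β] (p : β → α) (hp : Function.Surjective p)
    (g : α → ℕ) : RangeInit (g ∘ p) ↔ RangeInit g := by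
  unfold RangeInit
  rw [rOf_comp_surj p hp]
  apply forall_congr'
  intro m
  constructor
  · intro h
    constructor
    · rintro ⟨a, ha⟩; obtain ⟨b, rfl⟩ := hp a; exact h.mp ⟨b, ha⟩
    · intro hm; obtain ⟨b, hb⟩ := h.mpr hm; exact ⟨p b, hb⟩
  · intro h
    constructor
    · rintro ⟨b, hb⟩; exact h.mp ⟨p b, hb⟩
    · intro hm; obtain ⟨a, ha⟩ := h.mpr hm; obtain ⟨b, rfl⟩ := hp a; exact ⟨b, ha⟩

end M0

section M1
variable {n : ℕ}

open Classical in
/-- index function of a list of disjoint blocks -/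
noncomputable def idxFun (L : List (Finset (Fin n))) : Fin n → ℕ :=
  fun x => L.findIdx (fun B => decide (x ∈ B))

lemma idxFun_spec (L : List (Finset (Fin n)))
    (hcov : ∀ x, ∃ B ∈ L, x ∈ B) (x : Fin n) :
    idxFun L x < L.length ∧ x ∈ L[idxFun L x]'(by
      apply List.findIdx_lt_length_of_exists
      obtain ⟨B, hB, hxB⟩ := hcov x
      exact ⟨B, hB, by simpa using hxB⟩) := by
  have hlt : idxFun L x < L.length := by
    apply List.findIdx_lt_length_of_exists
    obtain ⟨B, hB, hxB⟩ := hcov x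
    exact ⟨B, hB, by simpa using hxB⟩
  refine ⟨hlt, ?_⟩
  have := @List.findIdx_getElem _ (fun B => decide (x ∈ B)) L hlt
  convert of_decide_eq_true this using 2
  unfold idxFun
  congr

lemma mem_block_iff (L : List (Finset (Fin n)))
    (hdisj : L.Pairwise Disjoint) (hcov : ∀ x, ∃ B ∈ L, x ∈ B)
    (x : Fin n) (i : ℕ) (hi : i < L.length) :
    x ∈ L[i] ↔ idxFun L x = i := by
  obtain ⟨hlt, hxmem⟩ := idxFun_spec L hcov x
  constructor
  · intro hxi
    by_contra hne
    have hd : Disjoint L[idxFun L x] L[i] ∨ Disjoint L[i] L[idxFun L x] := by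
      rcases lt_or_gt_of_ne hne with h | h
      · exact Or.inl (List.pairwise_iff_getElem.mp hdisj _ _ hlt hi h)
      · exact Or.inr (List.pairwise_iff_getElem.mp hdisj _ _ hi hlt h)
    rcases hd with h | h
    · exact (Finset.disjoint_left.mp h) hxmem hxi
    · exact (Finset.disjoint_left.mp h) hxi hxmem
  · rintro rfl; exact hxmem

lemma rangeInit_idxFun (L : List (Finset (Fin n)))
    (hne : ∀ B ∈ L, B.Nonempty) (hdisj : L.Pairwise Disjoint) (hcov : ∀ x, ∃ B ∈ L, x ∈ B) :
    ∀ m, (∃ x, idxFun L x = m) ↔ m < L.length := by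
  intro m
  constructor
  · rintro ⟨x, rfl⟩; exact (idxFun_spec L hcov x).1
  · intro hm
    obtain ⟨x, hx⟩ := hne L[m] (List.getElem_mem hm)
    exact ⟨x, (mem_block_iff L hdisj hcov x m hm).mp hx⟩

open Classical in
noncomputable def listOf (f : Fin n → ℕ) : List (Finset (Fin n)) :=
  (List.range (rOf f)).map (fun i => Finset.univ.filter (fun x => f x = i))

open Classical in
lemma listOf_getElem (f : Fin n → ℕ) (i : ℕ) (hi : i < (listOf f).length) :
    (listOf f)[i] = Finset.univ.filter (fun x => f x = i) := by
  have hi' : i < rOf f := by simpa [listOf] using hi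
  simp [listOf]

lemma listOf_length (f : Fin n → ℕ) : (listOf f).length = rOf f := by simp [listOf]

open Classical in
lemma listOf_mem_set (f : Fin n → ℕ) (hf : RangeInit f) :
    (∀ B ∈ listOf f, B.Nonempty) ∧ (listOf f).Pairwise Disjoint ∧
      ∀ x, ∃ B ∈ listOf f, x ∈ B := by
  refine ⟨?_, ?_, ?_⟩
  · intro B hB
    obtain ⟨i, hi, rfl⟩ := List.mem_map.mp hB
    obtain ⟨x, hx⟩ := (hf i).mpr (by simpa using List.mem_range.mp hi)
    exact ⟨x, by simp [hx]⟩
  · rw [List.pairwise_iff_getElem]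
    intro i j hi hj hij
    rw [listOf_getElem f i hi, listOf_getElem f j hj]
    rw [Finset.disjoint_left]
    intro a ha haj
    simp only [Finset.mem_filter] at ha haj
    omega
  · intro x
    have hx : f x < rOf f := (hf (f x)).mp ⟨x, rfl⟩
    have hx' : f x < (listOf f).length := by rwa [listOf_length]
    exact ⟨(listOf f)[f x], List.getElem_mem hx', by rw [listOf_getElem]; simp⟩

open Classical in
lemma idxFun_listOf (f : Fin n → ℕ) (hf : RangeInit f) : idxFun (listOf f) = f := by
  obtain ⟨hne, hdisj, hcov⟩ := listOf_mem_set f hf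
  funext x
  have hx : f x < (listOf f).length := by rw [listOf_length]; exact (hf (f x)).mp ⟨x, rfl⟩
  have := (mem_block_iff (listOf f) hdisj hcov x (f x) hx).mp
    (by rw [listOf_getElem]; simp)
  exact this

open Classical in
lemma listOf_idxFun (L : List (Finset (Fin n)))
    (hne : ∀ B ∈ L, B.Nonempty) (hdisj : L.Pairwise Disjoint) (hcov : ∀ x, ∃ B ∈ L, x ∈ B) :
    listOf (idxFun L) = L := by
  have hri : RangeInit (idxFun L) := rangeInit_of_exists L.length (rangeInit_idxFun L hne hdisj hcov)
  have hlen : rOf (idxFun L) = L.length := by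
    have h1 := rangeInit_idxFun L hne hdisj hcov
    have h2 := hri
    -- both say range = Iio; conclude equality
    by_contra hne'
    rcases Nat.lt_or_ge (rOf (idxFun L)) L.length with h | h
    · obtain ⟨x, hx⟩ := (h1 (rOf (idxFun L))).mpr h
      have := (h2 (rOf (idxFun L))).mp ⟨x, hx⟩; omega
    · have hlt : rOf (idxFun L) ≠ L.length := hne'
      have h3 : L.length < rOf (idxFun L) := lt_of_le_of_ne h (Ne.symm hlt)
      obtain ⟨x, hx⟩ := (h2 L.length).mpr h3
      have := (h1 L.length).mp ⟨x, hx⟩; omega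
  apply List.ext_getElem
  · rw [listOf_length, hlen]
  · intro i h1 h2
    rw [listOf_getElem]
    ext x
    simp only [Finset.mem_filter, Finset.mem_univ, true_and]
    exact ((mem_block_iff L hdisj hcov x i h2)).symm

open Classical in
lemma fubini_eq_card (k : ℕ) :
    fubini k = Nat.card {f : Fin k → ℕ // RangeInit f} := by
  rw [fubini, ← Nat.card_coe_set_eq]
  apply Nat.card_congr
  refine ⟨fun L => ⟨idxFun L.1, ?_⟩, fun f => ⟨listOf f.1, ?_⟩, ?_, ?_⟩
  · obtain ⟨h1, h2, h3⟩ := L.2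
    exact rangeInit_of_exists _ (rangeInit_idxFun L.1 h1 h2 h3)
  · exact listOf_mem_set f.1 f.2
  · rintro ⟨L, h1, h2, h3⟩
    simp only [Subtype.mk.injEq]
    exact listOf_idxFun L h1 h2 h3
  · rintro ⟨f, hf⟩
    simp only [Subtype.mk.injEq]
    exact idxFun_listOf f hf

end M1
section M2

open Equiv Finset

lemma card_rangeInit_eq_fubini (α : Type*) [Fintype α] :
    Nat.card {g : α → ℕ // RangeInit g} = fubini (Nat.card α) := by
  rw [fubini_eq_card]
  apply Nat.card_congr
  have e : α ≃ Fin (Nat.card α) := Finite.equivFin α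
  refine ⟨fun g => ⟨g.1 ∘ e.symm, ?_⟩, fun f => ⟨f.1 ∘ e, ?_⟩, ?_, ?_⟩
  · exact (rangeInit_comp_surj e.symm e.symm.surjective g.1).mpr g.2
  · exact (rangeInit_comp_surj e e.surjective f.1).mpr f.2
  · rintro ⟨g, hg⟩; ext x; simp
  · rintro ⟨f, hf⟩; ext x; simp

variable {n : ℕ}

def cycSetoid (σ : Equiv.Perm (Fin n)) : Setoid (Fin n) :=
  ⟨σ.SameCycle, ⟨fun _ => Equiv.Perm.SameCycle.refl σ _, fun h => h.symm, fun h h' => h.trans h'⟩⟩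

open Classical in
lemma fixed_of_sameCycle {σ : Equiv.Perm (Fin n)} {x y : Fin n} (hx : σ x = x)
    (h : σ.SameCycle x y) : y = x := by
  obtain ⟨i, hi⟩ := h
  rw [← hi]
  have : Function.IsFixedPt σ x := hx
  exact (this.perm_zpow i)

open Classical in
noncomputable def orbitSum (σ : Equiv.Perm (Fin n)) :
    Quotient (cycSetoid σ) → ({x : Fin n // σ x = x} ⊕ {c : Equiv.Perm (Fin n) // c ∈ σ.cycleFactorsFinset}) := by
  refine Quotient.lift (fun x => if h : σ x = x then Sum.inl ⟨x, h⟩ else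
    Sum.inr ⟨σ.cycleOf x, Equiv.Perm.cycleOf_mem_cycleFactorsFinset_iff.mpr
      (Equiv.Perm.mem_support.mpr h)⟩) ?_
  intro x y hxy
  by_cases hx : σ x = x
  · have : y = x := fixed_of_sameCycle hx hxy
    subst this; rfl
  · have hy : ¬ σ y = y := by
      intro hy
      have : x = y := fixed_of_sameCycle hy hxy.symm
      exact hx (this ▸ hy)
    have : σ.cycleOf x = σ.cycleOf y := Equiv.Perm.SameCycle.cycleOf_eq hxy
    simp only [dif_neg hx, dif_neg hy, this]

open Classical in
lemma orbitSum_bijective (σ : Equiv.Perm (Fin n)) : Function.Bijective (orbitSum σ) := by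
  constructor
  · intro a b
    induction a using Quotient.ind
    induction b using Quotient.ind
    rename_i x y
    intro h
    apply Quotient.sound
    unfold orbitSum at h
    simp only [Quotient.lift_mk] at h
    by_cases hx : σ x = x <;> by_cases hy : σ y = y
    · rw [dif_pos hx, dif_pos hy] at h
      simp only [Sum.inl.injEq, Subtype.mk.injEq] at h
      exact h ▸ Equiv.Perm.SameCycle.refl σ _
    · rw [dif_pos hx, dif_neg hy] at h; exact absurd h (by simp)
    · rw [dif_neg hx, dif_pos hy] at h; exact absurd h (by simp)
    · rw [dif_neg hx, dif_neg hy] at h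
      simp only [Sum.inr.injEq, Subtype.mk.injEq] at h
      have hysupp : y ∈ (σ.cycleOf x).support := by
        rw [h]
        exact Equiv.Perm.mem_support_cycleOf_iff.mpr
          ⟨Equiv.Perm.SameCycle.refl σ _, Equiv.Perm.mem_support.mpr hy⟩
      exact (Equiv.Perm.mem_support_cycleOf_iff.mp hysupp).1
  · rintro (⟨x, hx⟩ | ⟨c, hc⟩)
    · exact ⟨⟦x⟧, by unfold orbitSum; simp [hx]⟩
    · have hc' := (Equiv.Perm.mem_cycleFactorsFinset_iff.mp hc)
      obtain ⟨x, hx1, -⟩ := hc'.1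
      have hx : x ∈ c.support := Equiv.Perm.mem_support.mpr hx1
      have hcx : c = σ.cycleOf x := Equiv.Perm.cycle_is_cycleOf hx hc
      have hσx : σ x ≠ x := by
        have := hc'.2 x hx
        rw [← this]
        exact Equiv.Perm.mem_support.mp hx
      refine ⟨⟦x⟧, ?_⟩
      unfold orbitSum
      simp only [Quotient.lift_mk, dif_neg hσx]
      simp [hcx]

open Classical in
lemma card_quotient_cycSetoid (σ : Equiv.Perm (Fin n)) :
    Nat.card (Quotient (cycSetoid σ)) = (n - σ.support.card) + Multiset.card σ.cycleType := by
  have e := Equiv.ofBijective _ (orbitSum_bijective σ)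
  rw [Nat.card_congr e]
  rw [Nat.card_eq_fintype_card, Fintype.card_sum]
  congr 1
  · rw [Fintype.card_subtype]
    have h := Finset.card_filter_add_card_filter_not
      (s := (Finset.univ : Finset (Fin n))) (p := fun x => σ x = x)
    have hsupp : σ.support = Finset.univ.filter (fun x => ¬ σ x = x) := by
      ext x; simp [Equiv.Perm.mem_support]
    rw [← hsupp] at h
    have hn : (Finset.univ : Finset (Fin n)).card = n := by simp
    omega
  · rw [Fintype.card_coe]
    rw [Equiv.Perm.cycleType_def, Multiset.card_map]
    rfl

open Classical in
lemma card_inv_fun (σ : Equiv.Perm (Fin n)) :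
    Nat.card {f : Fin n → ℕ // RangeInit f ∧ ∀ x, f (σ x) = f x}
      = fubini ((n - σ.support.card) + Multiset.card σ.cycleType) := by
  rw [← card_quotient_cycSetoid σ, ← card_rangeInit_eq_fubini]
  apply Nat.card_congr
  have key : ∀ (f : Fin n → ℕ), (∀ x, f (σ x) = f x) →
      ∀ x y, σ.SameCycle x y → f x = f y := by
    intro f hf x y ⟨i, hi⟩
    have haux : ∀ (j : ℕ) (z : Fin n), f ((σ ^ j) z) = f z := by
      intro j
      induction j with
      | zero => simp
      | succ m ih =>
          intro z
          rw [pow_succ]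
          simp only [Equiv.Perm.coe_mul, Function.comp_apply]
          rw [ih (σ z), hf z]
    have hall : ∀ (i : ℤ) (z : Fin n), f ((σ ^ i) z) = f z := by
      intro i z
      rcases i with j | j
      · exact haux j z
      · have : (σ ^ (Int.negSucc j)) z = (σ ^ (j+1 : ℕ))⁻¹ z := by
          rw [zpow_negSucc]
        rw [this]
        have h2 := haux (j+1) ((σ ^ (j+1 : ℕ))⁻¹ z)
        simpa using h2.symm
    rw [← hi, hall]
  refine ⟨fun f => ⟨Quotient.lift f.1 (fun x y h => key f.1 f.2.2 x y h), by
      have := (rangeInit_comp_surj (Quotient.mk (cycSetoid σ))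
        (Quotient.mk_surjective) (Quotient.lift f.1 (fun x y h => key f.1 f.2.2 x y h))).mp
      apply this
      exact f.2.1⟩,
    fun g => (⟨g.1 ∘ Quotient.mk _,
      (rangeInit_comp_surj (Quotient.mk (cycSetoid σ)) Quotient.mk_surjective g.1).mpr g.2, by
      intro x
      simp only [Function.comp_apply]
      exact congrArg g.1 (Quotient.sound (show σ.SameCycle (σ x) x from ⟨-1, by simp⟩))⟩ :
        {f : Fin n → ℕ // RangeInit f ∧ ∀ x, f (σ x) = f x}), ?_, ?_⟩
  · rintro ⟨f, hri, hinv⟩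
    apply Subtype.ext
    rfl
  · rintro ⟨g, hg⟩
    apply Subtype.ext
    funext q
    induction q using Quotient.ind
    rfl

end M2
section M3

open Finset Equiv

variable {n : ℕ}

/-- number of cycles (incl. fixed points) of σ -/
def cyc (σ : Equiv.Perm (Fin n)) : ℕ :=
  (n - σ.support.card) + Multiset.card σ.cycleType

lemma cyc_le (σ : Equiv.Perm (Fin n)) : cyc σ ≤ n := by
  have h1 : Multiset.card σ.cycleType ≤ σ.cycleType.sum := by
    have := Multiset.card_nsmul_le_sum (s := σ.cycleType) (a := 1)
      (fun x hx => by have := Equiv.Perm.two_le_of_mem_cycleType hx; omega)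
    simpa using this
  have h2 : σ.cycleType.sum = σ.support.card := Equiv.Perm.sum_cycleType σ
  have h3 : σ.support.card ≤ n := by
    have := Finset.card_le_univ σ.support
    simpa using this
  unfold cyc; omega

open Classical in
lemma stirling1_eq_card (k : ℕ) :
    stirling1 n k = (Finset.univ.filter (fun σ : Equiv.Perm (Fin n) => cyc σ = k)).card := by
  rw [stirling1, ← Nat.card_coe_set_eq]
  rw [Nat.card_eq_fintype_card]
  rw [Fintype.card_subtype]
  congr 1

open Classical in
/-- the "triples" finset -/
noncomputable def BSet (n : ℕ) :
    Finset (Equiv.Perm (Fin n) × ((Fin n → Fin (n+1)) × (Fin n → Fin (n+1)))) :=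
  Finset.univ.filter (fun t =>
    RangeInit (fun x => (t.2.1 x : ℕ)) ∧ RangeInit (fun x => (t.2.2 x : ℕ)) ∧
    (∀ x, (t.2.1 (t.1 x) : ℕ) = t.2.1 x) ∧ (∀ x, (t.2.2 (t.1 x) : ℕ) = t.2.2 x))

open Classical in
noncomputable def ASet (σ : Equiv.Perm (Fin n)) : Finset (Fin n → Fin (n+1)) :=
  Finset.univ.filter (fun f =>
    RangeInit (fun x => (f x : ℕ)) ∧ ∀ x, (f (σ x) : ℕ) = f x)

lemma rOf_le (F : Fin n → ℕ) : rOf F ≤ n := by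
  have h := Finset.card_image_le (s := (Finset.univ : Finset (Fin n))) (f := F)
  simpa [rOf] using h

open Classical in
lemma ASet_card (σ : Equiv.Perm (Fin n)) : (ASet σ).card = fubini (cyc σ) := by
  unfold cyc
  rw [← card_inv_fun σ]
  rw [← Fintype.card_coe, ← Nat.card_eq_fintype_card]
  apply Nat.card_congr
  refine ⟨fun f => ⟨fun x => (f.1 x : ℕ), by
      have hm := f.2
      simp only [ASet, Finset.mem_filter, Finset.mem_univ, true_and] at hm
      exact ⟨hm.1, hm.2⟩⟩,
    fun F => ⟨fun x => (⟨F.1 x, by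
      have hlt : F.1 x < rOf F.1 := (F.2.1 (F.1 x)).mp ⟨x, rfl⟩
      have := rOf_le F.1
      omega⟩ : Fin (n+1)), by
      simp only [ASet, Finset.mem_filter, Finset.mem_univ, true_and]
      exact ⟨F.2.1, F.2.2⟩⟩, ?_, ?_⟩
  · rintro ⟨f, hf⟩
    apply Subtype.ext
    funext x
    rfl
  · rintro ⟨F, hF⟩
    apply Subtype.ext
    rfl

open Classical in
lemma BSet_fiber_card (σ : Equiv.Perm (Fin n)) :
    ((BSet n).filter (fun t => t.1 = σ)).card = fubini (cyc σ) ^ 2 := by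
  rw [sq, ← ASet_card σ, ← Finset.card_product]
  apply Finset.card_nbij (fun t => (t.2.1, t.2.2))
  · intro t ht
    simp only [Finset.mem_coe, BSet, Finset.mem_filter, Finset.mem_univ, true_and] at ht
    obtain ⟨⟨h1, h2, h3, h4⟩, hfst⟩ := ht
    subst hfst
    simp only [Finset.mem_coe, Finset.mem_product, ASet, Finset.mem_filter, Finset.mem_univ, true_and]
    exact ⟨⟨h1, h3⟩, ⟨h2, h4⟩⟩
  · intro t ht t' ht' h
    simp only [Finset.mem_coe, Finset.mem_filter] at ht ht'
    simp only [Prod.mk.injEq] at h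
    apply Prod.ext
    · rw [ht.2, ht'.2]
    · exact Prod.ext h.1 h.2
  · rintro ⟨f, g⟩ hfg
    simp only [Finset.coe_product, Set.mem_prod, Finset.mem_coe] at hfg
    simp only [ASet, Finset.mem_filter, Finset.mem_univ, true_and] at hfg
    refine ⟨(σ, f, g), ?_, rfl⟩
    rw [Finset.mem_coe, Finset.mem_filter]
    refine ⟨?_, rfl⟩
    simp only [BSet, Finset.mem_filter, Finset.mem_univ, true_and]
    exact ⟨hfg.1.1, hfg.2.1, hfg.1.2, hfg.2.2⟩

open Classical in
lemma BSet_card_rhs :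
    (BSet n).card = ∑ k ∈ Finset.range (n + 1), fubini k ^ 2 * stirling1 n k := by
  rw [Finset.card_eq_sum_card_fiberwise
    (f := fun t => t.1) (t := Finset.univ) (fun x _ => Finset.mem_univ _)]
  have hstep : ∀ σ : Equiv.Perm (Fin n),
      ((Finset.univ.filter (fun t => t.1 = σ)) ∩ BSet n).card = fubini (cyc σ) ^ 2 := by
    intro σ
    rw [← BSet_fiber_card σ]
    congr 1
    ext t
    simp [Finset.mem_filter, Finset.mem_inter, and_comm]
  calc ∑ σ : Equiv.Perm (Fin n), ((BSet n).filter (fun t => t.1 = σ)).card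
      = ∑ σ : Equiv.Perm (Fin n), fubini (cyc σ) ^ 2 := by
        apply Finset.sum_congr rfl
        intro σ _
        exact BSet_fiber_card σ
    _ = ∑ k ∈ Finset.range (n + 1),
          ∑ σ ∈ Finset.univ.filter (fun σ : Equiv.Perm (Fin n) => cyc σ = k),
            fubini (cyc σ) ^ 2 := by
        rw [Finset.sum_fiberwise_eq_sum_filter]
        congr 1
        ext σ
        simp only [Finset.mem_filter, Finset.mem_univ, true_and, Finset.mem_range]
        exact ⟨fun _ => Nat.lt_succ_of_le (cyc_le σ), fun _ => trivial⟩
    _ = ∑ k ∈ Finset.range (n + 1), fubini k ^ 2 * stirling1 n k := by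
        apply Finset.sum_congr rfl
        intro k _
        rw [stirling1_eq_card]
        rw [Finset.sum_congr rfl (fun σ hσ => by
          rw [(Finset.mem_filter.mp hσ).2])]
        rw [Finset.sum_const, smul_eq_mul, mul_comm]

end M3
section M4a

open Finset Equiv

def sigmaFstFiber {ι : Type*} (β : ι → Type*) (i : ι) : {s : Σ j, β j // s.1 = i} ≃ β i where
  toFun s := s.2 ▸ s.1.2
  invFun b := ⟨⟨i, b⟩, rfl⟩
  left_inv := by rintro ⟨⟨j, b⟩, rfl⟩; rfl
  right_inv := by intro b; rfl

variable {n : ℕ}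

open Classical in
/-- the matrix associated to a triple -/
noncomputable def qMap (t : Equiv.Perm (Fin n) × ((Fin n → Fin (n+1)) × (Fin n → Fin (n+1)))) :
    Σ r : ℕ, Σ k : ℕ, Matrix (Fin r) (Fin k) ℕ :=
  ⟨rOf (fun x => (t.2.1 x : ℕ)), rOf (fun x => (t.2.2 x : ℕ)),
    fun a b => ((Finset.univ : Finset (Fin n)).filter
      (fun x => (t.2.1 x : ℕ) = (a : ℕ) ∧ (t.2.2 x : ℕ) = (b : ℕ))).card⟩

variable {r c : ℕ} (M : Matrix (Fin r) (Fin c) ℕ)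

noncomputable def E0 (hsum : ∑ i : Fin r × Fin c, M i.1 i.2 = n) :
    (Σ i : Fin r × Fin c, Fin (M i.1 i.2)) ≃ Fin n :=
  Fintype.equivOfCardEq (by
    rw [Fintype.card_sigma, Fintype.card_fin]
    simpa using hsum)

noncomputable def F0 (hsum : ∑ i : Fin r × Fin c, M i.1 i.2 = n) : Fin n → Fin r × Fin c :=
  fun x => ((E0 M hsum).symm x).1

open Classical in
lemma F0_fib (hsum : ∑ i : Fin r × Fin c, M i.1 i.2 = n) (i : Fin r × Fin c) :
    ((Finset.univ : Finset (Fin n)).filter (fun x => F0 M hsum x = i)).card = M i.1 i.2 := by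
  rw [← Fintype.card_subtype]
  have e1 : {x : Fin n // F0 M hsum x = i} ≃
      {s : Σ j : Fin r × Fin c, Fin (M j.1 j.2) // s.1 = i} :=
    Equiv.subtypeEquiv (E0 M hsum).symm (fun x => Iff.rfl)
  have e2 := sigmaFstFiber (fun j : Fin r × Fin c => Fin (M j.1 j.2)) i
  rw [Fintype.card_congr (e1.trans e2), Fintype.card_fin]

open Classical in
noncomputable def rho (hsum : ∑ i : Fin r × Fin c, M i.1 i.2 = n)
    (F : Fin n → Fin r × Fin c)
    (hF : ∀ i, ((Finset.univ : Finset (Fin n)).filter (fun x => F x = i)).card = M i.1 i.2) :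
    Equiv.Perm (Fin n) :=
  ((Equiv.sigmaFiberEquiv F).symm.trans
    (Equiv.sigmaCongrRight (fun i => Fintype.equivOfCardEq (by
      rw [Fintype.card_subtype, hF i, Fintype.card_fin])))).trans (E0 M hsum)

open Classical in
lemma rho_congr (hsum : ∑ i : Fin r × Fin c, M i.1 i.2 = n)
    {F F' : Fin n → Fin r × Fin c} (hFF : F = F')
    (hF : ∀ i, ((Finset.univ : Finset (Fin n)).filter (fun x => F x = i)).card = M i.1 i.2)
    (hF' : ∀ i, ((Finset.univ : Finset (Fin n)).filter (fun x => F' x = i)).card = M i.1 i.2) :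
    rho M hsum F hF = rho M hsum F' hF' := by
  subst hFF; rfl

open Classical in
lemma F0_rho (hsum : ∑ i : Fin r × Fin c, M i.1 i.2 = n)
    (F : Fin n → Fin r × Fin c)
    (hF : ∀ i, ((Finset.univ : Finset (Fin n)).filter (fun x => F x = i)).card = M i.1 i.2)
    (x : Fin n) : F0 M hsum (rho M hsum F hF x) = F x := by
  show ((E0 M hsum).symm ((E0 M hsum) _)).1 = F x
  rw [Equiv.symm_apply_apply]
  rfl

open Classical in
lemma fib_comp_perm {ι : Type*} [DecidableEq ι] (F : Fin n → ι) (π : Equiv.Perm (Fin n)) (i : ι) :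
    ((Finset.univ : Finset (Fin n)).filter (fun x => F (π x) = i)).card =
      ((Finset.univ : Finset (Fin n)).filter (fun x => F x = i)).card := by
  apply Finset.card_bij (fun x _ => π x)
  · intro x hx
    simp only [Finset.mem_filter, Finset.mem_univ, true_and] at hx ⊢
    exact hx
  · intro x _ y _ h
    exact π.injective h
  · intro y hy
    simp only [Finset.mem_filter, Finset.mem_univ, true_and] at hy
    exact ⟨π.symm y, by simp [Finset.mem_filter, hy], by simp⟩

end M4a
section M4b

open Finset Equiv

variable {n : ℕ}

lemma rOf_eq {α : Type*} [Fintype α] {f : α → ℕ} {r : ℕ}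
    (h : ∀ m, (∃ x, f x = m) ↔ m < r) : rOf f = r := by
  have himg : Finset.univ.image f = Finset.range r := by
    ext m
    simp only [Finset.mem_image, Finset.mem_univ, true_and, Finset.mem_range]
    exact h m
  rw [rOf, himg, Finset.card_range]

open Classical in
def Good (r c : ℕ) (M : Matrix (Fin r) (Fin c) ℕ)
    (t : Equiv.Perm (Fin n) × ((Fin n → Fin (n+1)) × (Fin n → Fin (n+1)))) : Prop :=
  (∀ x, (t.2.1 x : ℕ) < r ∧ (t.2.2 x : ℕ) < c) ∧
  (∀ i : Fin r × Fin c, ((Finset.univ : Finset (Fin n)).filter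
      (fun x => (t.2.1 x : ℕ) = (i.1 : ℕ) ∧ (t.2.2 x : ℕ) = (i.2 : ℕ))).card = M i.1 i.2) ∧
  (∀ x, (t.2.1 (t.1 x) : ℕ) = (t.2.1 x : ℕ)) ∧ (∀ x, (t.2.2 (t.1 x) : ℕ) = (t.2.2 x : ℕ))

open Classical in
lemma mem_fiber_iff {r c : ℕ} {M : Matrix (Fin r) (Fin c) ℕ}
    (hrow : ∀ i, ∃ j, 0 < M i j) (hcol : ∀ j, ∃ i, 0 < M i j)
    (t : Equiv.Perm (Fin n) × ((Fin n → Fin (n+1)) × (Fin n → Fin (n+1)))) :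
    (t ∈ (BSet n).filter (fun t => qMap t = ⟨r, c, M⟩)) ↔ Good r c M t := by
  obtain ⟨σ, f, g⟩ := t
  constructor
  · intro ht
    rw [Finset.mem_filter] at ht
    obtain ⟨hB, hq⟩ := ht
    simp only [BSet, Finset.mem_filter, Finset.mem_univ, true_and] at hB
    obtain ⟨hRf, hRg, hIf, hIg⟩ := hB
    simp only [qMap, Sigma.mk.inj_iff] at hq
    obtain ⟨h1, h2⟩ := hq
    subst h1
    obtain ⟨h3, h4⟩ := Sigma.mk.inj_iff.mp (eq_of_heq h2)
    subst h3
    have h5 := eq_of_heq h4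
    refine ⟨?_, ?_, hIf, hIg⟩
    · intro x
      exact ⟨(hRf ((f x : ℕ))).mp ⟨x, rfl⟩, (hRg ((g x : ℕ))).mp ⟨x, rfl⟩⟩
    · intro i
      rw [← h5]
  · rintro ⟨hbd, hfib, hIf, hIg⟩
    have hRf : ∀ m, (∃ x, (f x : ℕ) = m) ↔ m < r := by
      intro m
      constructor
      · rintro ⟨x, rfl⟩; exact (hbd x).1
      · intro hm
        obtain ⟨b, hb⟩ := hrow ⟨m, hm⟩
        rw [← hfib (⟨m, hm⟩, b)] at hb
        obtain ⟨x, hx⟩ := Finset.card_pos.mp hb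
        simp only [Finset.mem_filter, Finset.mem_univ, true_and] at hx
        exact ⟨x, hx.1⟩
    have hRg : ∀ m, (∃ x, (g x : ℕ) = m) ↔ m < c := by
      intro m
      constructor
      · rintro ⟨x, rfl⟩; exact (hbd x).2
      · intro hm
        obtain ⟨a, ha⟩ := hcol ⟨m, hm⟩
        rw [← hfib (a, ⟨m, hm⟩)] at ha
        obtain ⟨x, hx⟩ := Finset.card_pos.mp ha
        simp only [Finset.mem_filter, Finset.mem_univ, true_and] at hx
        exact ⟨x, hx.2⟩
    have hr : rOf (fun x => ((f x : ℕ))) = r := rOf_eq hRf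
    have hc : rOf (fun x => ((g x : ℕ))) = c := rOf_eq hRg
    rw [Finset.mem_filter]
    constructor
    · simp only [BSet, Finset.mem_filter, Finset.mem_univ, true_and]
      exact ⟨rangeInit_of_exists r hRf, rangeInit_of_exists c hRg, hIf, hIg⟩
    · subst hr
      subst hc
      show (⟨_, _, fun a b => _⟩ : Σ r : ℕ, Σ k : ℕ, Matrix (Fin r) (Fin k) ℕ) = ⟨_, _, M⟩
      refine congrArg (fun m => (⟨_, _, m⟩ : Σ r : ℕ, Σ k : ℕ, Matrix (Fin r) (Fin k) ℕ)) ?_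
      funext a b
      exact hfib (a, b)

open Classical in
lemma qMap_mem (t : Equiv.Perm (Fin n) × ((Fin n → Fin (n+1)) × (Fin n → Fin (n+1))))
    (ht : t ∈ BSet n) :
    (∑ i, ∑ j, (qMap t).2.2 i j) = n ∧ (∀ i, ∃ j, 0 < (qMap t).2.2 i j) ∧
      (∀ j, ∃ i, 0 < (qMap t).2.2 i j) := by
  obtain ⟨σ, f, g⟩ := t
  simp only [BSet, Finset.mem_filter, Finset.mem_univ, true_and] at ht
  obtain ⟨hRf, hRg, hIf, hIg⟩ := ht
  simp only [qMap]
  have hbdf : ∀ x, (f x : ℕ) < rOf (fun x => ((f x : ℕ))) :=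
    fun x => (hRf ((f x : ℕ))).mp ⟨x, rfl⟩
  have hbdg : ∀ x, (g x : ℕ) < rOf (fun x => ((g x : ℕ))) :=
    fun x => (hRg ((g x : ℕ))).mp ⟨x, rfl⟩
  refine ⟨?_, ?_, ?_⟩
  · have hpart := Finset.card_eq_sum_card_fiberwise
      (f := fun x : Fin n => ((⟨(f x : ℕ), hbdf x⟩, ⟨(g x : ℕ), hbdg x⟩) :
        Fin (rOf (fun x => ((f x : ℕ)))) × Fin (rOf (fun x => ((g x : ℕ))))))
      (s := Finset.univ) (t := Finset.univ) (fun x _ => Finset.mem_univ _)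
    have hcard : (Finset.univ : Finset (Fin n)).card = n := by simp
    rw [hcard] at hpart
    refine Eq.trans (Fintype.sum_prod_type' _).symm ?_
    refine Eq.trans (Finset.sum_congr rfl ?_) hpart.symm
    intro i _
    congr 1
    ext x
    simp only [Finset.mem_filter, Finset.mem_univ, true_and, Prod.mk.injEq, Fin.ext_iff,
      Prod.ext_iff]
  · intro a
    obtain ⟨x, hx⟩ := (hRf (a : ℕ)).mpr a.2
    refine ⟨⟨(g x : ℕ), hbdg x⟩, Finset.card_pos.mpr ⟨x, ?_⟩⟩
    simp only [Finset.mem_filter, Finset.mem_univ, true_and]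
    exact ⟨hx, trivial⟩
  · intro b
    obtain ⟨x, hx⟩ := (hRg (b : ℕ)).mpr b.2
    refine ⟨⟨(f x : ℕ), hbdf x⟩, Finset.card_pos.mpr ⟨x, ?_⟩⟩
    simp only [Finset.mem_filter, Finset.mem_univ, true_and]
    exact hx

end M4b
section M4c

open Finset Equiv

variable {n : ℕ}

def GF {r c : ℕ} (t : Equiv.Perm (Fin n) × ((Fin n → Fin (n+1)) × (Fin n → Fin (n+1))))
    (h : ∀ x, (t.2.1 x : ℕ) < r ∧ (t.2.2 x : ℕ) < c) : Fin n → Fin r × Fin c :=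
  fun x => (⟨(t.2.1 x : ℕ), (h x).1⟩, ⟨(t.2.2 x : ℕ), (h x).2⟩)

open Classical in
lemma GF_fib {r c : ℕ} (M : Matrix (Fin r) (Fin c) ℕ)
    (t : Equiv.Perm (Fin n) × ((Fin n → Fin (n+1)) × (Fin n → Fin (n+1))))
    (hG : Good r c M t) (i : Fin r × Fin c) :
    ((Finset.univ : Finset (Fin n)).filter (fun x => GF t hG.1 x = i)).card = M i.1 i.2 := by
  rw [← hG.2.1 i]
  congr 1
  ext x
  simp only [Finset.mem_filter, Finset.mem_univ, true_and, GF, Prod.ext_iff, Fin.ext_iff]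

open Classical in
lemma fiber_card {r c : ℕ} {M : Matrix (Fin r) (Fin c) ℕ}
    (hsum : ∑ i : Fin r × Fin c, M i.1 i.2 = n)
    (hrow : ∀ i, ∃ j, 0 < M i j) (hcol : ∀ j, ∃ i, 0 < M i j) :
    ((BSet n).filter (fun t => qMap t = ⟨r, c, M⟩)).card = Nat.factorial n := by
  have hr_le : r ≤ n := by
    have h1 : ∀ a : Fin r, 1 ≤ ∑ b, M a b := by
      intro a
      obtain ⟨b, hb⟩ := hrow a
      exact le_trans hb (Finset.single_le_sum (f := fun b => M a b)
        (fun _ _ => Nat.zero_le _) (Finset.mem_univ b))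
    calc r = ∑ _a : Fin r, 1 := by simp
    _ ≤ ∑ a : Fin r, ∑ b, M a b := Finset.sum_le_sum (fun a _ => h1 a)
    _ = n := by rw [← hsum, Fintype.sum_prod_type' (f := fun a b => M a b)]
  have hrhs : Nat.factorial n = (Finset.univ : Finset (Equiv.Perm (Fin n))).card := by
    rw [Finset.card_univ, Fintype.card_perm, Fintype.card_fin]
  rw [hrhs]
  refine Finset.card_bij (fun t ht =>
    rho M hsum (GF t ((mem_fiber_iff hrow hcol t).mp ht).1)
      (GF_fib M t ((mem_fiber_iff hrow hcol t).mp ht)) * t.1) (fun _ _ => Finset.mem_univ _)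
    ?_ ?_
  · -- injectivity
    intro t ht t' ht' heq
    set hG := (mem_fiber_iff hrow hcol t).mp ht with hGdef
    set hG' := (mem_fiber_iff hrow hcol t').mp ht' with hGdef'
    have heq' : rho M hsum (GF t hG.1) (GF_fib M t hG) * t.1
        = rho M hsum (GF t' hG'.1) (GF_fib M t' hG') * t'.1 := heq
    have hFeq : GF t hG.1 = GF t' hG'.1 := by
      funext x
      have e1 : F0 M hsum ((rho M hsum (GF t hG.1) (GF_fib M t hG) * t.1) x)
          = GF t hG.1 (t.1 x) := by
        rw [Equiv.Perm.mul_apply, F0_rho]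
      have e2 : F0 M hsum ((rho M hsum (GF t' hG'.1) (GF_fib M t' hG') * t'.1) x)
          = GF t' hG'.1 (t'.1 x) := by
        rw [Equiv.Perm.mul_apply, F0_rho]
      have hinv : GF t hG.1 (t.1 x) = GF t hG.1 x := by
        simp only [GF, Prod.ext_iff, Fin.ext_iff]
        exact ⟨hG.2.2.1 x, hG.2.2.2 x⟩
      have hinv' : GF t' hG'.1 (t'.1 x) = GF t' hG'.1 x := by
        simp only [GF, Prod.ext_iff, Fin.ext_iff]
        exact ⟨hG'.2.2.1 x, hG'.2.2.2 x⟩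
      rw [← hinv, ← e1, heq', e2, hinv']
    have hsnd : t.2 = t'.2 := by
      have h1 : t.2.1 = t'.2.1 := by
        funext x
        have := congrFun hFeq x
        simp only [GF, Prod.ext_iff, Fin.ext_iff] at this
        exact Fin.ext this.1
      have h2 : t.2.2 = t'.2.2 := by
        funext x
        have := congrFun hFeq x
        simp only [GF, Prod.ext_iff, Fin.ext_iff] at this
        exact Fin.ext this.2
      exact Prod.ext h1 h2
    have hrho : rho M hsum (GF t hG.1) (GF_fib M t hG)
        = rho M hsum (GF t' hG'.1) (GF_fib M t' hG') := rho_congr M hsum hFeq _ _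
    have hfst : t.1 = t'.1 := by
      rw [hrho] at heq'
      exact mul_left_cancel heq'
    exact Prod.ext hfst hsnd
  · -- surjectivity
    intro π _
    set F : Fin n → Fin r × Fin c := fun x => F0 M hsum (π x) with hFdef
    have hFfib : ∀ i, ((Finset.univ : Finset (Fin n)).filter (fun x => F x = i)).card
        = M i.1 i.2 := by
      intro i
      rw [hFdef]
      rw [fib_comp_perm (F0 M hsum) π i]
      exact F0_fib M hsum i
    set ρ := rho M hsum F hFfib with hρdef
    set σ := ρ⁻¹ * π with hσdef
    set f : Fin n → Fin (n+1) := fun x => ⟨((F x).1 : ℕ), by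
      have := (F x).1.2; omega⟩ with hfdef
    set g : Fin n → Fin (n+1) := fun x => ⟨((F x).2 : ℕ), by
      have := (F x).2.2
      have hc_le : c ≤ n := by
        have h1 : ∀ b : Fin c, 1 ≤ ∑ a, M a b := by
          intro b
          obtain ⟨a, ha⟩ := hcol b
          exact le_trans ha (Finset.single_le_sum (f := fun a => M a b)
            (fun _ _ => Nat.zero_le _) (Finset.mem_univ a))
        calc c = ∑ _b : Fin c, 1 := by simp
        _ ≤ ∑ b : Fin c, ∑ a, M a b := Finset.sum_le_sum (fun b _ => h1 b)
        _ = n := by rw [← hsum, Fintype.sum_prod_type' (f := fun a b => M a b)]; exact Finset.sum_comm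
      omega⟩ with hgdef
    have hkey : ∀ y, F (ρ⁻¹ y) = F0 M hsum y := by
      intro y
      have h1 : F0 M hsum (ρ (ρ⁻¹ y)) = F (ρ⁻¹ y) := F0_rho M hsum F hFfib (ρ⁻¹ y)
      rw [← h1]; simp
    have hFσ : ∀ x, F (σ x) = F x := by
      intro x
      rw [hσdef, Equiv.Perm.mul_apply, hkey]
    have hGood : Good r c M (σ, f, g) := by
      refine ⟨fun x => ⟨(F x).1.2, (F x).2.2⟩, ?_, ?_, ?_⟩
      · intro i
        rw [← hFfib i]
        congr 1
        ext x
        simp only [Finset.mem_filter, Finset.mem_univ, true_and, hfdef, hgdef,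
          Prod.ext_iff, Fin.ext_iff]
      · intro x
        show ((F (σ x)).1 : ℕ) = ((F x).1 : ℕ)
        rw [hFσ x]
      · intro x
        show ((F (σ x)).2 : ℕ) = ((F x).2 : ℕ)
        rw [hFσ x]
    have htmem : (σ, f, g) ∈ (BSet n).filter (fun t => qMap t = ⟨r, c, M⟩) :=
      (mem_fiber_iff hrow hcol (σ, f, g)).mpr hGood
    refine ⟨(σ, f, g), htmem, ?_⟩
    have hGF : GF (σ, f, g) ((mem_fiber_iff hrow hcol (σ, f, g)).mp htmem).1 = F := by
      funext x
      simp only [GF, Prod.ext_iff, Fin.ext_iff, hfdef, hgdef]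
    have hrhoeq : rho M hsum (GF (σ, f, g) ((mem_fiber_iff hrow hcol (σ, f, g)).mp htmem).1)
        (GF_fib M (σ, f, g) ((mem_fiber_iff hrow hcol (σ, f, g)).mp htmem)) = ρ :=
      rho_congr M hsum hGF _ _
    show rho M hsum (GF (σ, f, g) ((mem_fiber_iff hrow hcol (σ, f, g)).mp htmem).1)
        (GF_fib M (σ, f, g) ((mem_fiber_iff hrow hcol (σ, f, g)).mp htmem)) * σ = π
    rw [hrhoeq, hσdef]
    exact mul_inv_cancel_left ρ π

end M4c
noncomputable def MatCard (n : ℕ) : ℕ :=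
  Set.ncard {p : Σ r : ℕ, Σ k : ℕ, Matrix (Fin r) (Fin k) ℕ |
    (∑ i, ∑ j, p.2.2 i j) = n ∧ (∀ i, ∃ j, 0 < p.2.2 i j) ∧ ∀ j, ∃ i, 0 < p.2.2 i j}

section M4d

open Finset Equiv

variable {n : ℕ}

open Classical in
lemma image_qMap_eq :
    (((BSet n).image qMap : Finset (Σ r : ℕ, Σ k : ℕ, Matrix (Fin r) (Fin k) ℕ)) : Set _) =
    {p : Σ r : ℕ, Σ k : ℕ, Matrix (Fin r) (Fin k) ℕ |
      (∑ i, ∑ j, p.2.2 i j) = n ∧ (∀ i, ∃ j, 0 < p.2.2 i j) ∧ ∀ j, ∃ i, 0 < p.2.2 i j} := by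
  ext p
  simp only [Finset.coe_image, Set.mem_image, Finset.mem_coe, Set.mem_setOf_eq]
  constructor
  · rintro ⟨t, ht, rfl⟩
    exact qMap_mem t ht
  · rintro hp
    obtain ⟨r, c, M⟩ := p
    obtain ⟨h1, h2, h3⟩ := hp
    have hsum' : ∑ i : Fin r × Fin c, M i.1 i.2 = n := by
      rw [Fintype.sum_prod_type' (f := fun a b => M a b)]; exact h1
    have hr_le : r ≤ n := by
      have hb : ∀ a : Fin r, 1 ≤ ∑ b, M a b := by
        intro a
        obtain ⟨b, hbb⟩ := h2 a
        exact le_trans hbb (Finset.single_le_sum (f := fun b => M a b)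
          (fun _ _ => Nat.zero_le _) (Finset.mem_univ b))
      calc r = ∑ _a : Fin r, 1 := by simp
      _ ≤ ∑ a : Fin r, ∑ b, M a b := Finset.sum_le_sum (fun a _ => hb a)
      _ = n := by rw [← hsum', Fintype.sum_prod_type' (f := fun a b => M a b)]
    have hc_le : c ≤ n := by
      have hb : ∀ b : Fin c, 1 ≤ ∑ a, M a b := by
        intro b
        obtain ⟨a, haa⟩ := h3 b
        exact le_trans haa (Finset.single_le_sum (f := fun a => M a b)
          (fun _ _ => Nat.zero_le _) (Finset.mem_univ a))
      calc c = ∑ _b : Fin c, 1 := by simp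
      _ ≤ ∑ b : Fin c, ∑ a, M a b := Finset.sum_le_sum (fun b _ => hb b)
      _ = n := by rw [← hsum', Fintype.sum_prod_type' (f := fun a b => M a b)]; exact Finset.sum_comm
    set f : Fin n → Fin (n+1) := fun x => ⟨((F0 M hsum' x).1 : ℕ), by
      have := (F0 M hsum' x).1.2; omega⟩ with hfdef
    set g : Fin n → Fin (n+1) := fun x => ⟨((F0 M hsum' x).2 : ℕ), by
      have := (F0 M hsum' x).2.2; omega⟩ with hgdef
    have hGood : Good r c M ((1 : Equiv.Perm (Fin n)), f, g) := by
      refine ⟨fun x => ⟨(F0 M hsum' x).1.2, (F0 M hsum' x).2.2⟩, ?_, ?_, ?_⟩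
      · intro i
        rw [← F0_fib M hsum' i]
        congr 1
        ext x
        simp only [Finset.mem_filter, Finset.mem_univ, true_and, hfdef, hgdef,
          Prod.ext_iff, Fin.ext_iff]
      · intro x
        simp
      · intro x
        simp
    have htmem := (mem_fiber_iff h2 h3 ((1 : Equiv.Perm (Fin n)), f, g)).mpr hGood
    rw [Finset.mem_filter] at htmem
    exact ⟨_, htmem.1, htmem.2⟩

open Classical in
lemma BSet_card_lhs : (BSet n).card = Nat.factorial n * MatCard n := by
  rw [Finset.card_eq_sum_card_fiberwise (f := qMap) (t := (BSet n).image qMap)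
    (fun t ht => Finset.mem_image_of_mem qMap ht)]
  have hconst : ∀ m ∈ (BSet n).image qMap,
      ((BSet n).filter (fun t => qMap t = m)).card = Nat.factorial n := by
    intro m hm
    have hmem : m ∈ ({p : Σ r : ℕ, Σ k : ℕ, Matrix (Fin r) (Fin k) ℕ |
        (∑ i, ∑ j, p.2.2 i j) = n ∧ (∀ i, ∃ j, 0 < p.2.2 i j) ∧ ∀ j, ∃ i, 0 < p.2.2 i j}) := by
      rw [← image_qMap_eq]
      exact hm
    obtain ⟨r, c, M⟩ := m
    obtain ⟨h1, h2, h3⟩ := hmem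
    have hsum' : ∑ i : Fin r × Fin c, M i.1 i.2 = n := by
      rw [Fintype.sum_prod_type' (f := fun a b => M a b)]; exact h1
    exact fiber_card hsum' h2 h3
  rw [Finset.sum_congr rfl hconst, Finset.sum_const, smul_eq_mul, mul_comm]
  congr 1
  rw [MatCard, ← image_qMap_eq, Set.ncard_coe_finset]

end M4d

theorem burge_mat_card (n : ℕ) :
    Nat.factorial n * MatCard n =
      ∑ k ∈ Finset.range (n + 1), fubini k ^ 2 * stirling1 n k := by
  rw [← BSet_card_lhs, BSet_card_rhs]
end

section
/- For all n ≥ 0: n! · |BMat[n]| = Σ_{k=0}^{n} (-1)^{n-k} c(n,k) · fub(k)^2, where BMat[n] is the set of binary Burge matrices of size n. -/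
open Finset

noncomputable def BMatCard (n : ℕ) : ℕ :=
  Set.ncard {p : Σ r : ℕ, Σ k : ℕ, Matrix (Fin r) (Fin k) ℕ |
    (∑ i, ∑ j, p.2.2 i j) = n ∧ (∀ i j, p.2.2 i j ≤ 1) ∧
      (∀ i, ∃ j, 0 < p.2.2 i j) ∧ ∀ j, ∃ i, 0 < p.2.2 i j}


section SurjSec
open Function

noncomputable def surjCard (n k : ℕ) : ℕ :=
  Nat.card {f : Fin n → Fin k // Function.Surjective f}

lemma card_surj_congr {β γ : Type*} (e : β ≃ γ) (n : ℕ) :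
    Nat.card {f : Fin n → β // Function.Surjective f}
      = Nat.card {f : Fin n → γ // Function.Surjective f} := by
  apply Nat.card_congr
  refine Equiv.subtypeEquiv (Equiv.arrowCongr (Equiv.refl _) e) ?_
  intro f
  constructor
  · intro h y
    obtain ⟨x, hx⟩ := h (e.symm y)
    exact ⟨x, by simp [hx]⟩
  · intro h b
    obtain ⟨x, hx⟩ := h (e b)
    exact ⟨x, e.injective (by simpa using hx)⟩

lemma card_surj_eq_surjCard {β : Type*} [Fintype β] (n : ℕ) :
    Nat.card {f : Fin n → β // Function.Surjective f} = surjCard n (Fintype.card β) :=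
  card_surj_congr (Fintype.equivFinOfCardEq rfl) n

lemma surjCard_zero_zero : surjCard 0 0 = 1 := by
  have : Unique {f : Fin 0 → Fin 0 // Function.Surjective f} := by
    refine ⟨⟨⟨fun x => x.elim0, fun y => y.elim0⟩⟩, ?_⟩
    rintro ⟨f, hf⟩
    exact Subtype.ext (funext fun x => x.elim0)
  exact Nat.card_unique

lemma surjCard_zero_succ (k : ℕ) : surjCard 0 (k + 1) = 0 := by
  have : IsEmpty {f : Fin 0 → Fin (k+1) // Function.Surjective f} := by
    constructor
    rintro ⟨f, hf⟩
    obtain ⟨x, -⟩ := hf 0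
    exact x.elim0
  exact Nat.card_of_isEmpty

lemma surjCard_eq_zero_of_lt {n k : ℕ} (h : n < k) : surjCard n k = 0 := by
  have : IsEmpty {f : Fin n → Fin k // Function.Surjective f} := by
    constructor
    rintro ⟨f, hf⟩
    have := Fintype.card_le_of_surjective f hf
    simp only [Fintype.card_fin] at this
    omega
  exact Nat.card_of_isEmpty

lemma surjCard_diag (n : ℕ) : surjCard n n = Nat.factorial n := by
  unfold surjCard
  have e : {f : Fin n → Fin n // Function.Surjective f} ≃ (Fin n ≃ Fin n) := by
    refine ⟨fun f => Equiv.ofBijective f.1 ⟨Finite.injective_iff_surjective.mpr f.2, f.2⟩,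
      fun e => ⟨e, e.surjective⟩, ?_, ?_⟩
    · rintro ⟨f, hf⟩; rfl
    · intro e; ext x; rfl
  rw [Nat.card_congr e, Nat.card_eq_fintype_card, Fintype.card_equiv (Equiv.refl _),
    Fintype.card_fin]

lemma surjCard_succ (n j : ℕ) :
    surjCard (n + 1) (j + 1) = (j + 1) * surjCard n (j + 1) + (j + 1) * surjCard n j := by
  classical
  have e0 : (Σ v : Fin (j+1), {x : {f : Fin (n+1) → Fin (j+1) // Function.Surjective f} // x.1 (Fin.last n) = v}) ≃ {f : Fin (n+1) → Fin (j+1) // Function.Surjective f} :=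
    Equiv.sigmaFiberEquiv (fun x : {f : Fin (n+1) → Fin (j+1) // Function.Surjective f} => x.1 (Fin.last n))
  have key : ∀ v : Fin (j+1),
      Nat.card {x : {f : Fin (n+1) → Fin (j+1) // Function.Surjective f} // x.1 (Fin.last n) = v} = surjCard n (j+1) + surjCard n j := by
    intro v
    have e1 : {x : {f : Fin (n+1) → Fin (j+1) // Function.Surjective f} // x.1 (Fin.last n) = v}
        ≃ {f : Fin (n+1) → Fin (j+1) // Function.Surjective f ∧ f (Fin.last n) = v} :=
      Equiv.subtypeSubtypeEquivSubtypeInter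
        (fun f : Fin (n+1) → Fin (j+1) => Function.Surjective f)
        (fun f => f (Fin.last n) = v)
    have e2 : {f : Fin (n+1) → Fin (j+1) // Function.Surjective f ∧ f (Fin.last n) = v}
        ≃ ({g : Fin n → Fin (j+1) // Function.Surjective g}
            ⊕ {g : Fin n → {x : Fin (j+1) // x ≠ v} // Function.Surjective g}) := by
      have hits : ∀ (f : Fin (n+1) → Fin (j+1)), Function.Surjective f → f (Fin.last n) = v →
          ∀ x : Fin (j+1), x ≠ v → ∃ i : Fin n, Fin.init f i = x := by
        intro f hf hv x hx
        obtain ⟨w, hw⟩ := hf x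
        rcases Fin.eq_castSucc_or_eq_last w with ⟨i, rfl⟩ | rfl
        · exact ⟨i, hw⟩
        · exact absurd (hw.symm.trans hv) hx
      have hmiss : ∀ (f : Fin (n+1) → Fin (j+1)), Function.Surjective f → f (Fin.last n) = v →
          ¬ Function.Surjective (Fin.init f) → ∀ i : Fin n, Fin.init f i ≠ v := by
        intro f hf hv hns i hi
        apply hns
        intro x
        rcases eq_or_ne x v with rfl | hx
        · exact ⟨i, hi⟩
        · exact hits f hf hv x hx
      refine ⟨fun ⟨f, hf, hv⟩ =>
        if h : Function.Surjective (Fin.init f) then Sum.inl ⟨Fin.init f, h⟩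
        else Sum.inr ⟨fun i => ⟨Fin.init f i, hmiss f hf hv h i⟩, ?_⟩,
        ?_, ?_, ?_⟩
      · rintro ⟨x, hx⟩
        obtain ⟨i, hi⟩ := hits f hf hv x hx
        exact ⟨i, Subtype.ext hi⟩
      · -- invFun
        rintro (⟨g, hg⟩ | ⟨g, hg⟩)
        · refine ⟨Fin.snoc g v, ?_, by simp⟩
          intro x
          obtain ⟨i, hi⟩ := hg x
          exact ⟨i.castSucc, by simpa using hi⟩
        · refine ⟨Fin.snoc (fun i => (g i : Fin (j+1))) v, ?_, by simp⟩
          intro x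
          rcases eq_or_ne x v with rfl | hx
          · exact ⟨Fin.last n, by simp⟩
          · obtain ⟨i, hi⟩ := hg ⟨x, hx⟩
            exact ⟨i.castSucc, by simpa using congrArg Subtype.val hi⟩
      · -- left_inv
        rintro ⟨f, hf, hv⟩
        by_cases h : Function.Surjective (Fin.init f)
        · simp only [dif_pos h]
          apply Subtype.ext
          show Fin.snoc (Fin.init f) v = f
          rw [← hv]
          exact Fin.snoc_init_self f
        · simp only [dif_neg h]
          refine Subtype.ext ?_
          show Fin.snoc (fun i => Fin.init f i) v = f
          rw [← hv]
          exact Fin.snoc_init_self f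
      · -- right_inv
        rintro (⟨g, hg⟩ | ⟨g, hg⟩)
        · have h : Function.Surjective (Fin.init (Fin.snoc g v : Fin (n+1) → Fin (j+1))) := by
            rw [Fin.init_snoc]; exact hg
          simp only [dif_pos h]
          exact congrArg Sum.inl (Subtype.ext (funext fun i => by simp))
        · have h : ¬ Function.Surjective
              (Fin.init (Fin.snoc (fun i => (g i : Fin (j+1))) v : Fin (n+1) → Fin (j+1))) := by
            rw [Fin.init_snoc]
            intro hsurj
            obtain ⟨i, hi⟩ := hsurj v
            exact (g i).2 hi
          simp only [dif_neg h]
          refine congrArg Sum.inr (Subtype.ext (funext fun i => Subtype.ext ?_))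
          simp
    rw [Nat.card_congr (e1.trans e2), Nat.card_sum, surjCard]
    congr 1
    rw [card_surj_eq_surjCard]
    congr 1
    rw [Fintype.card_subtype_compl, Fintype.card_fin, Fintype.card_subtype_eq]
    omega
  calc surjCard (n+1) (j+1)
      = Nat.card {f : Fin (n+1) → Fin (j+1) // Function.Surjective f} := rfl
    _ = ∑ v : Fin (j+1), Nat.card {x : {f : Fin (n+1) → Fin (j+1) // Function.Surjective f} // x.1 (Fin.last n) = v} := by
        rw [← Nat.card_congr e0, Nat.card_eq_fintype_card, Fintype.card_sigma]
        exact Finset.sum_congr rfl fun v _ => (Nat.card_eq_fintype_card).symm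
    _ = ∑ _v : Fin (j+1), (surjCard n (j+1) + surjCard n j) :=
        Finset.sum_congr rfl fun v _ => key v
    _ = (j + 1) * surjCard n (j + 1) + (j + 1) * surjCard n j := by
        rw [Finset.sum_const]
        simp [Nat.mul_add]

end SurjSec

section SwapSec
open Equiv Equiv.Perm

variable {α : Type*} [Fintype α] [DecidableEq α]

lemma cyc_swap_mul (σ : Perm α) (a b : α) (ha : σ a = a) (hab : a ≠ b) :
    (Fintype.card α - (swap a b * σ).support.card) + Multiset.card (swap a b * σ).cycleType + 1
      = (Fintype.card α - σ.support.card) + Multiset.card σ.cycleType := by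
  have hanotsupp : a ∉ σ.support := by simp [mem_support, ha]
  by_cases hb : b ∈ σ.support
  · -- insert a into the cycle of b
    set c := σ.cycleOf b with hcdef
    have hcmem : c ∈ σ.cycleFactorsFinset := cycleOf_mem_cycleFactorsFinset_iff.mpr hb
    obtain ⟨hccycle, hcapp⟩ := mem_cycleFactorsFinset_iff.mp hcmem
    set ρ := σ * c⁻¹ with hρdef
    have hd : ρ.Disjoint c := disjoint_mul_inv_of_mem_cycleFactorsFinset hcmem
    have hσ : ρ * c = σ := by rw [hρdef]; group
    have hcb : c b ≠ b := by
      rw [hcdef, cycleOf_apply_self]; exact mem_support.mp hb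
    have hbsuppc : b ∈ c.support := mem_support.mpr hcb
    have hcsupp : c.support ⊆ σ.support := mem_cycleFactorsFinset_support_le hcmem
    have hanotc : a ∉ c.support := fun h => hanotsupp (hcsupp h)
    have hca : c a = a := by simpa [mem_support] using hanotc
    have hρb : ρ b = b := (hd b).resolve_right hcb
    have hρa : ρ a = a := by
      have hinv : c⁻¹ a = a := by
        rw [Equiv.Perm.inv_eq_iff_eq]; exact hca.symm
      show σ (c⁻¹ a) = a
      rw [hinv, ha]
    -- the list of the cycle of b
    have hlen2 : 2 ≤ (c.toList b).length := two_le_length_toList_iff_mem_support.mpr hbsuppc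
    have hnodupl : (c.toList b).Nodup := nodup_toList c b
    have hform : (c.toList b).formPerm = c := by
      rw [formPerm_toList, hccycle.cycleOf_eq hcb]
    have hsuppl : (c.toList b).toFinset = c.support := by
      rw [← List.support_formPerm_of_nodup _ hnodupl (fun x => toList_ne_singleton _ _ x), hform]
    have hanotl : a ∉ c.toList b := by
      intro h
      exact hanotc (by rw [← hsuppl]; exact List.mem_toFinset.mpr h)
    obtain ⟨y, l', hl⟩ : ∃ y l', c.toList b = y :: l' := by
      cases h : c.toList b with
      | nil => rw [h] at hlen2; simp at hlen2
      | cons y l' => exact ⟨y, l', rfl⟩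
    have hy : y = b := by
      have h0 := toList_getElem_zero c b hbsuppc
      simp [hl] at h0
      exact h0
    rw [hy] at hl
    -- c' = swap a b * c
    have hnodup' : (a :: c.toList b).Nodup := List.nodup_cons.mpr ⟨hanotl, hnodupl⟩
    have hlen2' : 2 ≤ (a :: c.toList b).length := by
      rw [List.length_cons]; omega
    have hc'cycle : IsCycle (a :: c.toList b).formPerm := List.isCycle_formPerm hnodup' hlen2'
    have hc'eq : (a :: c.toList b).formPerm = swap a b * c := by
      rw [hl, List.formPerm_cons_cons, ← hl, hform]
    have hc'supp : (swap a b * c).support = insert a c.support := by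
      rw [← hc'eq, List.support_formPerm_of_nodup _ hnodup'
        (by intro x h; rw [h] at hlen2'; simp at hlen2'), List.toFinset_cons, hsuppl]
    -- commute swap past ρ
    have hdisj_swap_ρ : (swap a b).Disjoint ρ := by
      intro x
      rcases eq_or_ne x a with rfl | hxa
      · right; exact hρa
      rcases eq_or_ne x b with rfl | hxb
      · right; exact hρb
      · left; exact swap_apply_of_ne_of_ne hxa hxb
    have hkey : swap a b * σ = ρ * (swap a b * c) :=
      calc swap a b * σ = swap a b * (ρ * c) := by rw [hσ]
        _ = swap a b * ρ * c := (mul_assoc _ _ _).symm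
        _ = ρ * swap a b * c := by rw [hdisj_swap_ρ.commute.eq]
        _ = ρ * (swap a b * c) := mul_assoc _ _ _
    have hdisj' : ρ.Disjoint (swap a b * c) := by
      intro x
      rcases eq_or_ne x a with rfl | hxa
      · left; exact hρa
      rcases (hd x) with h | h
      · left; exact h
      · right
        have hxsupp : x ∉ c.support := by simp [mem_support, h]
        have : x ∉ (swap a b * c).support := by
          rw [hc'supp]; simp [hxa, hxsupp]
        simpa [mem_support, not_not] using this
    have hct' : Multiset.card (swap a b * σ).cycleType = Multiset.card σ.cycleType := by
      rw [hkey, hdisj'.cycleType_mul, ← hσ, hd.cycleType_mul]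
      have h1 : Multiset.card (swap a b * c).cycleType = 1 := by
        rw [← hc'eq, hc'cycle.cycleType]; simp [← hc'eq]
      have h2 : Multiset.card c.cycleType = 1 := by rw [hccycle.cycleType]; simp
      simp [h1, h2]
    have hsupp' : (swap a b * σ).support.card = σ.support.card + 1 := by
      rw [hkey, hdisj'.card_support_mul, ← hσ, hd.card_support_mul, hc'supp,
        card_insert_of_notMem hanotc]
      ring
    have hle : σ.support.card + 1 ≤ Fintype.card α := by
      have := Finset.card_le_univ (swap a b * σ).support
      rw [hsupp'] at this; simpa using this
    rw [hct', hsupp']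
    omega
  · -- a, b both fixed: swap a b disjoint from σ
    have hσb : σ b = b := by simpa [mem_support, not_not] using hb
    have hdisj : (swap a b).Disjoint σ := by
      intro x
      rcases eq_or_ne x a with rfl | hxa
      · right; exact ha
      rcases eq_or_ne x b with rfl | hxb
      · right; exact hσb
      · left; exact swap_apply_of_ne_of_ne hxa hxb
    have hct : Multiset.card (swap a b * σ).cycleType = Multiset.card σ.cycleType + 1 := by
      rw [hdisj.cycleType_mul]
      have : Multiset.card (swap a b).cycleType = 1 := by
        rw [(isCycle_swap hab).cycleType]; simp
      simp [this]; ring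
    have hsupp : (swap a b * σ).support.card = σ.support.card + 2 := by
      rw [hdisj.card_support_mul, card_support_swap hab]; ring
    have hle : σ.support.card + 2 ≤ Fintype.card α := by
      have := Finset.card_le_univ (swap a b * σ).support
      rw [hsupp] at this; simpa using this
    rw [hct, hsupp]
    omega

end SwapSec

section StirSec
open Equiv Equiv.Perm


/-- number of cycles (including fixed points) -/
def pcyc {N : ℕ} (σ : Perm (Fin N)) : ℕ :=
  (N - σ.support.card) + Multiset.card σ.cycleType

lemma stirling1_eq (n k : ℕ) :
    stirling1 n k = Nat.card {σ : Perm (Fin n) // pcyc σ = k} :=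
  (Nat.card_coe_set_eq _).symm

lemma pcyc_le {N : ℕ} (σ : Perm (Fin N)) : pcyc σ ≤ N := by
  have h1 : Multiset.card σ.cycleType ≤ σ.support.card := by
    have h2 : Multiset.card σ.cycleType • 1 ≤ σ.cycleType.sum :=
      Multiset.card_nsmul_le_sum (fun x hx => le_trans (by norm_num) (two_le_of_mem_cycleType hx))
    rw [sum_cycleType] at h2
    simpa using h2
  have h3 : σ.support.card ≤ N := by
    simpa using Finset.card_le_univ σ.support
  unfold pcyc; omega

lemma pcyc_pos {N : ℕ} (σ : Perm (Fin (N + 1))) : 1 ≤ pcyc σ := by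
  unfold pcyc
  have h3 : σ.support.card ≤ N + 1 := by simpa using Finset.card_le_univ σ.support
  by_cases h : σ.support.card = N + 1
  · have : σ ≠ 1 := by
      intro h1
      rw [h1] at h; simp at h
    have := card_cycleType_pos.mpr this
    omega
  · omega

lemma stirling1_zero (k : ℕ) : stirling1 0 k = if k = 0 then 1 else 0 := by
  rw [stirling1_eq]
  split
  · next h =>
    subst h
    have : ∀ σ : Perm (Fin 0), pcyc σ = 0 := by
      intro σ
      have := pcyc_le σ; omega
    rw [Nat.card_eq_one_iff_unique.mpr]
    constructor
    · exact ⟨fun a b => Subtype.ext (Subsingleton.elim _ _)⟩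
    · exact ⟨⟨1, this 1⟩⟩
  · next h =>
    have : IsEmpty {σ : Perm (Fin 0) // pcyc σ = k} := by
      constructor; rintro ⟨σ, hσ⟩
      have := pcyc_le σ; omega
    exact Nat.card_of_isEmpty
lemma stirling1_succ_zero (n : ℕ) : stirling1 (n + 1) 0 = 0 := by
  rw [stirling1_eq]
  have : IsEmpty {σ : Perm (Fin (n+1)) // pcyc σ = 0} := by
    constructor; rintro ⟨σ, hσ⟩
    have := pcyc_pos σ; omega
  exact Nat.card_of_isEmpty

lemma stirling1_eq_zero_of_lt {n k : ℕ} (h : n < k) : stirling1 n k = 0 := by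
  rw [stirling1_eq]
  have : IsEmpty {σ : Perm (Fin n) // pcyc σ = k} := by
    constructor; rintro ⟨σ, hσ⟩
    have := pcyc_le σ; omega
  exact Nat.card_of_isEmpty



def finNeZeroEquiv (n : ℕ) : Fin n ≃ {x : Fin (n + 1) // x ≠ 0} where
  toFun x := ⟨x.succ, Fin.succ_ne_zero x⟩
  invFun y := y.1.pred y.2
  left_inv x := by simp
  right_inv y := by simp

lemma decomposeFin_zero (n : ℕ) (e : Perm (Fin n)) :
    Equiv.Perm.decomposeFin.symm (0, e) = e.extendDomain (finNeZeroEquiv n) := by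
  apply Equiv.ext
  intro x
  refine Fin.cases ?_ ?_ x
  · have hR : (e.extendDomain (finNeZeroEquiv n)) 0 = 0 :=
      Equiv.Perm.extendDomain_apply_not_subtype _ _ (by simp)
    rw [hR, Equiv.Perm.decomposeFin_symm_apply_zero]
  · intro i
    have hR : (e.extendDomain (finNeZeroEquiv n)) i.succ
        = ((finNeZeroEquiv n) (e ((finNeZeroEquiv n).symm ⟨i.succ, Fin.succ_ne_zero i⟩)) : Fin (n+1)) :=
      Equiv.Perm.extendDomain_apply_subtype _ _ _
    rw [hR, Equiv.Perm.decomposeFin_symm_apply_succ]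
    simp [finNeZeroEquiv]

lemma decomposeFin_eq (n : ℕ) (p : Fin (n + 1)) (e : Perm (Fin n)) :
    Equiv.Perm.decomposeFin.symm (p, e)
      = swap 0 p * Equiv.Perm.decomposeFin.symm (0, e) := by
  ext x
  refine Fin.cases ?_ ?_ x
  · simp [Equiv.Perm.decomposeFin_symm_apply_zero]
  · intro i
    simp [Equiv.Perm.decomposeFin_symm_apply_succ]

lemma pcyc_decomposeFin (n : ℕ) (p : Fin (n + 1)) (e : Perm (Fin n)) :
    pcyc (Equiv.Perm.decomposeFin.symm (p, e))
      = (if p = 0 then 1 else 0) + pcyc e := by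
  have hsupp : (e.extendDomain (finNeZeroEquiv n)).support.card = e.support.card :=
    Equiv.Perm.card_support_extend_domain _
  have hct : (e.extendDomain (finNeZeroEquiv n)).cycleType = e.cycleType :=
    Equiv.Perm.cycleType_extendDomain _
  have hslen : e.support.card ≤ n := by simpa using Finset.card_le_univ e.support
  rcases eq_or_ne p 0 with rfl | hp
  · rw [decomposeFin_zero, if_pos rfl]
    unfold pcyc
    rw [hsupp, hct]
    omega
  · rw [if_neg hp, decomposeFin_eq, decomposeFin_zero]
    have hfix : (e.extendDomain (finNeZeroEquiv n)) 0 = 0 :=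
      Equiv.Perm.extendDomain_apply_not_subtype _ _ (by simp)
    have key := cyc_swap_mul (e.extendDomain (finNeZeroEquiv n)) 0 p hfix (Ne.symm hp)
    rw [hsupp, hct] at key
    unfold pcyc
    simp only [Fintype.card_fin] at key
    omega

lemma card_pcyc_succ (n k : ℕ) :
    Nat.card {σ : Perm (Fin (n + 1)) // pcyc σ = k + 1}
      = Nat.card {e : Perm (Fin n) // pcyc e = k}
        + n * Nat.card {e : Perm (Fin n) // pcyc e = k + 1} := by
  classical
  have e1 : {σ : Perm (Fin (n + 1)) // pcyc σ = k + 1}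
      ≃ {pe : Fin (n + 1) × Perm (Fin n) //
          (fun (p : Fin (n+1)) (e : Perm (Fin n)) => (if p = 0 then 1 else 0) + pcyc e = k + 1) pe.1 pe.2} := by
    refine Equiv.subtypeEquiv Equiv.Perm.decomposeFin ?_
    intro σ
    have h := pcyc_decomposeFin n (Equiv.Perm.decomposeFin σ).1 (Equiv.Perm.decomposeFin σ).2
    simp only [Prod.mk.eta, Equiv.symm_apply_apply] at h
    rw [h]
  have e2 := Equiv.subtypeProdEquivSigmaSubtype
    (fun (p : Fin (n+1)) (e : Perm (Fin n)) => (if p = 0 then 1 else 0) + pcyc e = k + 1)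
  rw [Nat.card_congr (e1.trans e2)]
  rw [Nat.card_eq_fintype_card, Fintype.card_sigma, Fin.sum_univ_succ]
  have h0 : Fintype.card {e : Perm (Fin n) // (if (0 : Fin (n+1)) = 0 then 1 else 0) + pcyc e = k + 1}
      = Nat.card {e : Perm (Fin n) // pcyc e = k} := by
    rw [← Nat.card_eq_fintype_card]
    apply Nat.card_congr
    apply Equiv.subtypeEquiv (Equiv.refl _)
    intro e; simp; omega
  have h1 : ∀ i : Fin n,
      Fintype.card {e : Perm (Fin n) // (if (i.succ : Fin (n+1)) = 0 then 1 else 0) + pcyc e = k + 1}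
      = Nat.card {e : Perm (Fin n) // pcyc e = k + 1} := by
    intro i
    rw [← Nat.card_eq_fintype_card]
    apply Nat.card_congr
    apply Equiv.subtypeEquiv (Equiv.refl _)
    intro e; simp [Fin.succ_ne_zero i]
  rw [h0]
  congr 1
  rw [Finset.sum_congr rfl (fun i _ => h1 i), Finset.sum_const]
  simp [mul_comm]

lemma stirling1_succ (n k : ℕ) :
    stirling1 (n + 1) (k + 1) = stirling1 n k + n * stirling1 n (k + 1) := by
  rw [stirling1_eq, stirling1_eq, stirling1_eq, card_pcyc_succ]

lemma surjCard_succ_zero (k : ℕ) : surjCard (k + 1) 0 = 0 := by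
  have : IsEmpty {f : Fin (k+1) → Fin 0 // Function.Surjective f} := by
    constructor
    rintro ⟨f, -⟩
    exact (f 0).elim0
  exact Nat.card_of_isEmpty

end StirSec

section OrthoSec
lemma ortho (n : ℕ) : ∀ j : ℕ,
    ∑ k ∈ Finset.range (n + 1), (-1 : ℤ) ^ (n - k) * stirling1 n k * surjCard k j
      = if j = n then (Nat.factorial n : ℤ) else 0 := by
  induction n with
  | zero =>
    intro j
    rw [Finset.sum_range_one]
    cases j with
    | zero => simp [stirling1_zero, surjCard_zero_zero]
    | succ m => simp [stirling1_zero, surjCard_zero_succ]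
  | succ n IH =>
    intro j
    cases j with
    | zero =>
      rw [if_neg (by omega)]
      rw [Finset.sum_range_succ']
      have h0 : ((-1 : ℤ)) ^ (n + 1 - 0) * stirling1 (n+1) 0 * surjCard 0 0 = 0 := by
        rw [stirling1_succ_zero]; ring
      rw [h0, add_zero]
      apply Finset.sum_eq_zero
      intro k hk
      rw [surjCard_succ_zero]
      ring
    | succ m =>
      have step : ∀ k ∈ Finset.range (n + 1),
          (-1 : ℤ) ^ (n + 1 - (k+1)) * stirling1 (n+1) (k+1) * surjCard (k+1) (m+1)
          = ((m : ℤ)+1) * ((-1 : ℤ) ^ (n - k) * stirling1 n k * surjCard k (m+1))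
            + ((m : ℤ)+1) * ((-1 : ℤ) ^ (n - k) * stirling1 n k * surjCard k m)
            + (n : ℤ) * ((-1 : ℤ) ^ (n - k) * stirling1 n (k+1) * surjCard (k+1) (m+1)) := by
        intro k hk
        rw [Nat.succ_sub_succ, stirling1_succ]
        push_cast [surjCard_succ k m]
        ring
      rw [Finset.sum_range_succ']
      have h0 : ((-1 : ℤ)) ^ (n + 1 - 0) * stirling1 (n+1) 0 * surjCard 0 (m+1) = 0 := by
        rw [stirling1_succ_zero]; ring
      rw [h0, add_zero, Finset.sum_congr rfl step]
      rw [Finset.sum_add_distrib, Finset.sum_add_distrib, ← Finset.mul_sum, ← Finset.mul_sum,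
        ← Finset.mul_sum]
      have hW : ∑ k ∈ Finset.range (n+1),
          (-1 : ℤ) ^ (n - k) * stirling1 n (k+1) * surjCard (k+1) (m+1)
          = - ∑ k ∈ Finset.range (n+1), (-1 : ℤ) ^ (n - k) * stirling1 n k * surjCard k (m+1) := by
        have e1 : ∑ k ∈ Finset.range (n+2), (-1 : ℤ) ^ (n + 1 - k) * stirling1 n k * surjCard k (m+1)
            = ∑ k ∈ Finset.range (n+1), (-1 : ℤ) ^ (n - k) * stirling1 n (k+1) * surjCard (k+1) (m+1)
              + (-1 : ℤ) ^ (n+1) * stirling1 n 0 * surjCard 0 (m+1) := by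
          rw [Finset.sum_range_succ']
          congr 1
          apply Finset.sum_congr rfl
          intro k hk
          rw [Nat.succ_sub_succ]
        have e2 : ∑ k ∈ Finset.range (n+2), (-1 : ℤ) ^ (n + 1 - k) * stirling1 n k * surjCard k (m+1)
            = ∑ k ∈ Finset.range (n+1), (-1 : ℤ) ^ (n + 1 - k) * stirling1 n k * surjCard k (m+1) := by
          rw [Finset.sum_range_succ, stirling1_eq_zero_of_lt (by omega)]
          push_cast
          ring
        have e3 : ∑ k ∈ Finset.range (n+1), (-1 : ℤ) ^ (n + 1 - k) * stirling1 n k * surjCard k (m+1)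
            = - ∑ k ∈ Finset.range (n+1), (-1 : ℤ) ^ (n - k) * stirling1 n k * surjCard k (m+1) := by
          rw [← Finset.sum_neg_distrib]
          apply Finset.sum_congr rfl
          intro k hk
          rw [Finset.mem_range] at hk
          have : n + 1 - k = (n - k) + 1 := by omega
          rw [this, pow_succ]
          ring
        simp only [surjCard_zero_succ, Nat.cast_zero, mul_zero, add_zero] at e1
        rw [e3] at e2
        linarith [e1, e2]
      rw [hW, mul_neg, IH (m+1), IH m]
      by_cases h1 : m = n
      · subst h1
        rw [if_neg (by omega), if_pos rfl, if_pos rfl]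
        push_cast [Nat.factorial_succ]
        ring
      · by_cases h2 : m + 1 = n
        · rw [if_pos h2, if_neg h1, if_neg (by omega)]
          rw [← h2]
          push_cast
          ring
        · rw [if_neg h2, if_neg h1, if_neg (by omega)]
          ring

end OrthoSec


abbrev MatP : Type := Σ r : ℕ, Σ k : ℕ, Matrix (Fin r) (Fin k) ℕ

def BProp (p : MatP) : Prop :=
  (∀ i j, p.2.2 i j ≤ 1) ∧ (∀ i, ∃ j, 0 < p.2.2 i j) ∧ (∀ j, ∃ i, 0 < p.2.2 i j)

def msize (p : MatP) : ℕ := ∑ i, ∑ j, p.2.2 i j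

def POnes (p : MatP) : Type := {ij : Fin p.1 × Fin p.2.1 // p.2.2 ij.1 ij.2 = 1}

instance (p : MatP) : Fintype (POnes p) := by unfold POnes; infer_instance

lemma msize_eq_card_ones (p : MatP) (hle : ∀ i j, p.2.2 i j ≤ 1) :
    msize p = Fintype.card (POnes p) := by
  unfold POnes
  erw [Fintype.card_subtype]
  have h1 : msize p = ∑ x : Fin p.1 × Fin p.2.1, if p.2.2 x.1 x.2 = 1 then 1 else 0 := by
    unfold msize
    rw [Fintype.sum_prod_type]
    apply Finset.sum_congr rfl
    intro i _
    apply Finset.sum_congr rfl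
    intro j _
    have h2 := hle i j
    revert h2
    generalize p.2.2 i j = a
    intro h2
    split <;> omega
  rw [h1, Finset.sum_boole]
  simp

lemma rows_le_msize {p : MatP} (hrow : ∀ i, ∃ j, 0 < p.2.2 i j) : p.1 ≤ msize p := by
  unfold msize
  calc p.1 = ∑ _i : Fin p.1, 1 := by simp
    _ ≤ ∑ i, ∑ j, p.2.2 i j := by
        apply Finset.sum_le_sum
        intro i _
        obtain ⟨j, hj⟩ := hrow i
        calc 1 ≤ p.2.2 i j := hj
          _ ≤ ∑ j, p.2.2 i j := Finset.single_le_sum (fun _ _ => Nat.zero_le _) (mem_univ j)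

lemma cols_le_msize {p : MatP} (hcol : ∀ j, ∃ i, 0 < p.2.2 i j) : p.2.1 ≤ msize p := by
  unfold msize
  rw [Finset.sum_comm (f := fun i j => p.2.2 i j)]
  calc p.2.1 = ∑ _j : Fin p.2.1, 1 := by simp
    _ ≤ ∑ j, ∑ i, p.2.2 i j := by
        apply Finset.sum_le_sum
        intro j _
        obtain ⟨i, hi⟩ := hcol j
        calc 1 ≤ p.2.2 i j := hi
          _ ≤ ∑ i, p.2.2 i j :=
            Finset.single_le_sum (f := fun i => p.2.2 i j) (fun _ _ => Nat.zero_le _) (mem_univ i)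

/-- the base of the big sigma type -/
def BBase (n : ℕ) : Type := {p : MatP // BProp p ∧ msize p ≤ n}

instance BBase.finite (n : ℕ) : Finite (BBase n) := by
  classical
  have hrle : ∀ q : BBase n, q.1.1 < n + 1 :=
    fun q => Nat.lt_succ_of_le (le_trans (rows_le_msize q.2.1.2.1) q.2.2)
  have hkle : ∀ q : BBase n, q.1.2.1 < n + 1 :=
    fun q => Nat.lt_succ_of_le (le_trans (cols_le_msize q.2.1.2.2) q.2.2)
  refine Finite.of_injective (fun q : BBase n =>
    ((⟨q.1.1, hrle q⟩, ⟨q.1.2.1, hkle q⟩,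
      fun i j => if h : i.1 < q.1.1 ∧ j.1 < q.1.2.1
        then decide (q.1.2.2 ⟨i.1, h.1⟩ ⟨j.1, h.2⟩ = 1) else false)
      : Fin (n+1) × Fin (n+1) × (Fin (n+1) → Fin (n+1) → Bool))) ?_
  rintro ⟨⟨r, k, M⟩, hq⟩ ⟨⟨r', k', M'⟩, hq'⟩ h
  simp only [Prod.mk.injEq, Fin.mk.injEq] at h
  obtain ⟨hr, hk, hf⟩ := h
  subst hr
  subst hk
  have hM : M = M' := by
    funext i j
    have hij : (i.1 < r ∧ j.1 < k) := ⟨i.isLt, j.isLt⟩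
    have h2 := congrFun (congrFun hf ⟨i.1, lt_trans i.isLt (by
      exact Nat.lt_succ_of_le (le_trans (rows_le_msize hq.1.2.1) hq.2))⟩)
      ⟨j.1, lt_trans j.isLt (Nat.lt_succ_of_le (le_trans (cols_le_msize hq.1.2.2) hq.2))⟩
    simp only [dif_pos hij] at h2
    rw [decide_eq_decide] at h2
    have b1 := hq.1.1 i j
    have b2 := hq'.1.1 i j
    simp only [Fin.eta] at h2
    dsimp only at b1 b2 h2
    omega
  subst hM
  rfl

----------------------------------------------------------------
-- OSP infrastructure
def OSPset (n : ℕ) : Set (List (Finset (Fin n))) :=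
  {L | (∀ B ∈ L, B.Nonempty) ∧ L.Pairwise Disjoint ∧ ∀ x, ∃ B ∈ L, x ∈ B}

lemma osp_block_unique {n : ℕ} {L : List (Finset (Fin n))} (hL : L.Pairwise Disjoint)
    {x : Fin n} {i j : Fin L.length} (hi : x ∈ L.get i) (hj : x ∈ L.get j) : i = j := by
  by_contra hne
  rcases lt_or_gt_of_ne hne with hlt | hlt
  · exact (Finset.disjoint_left.mp (List.pairwise_iff_get.mp hL i j hlt) hi) hj
  · exact (Finset.disjoint_left.mp (List.pairwise_iff_get.mp hL j i hlt) hj) hi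

def blockIdx {n : ℕ} (L : List (Finset (Fin n))) (hcov : ∀ x, ∃ B ∈ L, x ∈ B)
    (x : Fin n) : Fin L.length :=
  ⟨List.findIdx (fun B => decide (x ∈ B)) L,
    List.findIdx_lt_length_of_exists (by
      obtain ⟨B, hB, hxB⟩ := hcov x
      exact ⟨B, hB, by simpa using hxB⟩)⟩

lemma mem_blockIdx {n : ℕ} (L : List (Finset (Fin n))) (hcov : ∀ x, ∃ B ∈ L, x ∈ B)
    (x : Fin n) : x ∈ L.get (blockIdx L hcov x) := by
  have := List.findIdx_getElem (p := fun B => decide (x ∈ B)) (xs := L)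
    (w := (blockIdx L hcov x).2)
  exact of_decide_eq_true this

lemma ofFn_filter_mem_OSP {n r : ℕ} (u : Fin n → Fin r) (hu : Function.Surjective u) :
    (List.ofFn fun i => univ.filter fun x => u x = i) ∈ OSPset n := by
  refine ⟨?_, ?_, ?_⟩
  · intro B hB
    rw [List.mem_ofFn] at hB
    obtain ⟨i, rfl⟩ := hB
    obtain ⟨x, hx⟩ := hu i
    exact ⟨x, by simp [hx]⟩
  · rw [List.pairwise_iff_get]
    intro i j hij
    rw [List.get_ofFn, List.get_ofFn, Finset.disjoint_left]
    intro x hx1 hx2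
    simp only [mem_filter, mem_univ, true_and] at hx1 hx2
    have : (i : ℕ) = (j : ℕ) := by
      have := hx1.symm.trans hx2
      have h2 := congrArg Fin.val this
      simpa using h2
    omega
  · intro x
    refine ⟨univ.filter fun y => u y = u x, ?_, by simp⟩
    rw [List.mem_ofFn]
    exact ⟨u x, rfl⟩

----------------------------------------------------------------
-- the map F : sigma → pairs
section BigBij
variable (n : ℕ)

lemma row_surj (q : BBase n) (h : Fin n → POnes q.1) (hh : Function.Surjective h) :
    Function.Surjective (fun x => (h x).1.1) := by
  intro i
  obtain ⟨j, hj⟩ := q.2.1.2.1 i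
  have h1 : q.1.2.2 i j = 1 := le_antisymm (q.2.1.1 i j) hj
  obtain ⟨x, hx⟩ := hh ⟨(i, j), h1⟩
  exact ⟨x, by simp [hx]⟩

lemma col_surj (q : BBase n) (h : Fin n → POnes q.1) (hh : Function.Surjective h) :
    Function.Surjective (fun x => (h x).1.2) := by
  intro j
  obtain ⟨i, hi⟩ := q.2.1.2.2 j
  have h1 : q.1.2.2 i j = 1 := le_antisymm (q.2.1.1 i j) hi
  obtain ⟨x, hx⟩ := hh ⟨(i, j), h1⟩
  exact ⟨x, by simp [hx]⟩

def FF : (Σ q : BBase n, {h : Fin n → POnes q.1 // Function.Surjective h})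
    → ↥(OSPset n) × ↥(OSPset n) :=
  fun a =>
    (⟨List.ofFn fun i => univ.filter fun x => (a.2.1 x).1.1 = i,
      ofFn_filter_mem_OSP _ (row_surj n a.1 a.2.1 a.2.2)⟩,
     ⟨List.ofFn fun j => univ.filter fun x => (a.2.1 x).1.2 = j,
      ofFn_filter_mem_OSP _ (col_surj n a.1 a.2.1 a.2.2)⟩)

lemma FF_injective : Function.Injective (FF n) := by
  rintro ⟨⟨⟨r, k, M⟩, hq⟩, h, hh⟩ ⟨⟨⟨r', k', M'⟩, hq'⟩, h', hh'⟩ heq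
  simp only [FF, Prod.mk.injEq, Subtype.mk.injEq] at heq
  obtain ⟨hPeq, hQeq⟩ := heq
  have hr : r = r' := by
    have := congrArg List.length hPeq
    simpa using this
  subst hr
  have hk : k = k' := by
    have := congrArg List.length hQeq
    simpa using this
  subst hk
  rw [List.ofFn_inj] at hPeq hQeq
  have hcomp : ∀ x, (h x).1 = (h' x).1 := by
    intro x
    have hx1 : x ∈ univ.filter fun y => (h y).1.1 = (h x).1.1 := by simp
    have hx2 : x ∈ univ.filter fun y => (h y).1.2 = (h x).1.2 := by simp
    rw [congrFun hPeq ((h x).1.1)] at hx1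
    rw [congrFun hQeq ((h x).1.2)] at hx2
    simp only [mem_filter, mem_univ, true_and] at hx1 hx2
    exact Prod.ext hx1.symm hx2.symm
  have hM : M = M' := by
    funext i j
    have e1 : M i j = 1 ↔ ∃ x, (h x).1 = (i, j) := by
      constructor
      · intro h1
        obtain ⟨x, hx⟩ := hh ⟨(i, j), h1⟩
        exact ⟨x, by rw [hx]⟩
      · rintro ⟨x, hx⟩
        have h2 := (h x).2
        rw [show (h x).1.1 = i from congrArg Prod.fst hx,
          show (h x).1.2 = j from congrArg Prod.snd hx] at h2
        exact h2
    have e2 : M' i j = 1 ↔ ∃ x, (h' x).1 = (i, j) := by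
      constructor
      · intro h1
        obtain ⟨x, hx⟩ := hh' ⟨(i, j), h1⟩
        exact ⟨x, by rw [hx]⟩
      · rintro ⟨x, hx⟩
        have h2 := (h' x).2
        rw [show (h' x).1.1 = i from congrArg Prod.fst hx,
          show (h' x).1.2 = j from congrArg Prod.snd hx] at h2
        exact h2
    have e3 : (∃ x, (h x).1 = (i, j)) ↔ ∃ x, (h' x).1 = (i, j) := by
      constructor
      · rintro ⟨x, hx⟩; exact ⟨x, (hcomp x) ▸ hx⟩
      · rintro ⟨x, hx⟩; exact ⟨x, (hcomp x) ▸ hx⟩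
    have b1 := hq.1.1 i j
    have b2 := hq'.1.1 i j
    rw [e3, ← e2] at e1
    dsimp only at b1 b2 e1 ⊢
    omega
  subst hM
  have hqq : hq = hq' := rfl
  subst hqq
  have hhh : h = h' := funext fun x => Subtype.ext (hcomp x)
  subst hhh
  rfl
end BigBij

section BigBij2
variable (n : ℕ)

lemma FF_surjective : Function.Surjective (FF n) := by
  classical
  rintro ⟨⟨P, hP⟩, ⟨Q, hQ⟩⟩
  obtain ⟨hP1, hP2, hP3⟩ := hP
  obtain ⟨hQ1, hQ2, hQ3⟩ := hQ
  set fI : Fin n → Fin P.length := blockIdx P hP3 with hfI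
  set gI : Fin n → Fin Q.length := blockIdx Q hQ3 with hgI
  set M : Matrix (Fin P.length) (Fin Q.length) ℕ :=
    fun i j => if ∃ x, fI x = i ∧ gI x = j then 1 else 0 with hM
  have hMle : ∀ i j, M i j ≤ 1 := by
    intro i j; rw [hM]; dsimp only; split <;> omega
  have hfI_unique : ∀ (x : Fin n) (i : Fin P.length), x ∈ P.get i → fI x = i := by
    intro x i hx
    exact osp_block_unique hP2 (mem_blockIdx P hP3 x) hx
  have hgI_unique : ∀ (x : Fin n) (j : Fin Q.length), x ∈ Q.get j → gI x = j := by
    intro x j hx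
    exact osp_block_unique hQ2 (mem_blockIdx Q hQ3 x) hx
  have hMrow : ∀ i, ∃ j, 0 < M i j := by
    intro i
    obtain ⟨x, hx⟩ := hP1 (P.get i) (P.get_mem _)
    refine ⟨gI x, ?_⟩
    rw [hM]; dsimp only
    rw [if_pos ⟨x, hfI_unique x i hx, rfl⟩]
    omega
  have hMcol : ∀ j, ∃ i, 0 < M i j := by
    intro j
    obtain ⟨x, hx⟩ := hQ1 (Q.get j) (Q.get_mem _)
    refine ⟨fI x, ?_⟩
    rw [hM]; dsimp only
    rw [if_pos ⟨x, rfl, hgI_unique x j hx⟩]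
    omega
  set p : MatP := ⟨P.length, Q.length, M⟩ with hp
  have hone : ∀ x : Fin n, p.2.2 (fI x) (gI x) = 1 := by
    intro x
    show M (fI x) (gI x) = 1
    rw [hM]; dsimp only
    rw [if_pos ⟨x, rfl, rfl⟩]
  set h : Fin n → POnes p := fun x => ⟨(fI x, gI x), hone x⟩ with hh_def
  have hh : Function.Surjective h := by
    rintro ⟨⟨i, j⟩, hij⟩
    have hex : ∃ x, fI x = i ∧ gI x = j := by
      by_contra hc
      have : M i j = 0 := by rw [hM]; dsimp only; rw [if_neg hc]
      rw [show p.2.2 (i,j).1 (i,j).2 = M i j from rfl] at hij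
      omega
    obtain ⟨x, hx1, hx2⟩ := hex
    refine ⟨x, Subtype.ext ?_⟩
    show (fI x, gI x) = (i, j)
    rw [hx1, hx2]
  have hmsize : msize p ≤ n := by
    rw [msize_eq_card_ones p hMle]
    calc Fintype.card (POnes p) ≤ Fintype.card (Fin n) := Fintype.card_le_of_surjective h hh
      _ = n := Fintype.card_fin n
  refine ⟨⟨⟨p, ⟨hMle, hMrow, hMcol⟩, hmsize⟩, h, hh⟩, ?_⟩
  unfold FF
  dsimp only
  refine Prod.ext (Subtype.ext ?_) (Subtype.ext ?_)
  · show List.ofFn (fun i => univ.filter fun x => fI x = i) = P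
    conv_rhs => rw [← List.ofFn_get P]
    apply congrArg List.ofFn
    funext i
    ext x
    simp only [mem_filter, mem_univ, true_and]
    constructor
    · rintro rfl
      exact mem_blockIdx P hP3 x
    · intro hx
      exact hfI_unique x i hx
  · show List.ofFn (fun j => univ.filter fun x => gI x = j) = Q
    conv_rhs => rw [← List.ofFn_get Q]
    apply congrArg List.ofFn
    funext j
    ext x
    simp only [mem_filter, mem_univ, true_and]
    constructor
    · rintro rfl
      exact mem_blockIdx Q hQ3 x
    · intro hx
      exact hgI_unique x j hx
end BigBij2


lemma fubini_eq_s7 (n : ℕ) : fubini n = Nat.card ↥(OSPset n) :=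
  (Nat.card_coe_set_eq _).symm

lemma BMatCard_eq (s : ℕ) : BMatCard s = Nat.card {p : MatP // msize p = s ∧ BProp p} :=
  (Nat.card_coe_set_eq _).symm

lemma fub_sq (n : ℕ) :
    fubini n ^ 2 = ∑ s ∈ Finset.range (n + 1), BMatCard s * surjCard n s := by
  classical
  letI : Fintype (BBase n) := Fintype.ofFinite _
  letI : ∀ q : BBase n, Fintype {h : Fin n → POnes q.1 // Function.Surjective h} :=
    fun q => Fintype.ofFinite _
  have c1 : fubini n ^ 2 = Nat.card (↥(OSPset n) × ↥(OSPset n)) := by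
    rw [Nat.card_prod, fubini_eq_s7]; ring
  have c2 : Nat.card (↥(OSPset n) × ↥(OSPset n))
      = Nat.card (Σ q : BBase n, {h : Fin n → POnes q.1 // Function.Surjective h}) :=
    (Nat.card_eq_of_bijective (FF n) ⟨FF_injective n, FF_surjective n⟩).symm
  have c3 : Nat.card (Σ q : BBase n, {h : Fin n → POnes q.1 // Function.Surjective h})
      = ∑ q : BBase n, surjCard n (msize q.1) := by
    rw [Nat.card_eq_fintype_card, Fintype.card_sigma]
    apply Finset.sum_congr rfl
    intro q _
    rw [← Nat.card_eq_fintype_card, card_surj_eq_surjCard, ← msize_eq_card_ones q.1 q.2.1.1]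
  have c4 : ∑ q : BBase n, surjCard n (msize q.1)
      = ∑ s ∈ Finset.range (n + 1),
          ∑ q ∈ univ.filter (fun q : BBase n => msize q.1 = s), surjCard n (msize q.1) :=
    (Finset.sum_fiberwise_of_maps_to
      (fun q _ => Finset.mem_range.mpr (Nat.lt_succ_of_le q.2.2)) _).symm
  rw [c1, c2, c3, c4]
  apply Finset.sum_congr rfl
  intro s hs
  rw [Finset.mem_range] at hs
  have hsum : ∑ q ∈ univ.filter (fun q : BBase n => msize q.1 = s), surjCard n (msize q.1)
      = ∑ _q ∈ univ.filter (fun q : BBase n => msize q.1 = s), surjCard n s := by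
    apply Finset.sum_congr rfl
    intro q hq
    rw [Finset.mem_filter] at hq
    rw [hq.2]
  rw [hsum, Finset.sum_const, smul_eq_mul]
  congr 1
  rw [← Fintype.card_subtype, ← Nat.card_eq_fintype_card, BMatCard_eq]
  apply Nat.card_congr
  refine (Equiv.subtypeSubtypeEquivSubtypeInter
    (fun p : MatP => BProp p ∧ msize p ≤ n) (fun p => msize p = s)).trans
    (Equiv.subtypeEquiv (Equiv.refl _) ?_)
  intro p
  simp only [Equiv.refl_apply]
  constructor
  · rintro ⟨⟨h1, h2⟩, h3⟩; exact ⟨h3, h1⟩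
  · rintro ⟨h1, h2⟩; exact ⟨⟨h2, by omega⟩, h1⟩


theorem binary_burge_mat_card (n : ℕ) :
    (Nat.factorial n * BMatCard n : ℤ) =
      ∑ k ∈ Finset.range (n + 1),
        (-1 : ℤ) ^ (n - k) * stirling1 n k * fubini k ^ 2 := by
  have step1 : ∀ k ∈ Finset.range (n+1),
      (-1 : ℤ) ^ (n - k) * (stirling1 n k : ℤ) * (fubini k : ℤ) ^ 2
        = ∑ s ∈ Finset.range (n+1),
            (BMatCard s : ℤ) * ((-1 : ℤ) ^ (n - k) * (stirling1 n k : ℤ) * (surjCard k s : ℤ)) := by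
    intro k hk
    rw [Finset.mem_range] at hk
    have h2 : fubini k ^ 2 = ∑ s ∈ Finset.range (n+1), BMatCard s * surjCard k s := by
      rw [fub_sq k]
      apply Finset.sum_subset
      · intro s hs
        rw [Finset.mem_range] at hs ⊢
        omega
      · intro s hs hns
        rw [Finset.mem_range] at hs
        have hks : k < s := by
          by_contra hc
          exact hns (Finset.mem_range.mpr (by omega))
        rw [surjCard_eq_zero_of_lt hks, Nat.mul_zero]
    have h1 : (fubini k : ℤ) ^ 2
        = ∑ s ∈ Finset.range (n+1), (BMatCard s : ℤ) * (surjCard k s : ℤ) := by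
      have := congrArg (fun m : ℕ => (m : ℤ)) h2
      push_cast at this
      exact this
    rw [h1, Finset.mul_sum]
    apply Finset.sum_congr rfl
    intro s _
    ring
  rw [Finset.sum_congr rfl step1, Finset.sum_comm]
  have step2 : ∀ s ∈ Finset.range (n+1),
      (∑ k ∈ Finset.range (n+1),
        (BMatCard s:ℤ) * ((-1:ℤ)^(n-k) * (stirling1 n k : ℤ) * (surjCard k s : ℤ)))
        = (BMatCard s : ℤ) * (if s = n then (Nat.factorial n : ℤ) else 0) := by
    intro s _
    rw [← Finset.mul_sum, ortho n s]
  rw [Finset.sum_congr rfl step2]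
  rw [Finset.sum_eq_single n]
  · rw [if_pos rfl]
    push_cast
    ring
  · intro s _ hsne
    rw [if_neg hsne, mul_zero]
  · intro h
    exact absurd (Finset.mem_range.mpr (by omega)) h
end

section
/- For all m ≥ 0, the ordinary generating function of |Genmat_m[n]| is Σ_{n≥0} |Genmat_m[n]| x^n = (1-x)^m / (2(1-x)^m - 1), as an identity of formal power series. -/
open Finset

section Aux

/-- Number of columns (vectors in `ℕ^m`) with entry sum `s`. -/
noncomputable def ColCount (m s : ℕ) : ℕ := Nat.card {c : Fin m → ℕ // ∑ i, c i = s}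

lemma natCard_sigma {ι : Type*} [Fintype ι] (α : ι → Type*) [∀ i, Finite (α i)] :
    Nat.card (Σ i, α i) = ∑ i, Nat.card (α i) := by
  letI := fun i => Fintype.ofFinite (α i)
  simp [Nat.card_eq_fintype_card]

noncomputable def colEquiv (m s : ℕ) :
    {c : Fin m → ℕ // ∑ i, c i = s} ≃ {x // x ∈ Finset.Nat.antidiagonalTuple m s} :=
  Equiv.subtypeEquivRight (by simp [Finset.Nat.mem_antidiagonalTuple])

instance colFinite (m s : ℕ) : Finite {c : Fin m → ℕ // ∑ i, c i = s} :=
  Finite.of_equiv _ (colEquiv m s).symm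

lemma colCount_zero (m : ℕ) : ColCount m 0 = 1 := by
  have : Unique {c : Fin m → ℕ // ∑ i, c i = 0} := by
    refine ⟨⟨⟨fun _ => 0, by simp⟩⟩, ?_⟩
    rintro ⟨c, hc⟩
    have h0 : ∀ i ∈ Finset.univ, c i = 0 := Finset.sum_eq_zero_iff.mp hc
    ext i
    simp [h0 i (mem_univ i)]
  exact Nat.card_unique

lemma colCount_zero_empty (s : ℕ) (hs : s ≠ 0) : ColCount 0 s = 0 := by
  rw [ColCount]
  have : IsEmpty {c : Fin 0 → ℕ // ∑ i, c i = s} := by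
    refine ⟨?_⟩
    rintro ⟨c, hc⟩
    simp at hc
    omega
  exact Nat.card_of_isEmpty

/-- Splitting off the first entry of a column. -/
def consColFun (m n : ℕ)
    (x : Σ a : Fin (n + 1), {t : Fin m → ℕ // ∑ i, t i = n - a.val}) :
    {c : Fin (m + 1) → ℕ // ∑ i, c i = n} :=
  ⟨Fin.cons x.1.val x.2.val, by
    have ht := x.2.2
    have hlt := x.1.isLt
    rw [Fin.sum_univ_succ]
    simp only [Fin.cons_zero, Fin.cons_succ]
    omega⟩

lemma consColFun_bijective (m n : ℕ) : Function.Bijective (consColFun m n) := by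
  constructor
  · rintro ⟨a₁, t₁, ht₁⟩ ⟨a₂, t₂, ht₂⟩ h
    have hv : (Fin.cons a₁.val t₁ : Fin (m + 1) → ℕ) = Fin.cons a₂.val t₂ :=
      congrArg Subtype.val h
    have ha : a₁ = a₂ := by
      apply Fin.ext
      have := congrFun hv 0
      simpa using this
    have ht : t₁ = t₂ := by
      funext i
      have := congrFun hv i.succ
      simpa using this
    subst ha
    subst ht
    rfl
  · rintro ⟨c, hc⟩
    have hle : c 0 ≤ n := by
      rw [← hc, Fin.sum_univ_succ]
      omega
    have htail : ∑ i, Fin.tail c i = n - c 0 := by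
      rw [Fin.sum_univ_succ] at hc
      simp only [Fin.tail]
      omega
    refine ⟨⟨⟨c 0, by omega⟩, ⟨Fin.tail c, htail⟩⟩, ?_⟩
    exact Subtype.ext (Fin.cons_self_tail c)

lemma colCount_succ (m n : ℕ) :
    ColCount (m + 1) n = ∑ a ∈ range (n + 1), ColCount m (n - a) := by
  rw [ColCount, ← Nat.card_eq_of_bijective _ (consColFun_bijective m n), natCard_sigma,
    Fin.sum_univ_eq_sum_range (fun a => Nat.card {t : Fin m → ℕ // ∑ i, t i = n - a})]
  rfl

lemma one_sub_X_mul_mk_one :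
    ((1 : PowerSeries ℚ) - PowerSeries.X) * PowerSeries.mk (fun _ => (1 : ℚ)) = 1 := by
  ext n
  cases n with
  | zero => simp
  | succ k => simp [sub_mul, PowerSeries.coeff_succ_X_mul]

lemma mk_colCount_eq (m : ℕ) :
    PowerSeries.mk (fun s => (ColCount m s : ℚ)) = (PowerSeries.mk fun _ => (1 : ℚ)) ^ m := by
  induction m with
  | zero =>
    ext n
    cases n with
    | zero => simp [colCount_zero]
    | succ k => simp [colCount_zero_empty (k + 1) (Nat.succ_ne_zero k)]
  | succ m ih =>
    rw [pow_succ', ← ih]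
    ext n
    rw [PowerSeries.coeff_mul, Finset.Nat.sum_antidiagonal_eq_sum_range_succ_mk]
    simp only [PowerSeries.coeff_mk, one_mul]
    rw [colCount_succ]
    push_cast
    rfl

lemma one_sub_X_pow_mul_colCount (m : ℕ) :
    ((1 : PowerSeries ℚ) - PowerSeries.X) ^ m *
      PowerSeries.mk (fun s => (ColCount m s : ℚ)) = 1 := by
  rw [mk_colCount_eq, ← mul_pow, one_sub_X_mul_mk_one, one_pow]

end Aux

section Lists

/-- The list model: a generator matrix is a list of nonzero columns. -/
abbrev LSet (m n : ℕ) : Type :=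
  {L : List (Fin m → ℕ) // (L.map fun c => ∑ i, c i).sum = n ∧ ∀ c ∈ L, ∃ i, 0 < c i}

def listEquivSigma (m : ℕ) : List (Fin m → ℕ) ≃ Σ k, Matrix (Fin m) (Fin k) ℕ :=
  List.equivSigmaTuple.trans
    (Equiv.sigmaCongrRight fun k => Equiv.piComm fun (_ : Fin k) (_ : Fin m) => ℕ)

lemma list_sum_map_eq (m : ℕ) (L : List (Fin m → ℕ)) (f : (Fin m → ℕ) → ℕ) :
    (L.map f).sum = ∑ j : Fin L.length, f (L.get j) := by
  induction L with
  | nil => simp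
  | cons a l ih =>
    rw [List.map_cons, List.sum_cons, ih]
    show f a + _ = ∑ j : Fin (l.length + 1), f ((a :: l).get j)
    rw [Fin.sum_univ_succ]
    rfl

lemma lset_mem_iff (m : ℕ) (L : List (Fin m → ℕ)) (P : (Fin m → ℕ) → Prop) :
    (∀ c ∈ L, P c) ↔ ∀ j : Fin L.length, P (L.get j) := by
  constructor
  · intro h j
    exact h _ (List.get_mem L j)
  · intro h c hc
    obtain ⟨j, rfl⟩ := List.mem_iff_get.mp hc
    exact h j

def lsetEquiv (m n : ℕ) :
    LSet m n ≃ {p : Σ k : ℕ, Matrix (Fin m) (Fin k) ℕ //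
      (∑ i, ∑ j, p.2 i j) = n ∧ ∀ j, ∃ i, 0 < p.2 i j} := by
  refine Equiv.subtypeEquiv (listEquivSigma m) fun L => ?_
  have h1 : listEquivSigma m L = ⟨L.length, fun i j => L.get j i⟩ := rfl
  rw [h1]
  dsimp only
  rw [Finset.sum_comm, ← list_sum_map_eq m L fun c => ∑ i, c i,
    lset_mem_iff m L fun c => ∃ i, 0 < c i]

lemma genmatCard_eq (m n : ℕ) : GenmatCard m n = Nat.card (LSet m n) := by
  rw [GenmatCard, ← Nat.card_coe_set_eq]
  exact (Nat.card_congr (lsetEquiv m n)).symm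

instance lsetZeroUnique (m : ℕ) : Unique (LSet m 0) := by
  refine ⟨⟨⟨[], by simp⟩⟩, ?_⟩
  rintro ⟨L, hs, hp⟩
  refine Subtype.ext ?_
  cases L with
  | nil => rfl
  | cons c L' =>
    exfalso
    obtain ⟨i, hi⟩ := hp c List.mem_cons_self
    simp only [List.map_cons, List.sum_cons] at hs
    have hpos : 0 < ∑ i, c i := Finset.sum_pos' (fun _ _ => Nat.zero_le _) ⟨i, mem_univ i, hi⟩
    generalize hSS : (List.map (fun c => ∑ i, c i) L').sum = S at hs
    clear hSS
    omega

/-- Peeling off the first column. -/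
def lsetCons (m n : ℕ)
    (x : Σ s : Fin (n + 1), ({c : Fin m → ℕ // ∑ i, c i = s.val + 1} × LSet m (n - s.val))) :
    LSet m (n + 1) := by
  refine ⟨x.2.1.val :: x.2.2.val, ?_, ?_⟩
  · have hc := x.2.1.2
    have hL := x.2.2.2.1
    have hlt := x.1.isLt
    simp only [List.map_cons, List.sum_cons]
    generalize hSS : (List.map (fun c => ∑ i, c i) x.2.2.val).sum = S at hL ⊢
    clear hSS
    omega
  · intro d hd
    rcases List.mem_cons.mp hd with h | h
    · have hc := x.2.1.2
      rw [h]
      by_contra hno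
      push_neg at hno
      have h0 : ∑ i, (x.2.1.val) i = 0 := Finset.sum_eq_zero fun i _ => Nat.le_zero.mp (hno i)
      omega
    · exact x.2.2.2.2 d h

lemma lsetCons_bijective (m n : ℕ) : Function.Bijective (lsetCons m n) := by
  constructor
  · rintro ⟨s₁, ⟨c₁, hc₁⟩, P₁⟩ ⟨s₂, ⟨c₂, hc₂⟩, P₂⟩ h
    have hv : c₁ :: P₁.val = c₂ :: P₂.val := congrArg Subtype.val h
    rw [List.cons.injEq] at hv
    obtain ⟨hcc, hLL⟩ := hv
    have hss : s₁ = s₂ := by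
      apply Fin.ext
      have h12 : (s₁ : ℕ) + 1 = (s₂ : ℕ) + 1 := by rw [← hc₁, ← hc₂, hcc]
      exact Nat.add_right_cancel h12
    subst hss
    subst hcc
    have hPP : P₁ = P₂ := Subtype.ext hLL
    subst hPP
    rfl
  · rintro ⟨L, hs, hp⟩
    cases L with
    | nil => simp at hs
    | cons c L' =>
      simp only [List.map_cons, List.sum_cons] at hs
      obtain ⟨i, hi⟩ := hp c List.mem_cons_self
      have hpos : 0 < ∑ i, c i :=
        Finset.sum_pos' (fun _ _ => Nat.zero_le _) ⟨i, mem_univ i, hi⟩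
      have hs' := hs
      generalize hSS : (List.map (fun c => ∑ i, c i) L').sum = S at hs'
      have hle : ∑ i, c i ≤ n + 1 := by clear hSS hs; omega
      have h1 : ∑ i, c i - 1 < n + 1 := by clear hSS hs; omega
      have h2 : ∑ i, c i = (∑ i, c i - 1) + 1 := by clear hSS hs; omega
      have h3 : (List.map (fun c => ∑ i, c i) L').sum = n - (∑ i, c i - 1) := by
        rw [hSS]
        clear hSS hs
        omega
      exact ⟨⟨⟨∑ i, c i - 1, h1⟩,
        ⟨c, h2⟩,
        ⟨L', h3, fun d hd => hp d (List.mem_cons_of_mem _ hd)⟩⟩,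
        Subtype.ext rfl⟩

lemma lset_finite (m : ℕ) : ∀ n, Finite (LSet m n) := by
  intro n
  induction n using Nat.strong_induction_on with
  | _ n ih =>
    cases n with
    | zero => infer_instance
    | succ k =>
      haveI : ∀ s : Fin (k + 1), Finite (LSet m (k - s.val)) := fun s => ih _ (by omega)
      exact Finite.of_surjective _ (lsetCons_bijective m k).2

instance (m n : ℕ) : Finite (LSet m n) := lset_finite m n

lemma genmatCard_zero (m : ℕ) : GenmatCard m 0 = 1 := by
  rw [genmatCard_eq]
  exact Nat.card_unique

lemma genmatCard_succ (m n : ℕ) :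
    GenmatCard m (n + 1) = ∑ s ∈ range (n + 1), ColCount m (s + 1) * GenmatCard m (n - s) := by
  rw [genmatCard_eq, ← Nat.card_eq_of_bijective _ (lsetCons_bijective m n), natCard_sigma,
    Fin.sum_univ_eq_sum_range
      (fun s => Nat.card ({c : Fin m → ℕ // ∑ i, c i = s + 1} × LSet m (n - s)))]
  refine Finset.sum_congr rfl fun s hs => ?_
  rw [Nat.card_prod, genmatCard_eq]
  rfl

end Lists

theorem genmat_ogf (m : ℕ) :
    (2 * (1 - PowerSeries.X) ^ m - 1) *
        PowerSeries.mk (fun n => (GenmatCard m n : ℚ)) =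
      (1 - PowerSeries.X) ^ m := by
  set A : PowerSeries ℚ := (1 - PowerSeries.X) ^ m with hA
  set V : PowerSeries ℚ := PowerSeries.mk (fun s => (ColCount m s : ℚ)) with hV
  set G : PowerSeries ℚ := PowerSeries.mk (fun n => (GenmatCard m n : ℚ)) with hG
  have h1 : A * V = 1 := one_sub_X_pow_mul_colCount m
  have hVC : V - 1 =
      PowerSeries.mk (fun s => if s = 0 then (0 : ℚ) else (ColCount m s : ℚ)) := by
    ext n
    cases n with
    | zero => simp [hV, colCount_zero]
    | succ k => simp [hV]
  have h2 : G = 1 + (V - 1) * G := by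
    rw [hVC]
    ext n
    cases n with
    | zero =>
      simp [hG, PowerSeries.coeff_mul, genmatCard_zero]
    | succ k =>
      rw [map_add, PowerSeries.coeff_mul, Finset.Nat.sum_antidiagonal_eq_sum_range_succ_mk]
      have hone : (PowerSeries.coeff (R := ℚ) (k + 1)) 1 = 0 := by simp
      rw [hone, zero_add, Finset.sum_range_succ']
      simp only [PowerSeries.coeff_mk, if_pos rfl, zero_mul, add_zero]
      rw [hG]
      simp only [PowerSeries.coeff_mk]
      rw [genmatCard_succ]
      push_cast
      rw [zero_mul, add_zero]
  have h3 : ((2 : PowerSeries ℚ) - V) * G = 1 := by linear_combination h2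
  linear_combination G * h1 + A * h3
end

section
/- For all m ≥ 0, the ordinary generating function of |Genmat01_m[n]| is Σ_{n≥0} |Genmat01_m[n]| x^n = 1 / (2 - (1+x)^m), as an identity of formal power series; equivalently, (2 - (1+x)^m) · Σ_{n≥0} |Genmat01_m[n]| x^n = 1. -/
open Finset

noncomputable def Genmat01Card (m n : ℕ) : ℕ :=
  Set.ncard {p : Σ k : ℕ, Matrix (Fin m) (Fin k) ℕ |
    (∑ i, ∑ j, p.2 i j) = n ∧ (∀ i j, p.2 i j ≤ 1) ∧ ∀ j, ∃ i, 0 < p.2 i j}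

namespace Genmat01Aux

abbrev NES (m : ℕ) := {s : Finset (Fin m) // s.Nonempty}

def wsum {m : ℕ} (l : List (NES m)) : ℕ := (l.map (fun s => s.1.card)).sum

abbrev LT (m n : ℕ) : Type := {l : List (NES m) // wsum l = n}

def f (m : ℕ) : ℕ → ℕ
  | 0 => 1
  | n + 1 => ∑ c ∈ (Icc 1 (n + 1)).attach, Nat.choose m c.1 * f m (n + 1 - c.1)
decreasing_by
  have := mem_Icc.mp c.2; omega

lemma wsum_eq_zero {m : ℕ} {l : List (NES m)} (h : wsum l = 0) : l = [] := by
  cases l with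
  | nil => rfl
  | cons a t =>
    exfalso
    have : 0 < a.1.card := a.2.card_pos
    simp only [wsum, List.map_cons, List.sum_cons] at h
    omega

abbrev Idx (m n : ℕ) := {s : Finset (Fin m) // s.Nonempty ∧ s.card ≤ n}

def esucc (m n : ℕ) : LT m (n + 1) ≃ Σ s : Idx m (n + 1), LT m (n + 1 - s.1.card) where
  toFun := fun l =>
    match l with
    | ⟨[], h⟩ => absurd h (by simp [wsum])
    | ⟨a :: t, h⟩ =>
        have h' : a.1.card + wsum t = n + 1 := by
          simpa only [wsum, List.map_cons, List.sum_cons] using h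
        have hpos : 0 < a.1.card := a.2.card_pos
        ⟨⟨a.1, a.2, by omega⟩, ⟨t, show wsum t = n + 1 - a.1.card by omega⟩⟩
  invFun := fun x => ⟨⟨x.1.1, x.1.2.1⟩ :: x.2.1, by
      obtain ⟨⟨s, hs1, hs2⟩, ⟨t, ht⟩⟩ := x
      simp only [wsum] at ht ⊢
      simp only [List.map_cons, List.sum_cons]
      have := hs1.card_pos
      omega⟩
  left_inv := fun l => by
    obtain ⟨l, h⟩ := l
    cases l with
    | nil => simp [wsum] at h
    | cons a t => rfl
  right_inv := fun x => by
    obtain ⟨⟨s, hs⟩, ⟨t, ht⟩⟩ := x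
    rfl

instance finiteLT (m n : ℕ) : Finite (LT m n) := by
  induction n using Nat.strong_induction_on with
  | _ n ih =>
    cases n with
    | zero =>
      haveI : Subsingleton (LT m 0) :=
        ⟨fun a b => Subtype.ext (by rw [wsum_eq_zero a.2, wsum_eq_zero b.2])⟩
      infer_instance
    | succ n =>
      haveI : ∀ s : Idx m (n + 1), Finite (LT m (n + 1 - s.1.card)) := fun s => by
        have h1 := s.2.1.card_pos
        have h2 := s.2.2
        exact ih _ (by omega)
      exact Finite.of_equiv _ (esucc m n).symm

lemma nat_card_sigma {ι : Type*} [Fintype ι] (g : ι → Type*) [∀ i, Finite (g i)] :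
    Nat.card (Σ i, g i) = ∑ i, Nat.card (g i) := by
  haveI : ∀ i, Fintype (g i) := fun i => Fintype.ofFinite _
  simp [Nat.card_eq_fintype_card, Fintype.card_sigma]

lemma sum_idx (m n : ℕ) (g : ℕ → ℕ) :
    ∑ s : Idx m (n + 1), g s.1.card = ∑ c ∈ Icc 1 (n + 1), Nat.choose m c * g c := by
  classical
  rw [← Finset.sum_subtype
      (univ.filter fun s : Finset (Fin m) => s.Nonempty ∧ s.card ≤ n + 1)
      (by simp) (fun s => g s.card)]
  have hT : (univ.filter fun s : Finset (Fin m) => s.Nonempty ∧ s.card ≤ n + 1)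
      = (Icc 1 (n + 1)).biUnion (fun c => powersetCard c univ) := by
    ext s
    simp only [mem_filter, mem_univ, true_and, mem_biUnion, mem_Icc, mem_powersetCard,
      subset_univ, true_and, ← Finset.card_pos]
    constructor
    · rintro ⟨h1, h2⟩; exact ⟨s.card, ⟨by omega, h2⟩, rfl⟩
    · rintro ⟨c, ⟨hc1, hc2⟩, hc⟩; omega
  rw [hT, Finset.sum_biUnion]
  · apply Finset.sum_congr rfl
    intro c _
    have : ∀ s ∈ powersetCard c (univ : Finset (Fin m)), g s.card = g c := by
      intro s hs
      rw [(mem_powersetCard.mp hs).2]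
    rw [Finset.sum_congr rfl this, Finset.sum_const, card_powersetCard, card_univ,
      Fintype.card_fin, smul_eq_mul]
  · intro c1 h1 c2 h2 hne
    simp only [Function.onFun]
    rw [Finset.disjoint_left]
    intro s hs1 hs2
    exact hne (((mem_powersetCard.mp hs1).2.symm).trans (mem_powersetCard.mp hs2).2)

lemma cardLT (m n : ℕ) : Nat.card (LT m n) = f m n := by
  induction n using Nat.strong_induction_on with
  | _ n ih =>
    cases n with
    | zero =>
      rw [show f m 0 = 1 by rw [f]]
      exact Nat.card_eq_one_iff_unique.mpr
        ⟨⟨fun a b => Subtype.ext (by rw [wsum_eq_zero a.2, wsum_eq_zero b.2])⟩,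
         ⟨⟨[], by simp [wsum]⟩⟩⟩
    | succ n =>
      rw [Nat.card_congr (esucc m n), nat_card_sigma]
      have h1 : ∀ s : Idx m (n + 1),
          Nat.card (LT m (n + 1 - s.1.card)) = f m (n + 1 - s.1.card) := fun s => by
        have := s.2.1.card_pos
        have := s.2.2
        exact ih _ (by omega)
      rw [Finset.sum_congr rfl (fun s _ => h1 s),
        sum_idx m n (fun c => f m (n + 1 - c)), f,
        Finset.sum_attach (Icc 1 (n + 1)) (fun c => Nat.choose m c * f m (n + 1 - c))]

def GMset (m n : ℕ) : Set (Σ k : ℕ, Matrix (Fin m) (Fin k) ℕ) :=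
  {p | (∑ i, ∑ j, p.2 i j) = n ∧ (∀ i j, p.2 i j ≤ 1) ∧ ∀ j, ∃ i, 0 < p.2 i j}

lemma wsum_eq {m : ℕ} (l : List (NES m)) :
    wsum l = ∑ j : Fin l.length, (l.get j).1.card := by
  rw [wsum, ← Fin.sum_univ_fun_getElem l (fun s => s.1.card)]
  simp [List.get_eq_getElem]

def toL (m n : ℕ) (p : GMset m n) : LT m n :=
  ⟨List.ofFn (fun j : Fin p.1.1 => (⟨univ.filter (fun i => 0 < p.1.2 i j), by
      obtain ⟨i, hi⟩ := p.2.2.2 j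
      exact ⟨i, by simp [hi]⟩⟩ : NES m)),
   by
     have hsum := p.2.1
     have hle := p.2.2.1
     simp only [wsum, List.map_ofFn, List.sum_ofFn, Function.comp]
     calc ∑ j : Fin p.1.1, (univ.filter (fun i => 0 < p.1.2 i j)).card
         = ∑ j : Fin p.1.1, ∑ i, p.1.2 i j := by
           apply Finset.sum_congr rfl
           intro j _
           rw [Finset.card_filter]
           apply Finset.sum_congr rfl
           intro i _
           have := hle i j
           split_ifs with h <;> omega
       _ = ∑ i, ∑ j, p.1.2 i j := Finset.sum_comm
       _ = n := hsum⟩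

lemma toL_bijective (m n : ℕ) : Function.Bijective (toL m n) := by
  constructor
  · rintro ⟨⟨k, M⟩, hp⟩ ⟨⟨k', M'⟩, hq⟩ h
    simp only [toL, Subtype.mk.injEq] at h
    have hk : k = k' := by
      have := congrArg List.length h
      simpa using this
    subst hk
    have hfun := List.ofFn_injective h
    apply Subtype.ext
    simp only [Sigma.mk.inj_iff, heq_eq_eq, true_and]
    funext i j
    have h1 := congrFun hfun j
    have h2 : (univ.filter (fun i => 0 < M i j)) = (univ.filter (fun i => 0 < M' i j)) := by
      simpa [Subtype.ext_iff] using h1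
    have h3 := Finset.ext_iff.mp h2 i
    simp only [Finset.mem_filter, Finset.mem_univ, true_and] at h3
    have h4 : M i j ≤ 1 := hp.2.1 i j
    have h5 : M' i j ≤ 1 := hq.2.1 i j
    omega
  · rintro ⟨l, hl⟩
    refine ⟨⟨⟨l.length, fun i j => if i ∈ (l.get j).1 then 1 else 0⟩, ?_, ?_, ?_⟩, ?_⟩
    · -- sum condition
      rw [Finset.sum_comm]
      have h0 : ∀ j : Fin l.length, (∑ i, if i ∈ (l.get j).1 then 1 else 0) = (l.get j).1.card := by
        intro j
        rw [Finset.sum_ite_mem, Finset.univ_inter]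
        simp
      calc (∑ j : Fin l.length, ∑ i, if i ∈ (l.get j).1 then 1 else 0)
          = ∑ j : Fin l.length, ((l.get j).1.card) := by
            exact Finset.sum_congr rfl fun j _ => h0 j
        _ = n := by rw [← hl, wsum_eq]
    · intro i j
      show (if i ∈ (l.get j).1 then 1 else 0) ≤ 1
      split_ifs <;> omega
    · intro j
      obtain ⟨i, hi⟩ := (l.get j).2
      refine ⟨i, ?_⟩
      rw [List.get_eq_getElem] at hi
      show (0:ℕ) < if i ∈ (l[(j:ℕ)]'j.isLt).1 then 1 else 0
      simp [hi]
    · apply Subtype.ext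
      simp only [toL]
      apply List.ext_get
      · simp
      · intro i h1 h2
        rw [List.get_ofFn]
        apply Subtype.ext
        ext x
        simp only [Finset.mem_filter, Finset.mem_univ, true_and, List.get_ofFn]
        show (0 < if x ∈ (l.get _).1 then 1 else 0) ↔ _
        split_ifs with h <;> simp_all [List.get_eq_getElem]
lemma f_zero (m : ℕ) : f m 0 = 1 := by rw [f]

lemma f_succ (m n : ℕ) :
    (f m (n + 1) : ℚ) = ∑ c ∈ Icc 1 (n + 1), (m.choose c : ℚ) * (f m (n + 1 - c) : ℚ) := by
  rw [f, Finset.sum_attach (Icc 1 (n + 1)) (fun c => Nat.choose m c * f m (n + 1 - c))]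
  push_cast
  rfl

lemma card_eq (m n : ℕ) : Genmat01Card m n = f m n := by
  rw [Genmat01Card, ← Nat.card_coe_set_eq, ← cardLT m n]
  exact Nat.card_congr (Equiv.ofBijective _ (toL_bijective m n))

lemma coeff_one_add_X_pow (m k : ℕ) :
    (PowerSeries.coeff k) ((1 + PowerSeries.X) ^ m) = (m.choose k : ℚ) := by
  rw [← Polynomial.coe_one, ← Polynomial.coe_X, ← Polynomial.coe_add, ← Polynomial.coe_pow,
    Polynomial.coeff_coe, Polynomial.coeff_one_add_X_pow]

lemma coeff_two (k : ℕ) : (PowerSeries.coeff k) 2 = if k = 0 then (2 : ℚ) else 0 := by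
  rw [show (2 : PowerSeries ℚ) = 1 + 1 by norm_num, map_add, PowerSeries.coeff_one]
  split_ifs <;> norm_num

lemma range_split (N : ℕ) (g : ℕ → ℚ) :
    ∑ k ∈ range (N + 1), g k = g 0 + ∑ k ∈ Icc 1 N, g k := by
  have h : range (N + 1) = insert 0 (Icc 1 N) := by
    ext x; simp only [mem_range, mem_insert, mem_Icc]; omega
  rw [h, Finset.sum_insert (by simp)]

end Genmat01Aux

open Genmat01Aux in
theorem genmat01_ogf (m : ℕ) :
    (2 - (1 + PowerSeries.X) ^ m) *
        PowerSeries.mk (fun n => (Genmat01Card m n : ℚ)) = 1 := by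
  have hG : ∀ k, (Genmat01Card m k : ℚ) = (f m k : ℚ) := fun k => by rw [card_eq]
  ext n
  rw [PowerSeries.coeff_mul, Finset.Nat.sum_antidiagonal_eq_sum_range_succ_mk]
  have hc : ∀ k, (PowerSeries.coeff k) (2 - (1 + PowerSeries.X) ^ m)
      = (if k = 0 then (2 : ℚ) else 0) - (m.choose k : ℚ) := by
    intro k
    rw [map_sub, coeff_one_add_X_pow, coeff_two]
  simp only [hc, PowerSeries.coeff_mk, hG]
  cases n with
  | zero =>
    simp [f_zero, PowerSeries.coeff_one]
    norm_num
  | succ n =>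
    rw [show (PowerSeries.coeff (n + 1)) 1 = (0 : ℚ) by simp [PowerSeries.coeff_one]]
    rw [show (n + 1).succ = (n + 1) + 1 from rfl, range_split (n + 1) _]
    have t1 : ∑ k ∈ Icc 1 (n + 1),
        ((if k = 0 then (2 : ℚ) else 0) - (m.choose k : ℚ)) * (f m (n + 1 - k) : ℚ)
        = - ∑ k ∈ Icc 1 (n + 1), (m.choose k : ℚ) * (f m (n + 1 - k) : ℚ) := by
      rw [← Finset.sum_neg_distrib]
      apply Finset.sum_congr rfl
      intro k hk
      have := (mem_Icc.mp hk).1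
      rw [if_neg (by omega)]
      ring
    rw [t1, ← f_succ]
    simp [Nat.choose_zero_right, f_zero]
    ring
end

section
/- For all m, n ≥ 0: |Genmat_m[n]| = Σ_{k=0}^{n} Σ_{i=0}^{k} (-1)^i C(k,i) · C(m(k-i) + n - 1, n), where the inner term uses the multichoose coefficient ⟨m(k-i) over n⟩ = C(m(k-i)+n-1, n). -/
open Finset

def NFin (m k n : ℕ) : Finset (Matrix (Fin m) (Fin k) ℕ) :=
  (Finset.piAntidiag (univ : Finset (Fin m × Fin k)) n).map
    ((Equiv.curry (Fin m) (Fin k) ℕ).trans Matrix.of).toEmbedding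

lemma mem_NFin {m k n : ℕ} {A : Matrix (Fin m) (Fin k) ℕ} :
    A ∈ NFin m k n ↔ (∑ i, ∑ j, A i j) = n := by
  rw [NFin, Finset.mem_map_equiv, Finset.mem_piAntidiag]
  simp [Equiv.curry, Fintype.sum_prod_type]

lemma card_NFin (m k n : ℕ) : (NFin m k n).card = Nat.multichoose (m * k) n := by
  classical
  rw [NFin, Finset.card_map, ← Finset.map_sym_eq_piAntidiag, Finset.card_map, sym_univ,
    card_univ, Sym.card_sym_eq_multichoose]
  simp

noncomputable def PFin (m k n : ℕ) : Finset (Matrix (Fin m) (Fin k) ℕ) :=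
  by classical exact (NFin m k n).filter (fun A => ∀ j, ∃ i, 0 < A i j)

lemma mem_PFin {m k n : ℕ} {A : Matrix (Fin m) (Fin k) ℕ} :
    A ∈ PFin m k n ↔ (∑ i, ∑ j, A i j) = n ∧ ∀ j, ∃ i, 0 < A i j := by
  rw [PFin]; simp [mem_NFin]

open Classical in
lemma fiber_card_s12 (m k n : ℕ) (s : Finset (Fin k)) :
    ((NFin m k n).filter (fun A => (univ.filter fun j => ∃ i, 0 < A i j) = s)).card
      = (PFin m s.card n).card := by
  classical
  set e : Fin s.card ≃o s := s.orderIsoOfFin rfl with he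
  have key : ∀ (g : Fin k → ℕ), (∀ j ∉ s, g j = 0) →
      ∑ j' : Fin s.card, g (e j') = ∑ j, g j := by
    intro g hg
    have h1 : ∑ j' : Fin s.card, g (e j') = ∑ x : s, g (x : Fin k) :=
      Fintype.sum_equiv e.toEquiv _ _ (fun _ => rfl)
    rw [h1, Finset.sum_coe_sort s g]
    exact Finset.sum_subset (Finset.subset_univ s) (fun j _ hj => hg j hj)
  refine Finset.card_nbij' (fun A => fun i j' => A i (e j' : Fin k))
    (fun B => fun i j => if h : j ∈ s then B i (e.symm ⟨j, h⟩) else 0) ?_ ?_ ?_ ?_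
  · -- forward maps into PFin
    intro A hA
    rw [Finset.mem_coe, Finset.mem_filter, mem_NFin] at hA
    obtain ⟨hsum, hsupp⟩ := hA
    have hzero : ∀ j ∉ s, ∀ i, A i j = 0 := by
      intro j hj i
      by_contra h
      exact hj ((Finset.ext_iff.mp hsupp j).mp
        (by simp only [mem_filter, mem_univ, true_and]; exact ⟨i, Nat.pos_of_ne_zero h⟩))
    refine Finset.mem_coe.2 (mem_PFin.2 ?_)
    refine ⟨?_, ?_⟩
    · dsimp only
      rw [← hsum]
      exact Finset.sum_congr rfl fun i _ => key (A i) (fun j hj => hzero j hj i)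
    · intro j'
      have h1 : (e j' : Fin k) ∈ s := (e j').2
      have h2 := (Finset.ext_iff.mp hsupp (e j' : Fin k)).mpr h1
      simpa using h2
  · -- backward maps into fiber
    intro B hB
    rw [Finset.mem_coe, mem_PFin] at hB
    obtain ⟨hsum, hpos⟩ := hB
    refine Finset.mem_coe.2 (Finset.mem_filter.2 ⟨mem_NFin.2 ?_, ?_⟩)
    · dsimp only
      rw [← hsum]
      refine (Finset.sum_congr rfl fun i _ => ?_).symm
      rw [← key (fun j => if h : j ∈ s then B i (e.symm ⟨j, h⟩) else 0)
          (fun j hj => by simp [hj])]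
      refine Finset.sum_congr rfl fun j' _ => ?_
      simp
    · ext j
      simp only [mem_filter, mem_univ, true_and]
      constructor
      · rintro ⟨i, hi⟩
        by_contra hj
        simp [hj] at hi
      · intro hj
        obtain ⟨i, hi⟩ := hpos (e.symm ⟨j, hj⟩)
        exact ⟨i, by simpa [hj] using hi⟩
  · -- left inverse
    intro A hA
    rw [Finset.mem_coe, Finset.mem_filter] at hA
    have hsupp := hA.2
    have hzero : ∀ j ∉ s, ∀ i, A i j = 0 := by
      intro j hj i
      by_contra h
      exact hj ((Finset.ext_iff.mp hsupp j).mp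
        (by simp only [mem_filter, mem_univ, true_and]; exact ⟨i, Nat.pos_of_ne_zero h⟩))
    funext i j
    dsimp only
    by_cases hj : j ∈ s
    · simp only [hj, dif_pos]
      congr 1
      exact congrArg Subtype.val (e.apply_symm_apply ⟨j, hj⟩)
    · simp [hj, hzero j hj i]
  · -- right inverse
    intro B hB
    funext i j'
    dsimp only
    simp only [Subtype.coe_eta, (e j').2, dif_pos]
    congr 1
    exact e.symm_apply_apply j'

lemma card_NFin_eq_sum (m k n : ℕ) :
    (NFin m k n).card = ∑ j ∈ range (k + 1), k.choose j * (PFin m j n).card := by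
  classical
  rw [Finset.card_eq_sum_card_fiberwise
      (f := fun A => univ.filter fun j => ∃ i, 0 < A i j) (t := univ)
      (fun A _ => mem_univ _)]
  rw [← powerset_univ, Finset.sum_powerset]
  rw [card_univ, Fintype.card_fin]
  refine Finset.sum_congr rfl fun j _ => ?_
  rw [Finset.sum_congr rfl (fun s hs => by
    rw [fiber_card_s12, (mem_powersetCard.mp hs).2])]
  rw [Finset.sum_const, Finset.card_powersetCard, card_univ, Fintype.card_fin, smul_eq_mul]

lemma choose_trinomial {k i j : ℕ} (h : i + j ≤ k) :
    k.choose i * (k - i).choose j = k.choose j * (k - j).choose i := by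
  have h1 := Nat.choose_mul (n := k) (k := i + j) (s := i) (Nat.le_add_right _ _)
  have h2 := Nat.choose_mul (n := k) (k := i + j) (s := j) (Nat.le_add_left _ _)
  rw [Nat.add_sub_cancel_left] at h1
  rw [Nat.add_sub_cancel] at h2
  rw [← h1, ← h2, Nat.choose_symm_add]

lemma binom_inversion (f g : ℕ → ℤ)
    (hf : ∀ k, f k = ∑ j ∈ range (k + 1), (k.choose j : ℤ) * g j) (k : ℕ) :
    g k = ∑ i ∈ range (k + 1), (-1 : ℤ) ^ i * k.choose i * f (k - i) := by
  have h1 : ∀ i ∈ range (k + 1),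
      (-1 : ℤ) ^ i * k.choose i * f (k - i)
        = ∑ j ∈ range (k + 1),
            (if j ≤ k - i then (-1 : ℤ) ^ i * k.choose i * ((k - i).choose j : ℤ) * g j else 0) := by
    intro i hi
    rw [hf, Finset.mul_sum, Finset.sum_ite, Finset.sum_const_zero, add_zero]
    have : (range (k + 1)).filter (fun j => j ≤ k - i) = range (k - i + 1) := by
      ext j; simp only [mem_filter, mem_range]; omega
    rw [this]
    exact Finset.sum_congr rfl fun j _ => by ring
  rw [Finset.sum_congr rfl h1, Finset.sum_comm]
  have h2 : ∀ j ∈ range (k + 1),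
      (∑ i ∈ range (k + 1),
        if j ≤ k - i then (-1 : ℤ) ^ i * k.choose i * ((k - i).choose j : ℤ) * g j else 0)
      = (k.choose j : ℤ) * g j * (if k - j = 0 then 1 else 0) := by
    intro j hj
    rw [mem_range] at hj
    rw [Finset.sum_ite, Finset.sum_const_zero, add_zero]
    have hfil : (range (k + 1)).filter (fun i => j ≤ k - i) = range (k - j + 1) := by
      ext i; simp only [mem_filter, mem_range]; omega
    rw [hfil]
    have hterm : ∀ i ∈ range (k - j + 1),
        (-1 : ℤ) ^ i * k.choose i * ((k - i).choose j : ℤ) * g j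
          = ((k.choose j : ℤ) * g j) * ((-1 : ℤ) ^ i * ((k - j).choose i : ℤ)) := by
      intro i hi
      rw [mem_range] at hi
      have hcast : (k.choose i : ℤ) * ((k - i).choose j : ℤ)
          = (k.choose j : ℤ) * ((k - j).choose i : ℤ) := by
        exact_mod_cast congrArg (Nat.cast (R := ℤ)) (choose_trinomial (by omega))
      calc (-1 : ℤ) ^ i * k.choose i * ((k - i).choose j : ℤ) * g j
          = ((k.choose i : ℤ) * ((k - i).choose j : ℤ)) * ((-1 : ℤ) ^ i * g j) := by ring
        _ = ((k.choose j : ℤ) * ((k - j).choose i : ℤ)) * ((-1 : ℤ) ^ i * g j) := by rw [hcast]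
        _ = ((k.choose j : ℤ) * g j) * ((-1 : ℤ) ^ i * ((k - j).choose i : ℤ)) := by ring
    rw [Finset.sum_congr rfl hterm, ← Finset.mul_sum, Int.alternating_sum_range_choose]
  rw [Finset.sum_congr rfl h2]
  rw [Finset.sum_eq_single k]
  · simp
  · intro j hj hne
    rw [mem_range] at hj
    have : k - j ≠ 0 := by omega
    simp [this]
  · intro h; exact absurd (self_mem_range_succ k) h

lemma genmat_card_eq_sum (m n : ℕ) :
    GenmatCard m n = ∑ k ∈ range (n + 1), (PFin m k n).card := by
  classical
  have hset : {p : Σ k : ℕ, Matrix (Fin m) (Fin k) ℕ |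
      (∑ i, ∑ j, p.2 i j) = n ∧ ∀ j, ∃ i, 0 < p.2 i j}
      = ↑((range (n + 1)).sigma (fun k => PFin m k n)) := by
    ext ⟨k, A⟩
    simp only [Set.mem_setOf_eq, Finset.coe_sigma, Set.mem_sigma_iff, Finset.mem_coe,
      Finset.mem_sigma, mem_range, mem_PFin]
    constructor
    · rintro ⟨hsum, hpos⟩
      refine ⟨?_, hsum, hpos⟩
      have hk : k ≤ n := by
        have h1 : ∀ j : Fin k, 1 ≤ ∑ i, A i j := by
          intro j
          obtain ⟨i, hi⟩ := hpos j
          calc 1 ≤ A i j := hi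
            _ ≤ ∑ i, A i j := Finset.single_le_sum (f := fun i => A i j) (fun _ _ => Nat.zero_le _) (mem_univ i)
        have h2 : (univ : Finset (Fin k)).card • 1 ≤ ∑ j, ∑ i, A i j :=
          Finset.card_nsmul_le_sum univ _ 1 (fun j _ => h1 j)
        rw [Finset.sum_comm] at h2
        simpa [hsum] using h2
      omega
    · rintro ⟨_, hsum, hpos⟩
      exact ⟨hsum, hpos⟩
  rw [GenmatCard, hset, Set.ncard_coe_finset, Finset.card_sigma]

theorem genmat_card_sign_reversing (m n : ℕ) :
    (GenmatCard m n : ℤ) =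
      ∑ k ∈ Finset.range (n + 1), ∑ i ∈ Finset.range (k + 1),
        (-1 : ℤ) ^ i * k.choose i * (m * (k - i) + n - 1).choose n := by
  rw [genmat_card_eq_sum]
  push_cast
  refine Finset.sum_congr rfl fun k _ => ?_
  have hinv := binom_inversion (fun k => ((NFin m k n).card : ℤ))
    (fun k => ((PFin m k n).card : ℤ)) (fun k => by
      rw [card_NFin_eq_sum]; push_cast; rfl) k
  rw [hinv]
  refine Finset.sum_congr rfl fun i _ => ?_
  rw [card_NFin, Nat.multichoose_eq]
end

section
/- For all m, n ≥ 0: |Genmat01_m[n]| = Σ_{k=0}^{n} Σ_{i=0}^{k} (-1)^i C(k,i) · C(m(k-i), n). -/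
open Finset


private lemma fin2val (a : Fin 2) : (a : ℕ) = if a = 1 then 1 else 0 := by
  fin_cases a <;> simp

private lemma fin2ext (a b : Fin 2) (h : a = 1 ↔ b = 1) : a = b := by
  fin_cases a <;> fin_cases b <;> simp_all

noncomputable section

private def Fct (m k n : ℕ) : ℕ :=
  (univ.filter (fun A : Fin m → Fin k → Fin 2 => (∑ i, ∑ j, (A i j : ℕ)) = n)).card

private def Gct (m k n : ℕ) : ℕ :=
  (univ.filter (fun A : Fin m → Fin k → Fin 2 =>
    (∑ i, ∑ j, (A i j : ℕ)) = n ∧ ∀ j, ∃ i, A i j ≠ 0)).card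

private lemma sum_eq_card (m k : ℕ) (A : Fin m → Fin k → Fin 2) :
    (∑ i, ∑ j, (A i j : ℕ)) = (univ.filter (fun p : Fin m × Fin k => A p.1 p.2 = 1)).card := by
  rw [Finset.card_filter, Fintype.sum_prod_type]
  exact Finset.sum_congr rfl (fun i _ => Finset.sum_congr rfl (fun j _ => fin2val _))

private lemma Fct_eq (m k n : ℕ) : Fct m k n = (m * k).choose n := by
  have : Fct m k n = (Finset.powersetCard n (univ : Finset (Fin m × Fin k))).card := by
    refine Finset.card_nbij' (fun A => univ.filter (fun p : Fin m × Fin k => A p.1 p.2 = 1))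
      (fun s => fun i j => if (i, j) ∈ s then 1 else 0) ?_ ?_ ?_ ?_
    · intro A hA
      simp only [Finset.mem_coe] at hA ⊢
      rw [mem_powersetCard_univ, ← sum_eq_card]
      exact (mem_filter.mp hA).2
    · intro s hs
      simp only [Finset.mem_coe, mem_filter, mem_univ, true_and] at hs ⊢
      rw [sum_eq_card]
      have hh : (univ.filter fun p : Fin m × Fin k =>
          (if (p.1, p.2) ∈ s then (1 : Fin 2) else 0) = 1) = s := by
        ext p
        by_cases h : p ∈ s <;> simp [h]
      rw [hh]
      exact (mem_powersetCard_univ.mp hs)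
    · intro A _
      funext i j
      apply fin2ext
      simp
    · intro s _
      ext p
      by_cases h : p ∈ s <;> simp [h]
  rw [this, Finset.card_powersetCard, card_univ]
  simp [Fintype.card_prod]

end
section
private lemma col_bound {m k : ℕ} (M : Fin m → Fin k → ℕ) (h : ∀ j, ∃ i, 0 < M i j) :
    k ≤ ∑ i, ∑ j, M i j := by
  rw [Finset.sum_comm]
  calc k = ∑ _j : Fin k, 1 := by simp
    _ ≤ ∑ j, ∑ i, M i j := by
        refine Finset.sum_le_sum (fun j _ => ?_)
        obtain ⟨i, hi⟩ := h j
        calc 1 ≤ M i j := hi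
          _ ≤ ∑ i, M i j :=
            Finset.single_le_sum (f := fun i => M i j) (fun _ _ => Nat.zero_le _) (mem_univ i)

private lemma Gct_vanish {m k n : ℕ} (h : n < k) : Gct m k n = 0 := by
  rw [Gct, Finset.card_eq_zero, Finset.eq_empty_iff_forall_notMem]
  intro A hA
  rw [mem_filter] at hA
  obtain ⟨-, hs, hc⟩ := hA
  have h2 : k ≤ ∑ i, ∑ j, (A i j : ℕ) := col_bound _ (fun j => by
    obtain ⟨i, hi⟩ := hc j
    exact ⟨i, Nat.pos_of_ne_zero (fun hv => hi (Fin.ext (by simp [hv])))⟩)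
  omega
end


private lemma genmat_eq_sum (m n : ℕ) :
    Genmat01Card m n = ∑ k ∈ Finset.range (n + 1), Gct m k n := by
  classical
  set F : Finset (Σ k : ℕ, Matrix (Fin m) (Fin k) ℕ) :=
    (Finset.range (n + 1)).sigma (fun k =>
      (univ.filter (fun A : Fin m → Fin k → Fin 2 =>
        (∑ i, ∑ j, (A i j : ℕ)) = n ∧ ∀ j, ∃ i, A i j ≠ 0)).image
        (fun A => fun i j => (A i j : ℕ))) with hF
  have hset : {p : Σ k : ℕ, Matrix (Fin m) (Fin k) ℕ |
      (∑ i, ∑ j, p.2 i j) = n ∧ (∀ i j, p.2 i j ≤ 1) ∧ ∀ j, ∃ i, 0 < p.2 i j} = ↑F := by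
    ext ⟨k, M⟩
    simp only [Set.mem_setOf_eq, Finset.coe_sigma, hF]
    constructor
    · rintro ⟨hsum, hle, hcol⟩
      have hk : k ≤ n := hsum ▸ col_bound M hcol
      refine Set.mem_sigma_iff.mpr ⟨?_, ?_⟩
      · simpa using Nat.lt_succ_of_le hk
      · refine Finset.mem_image.mpr ?_
        simp only [Finset.coe_image, Set.mem_image, Finset.mem_coe, mem_filter, mem_univ, true_and]
        refine ⟨fun i j => (⟨M i j, by have := hle i j; omega⟩ : Fin 2), ⟨?_, ?_⟩, ?_⟩
        · simpa using hsum
        · intro j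
          obtain ⟨i, hi⟩ := hcol j
          exact ⟨i, fun h => by simp [Fin.ext_iff] at h; omega⟩
        · funext i j; rfl
    · intro hmem
      obtain ⟨-, h2⟩ := Set.mem_sigma_iff.mp hmem
      replace h2 := Finset.mem_image.mp h2
      simp only [Finset.coe_image, Set.mem_image, Finset.mem_coe, mem_filter, mem_univ,
        true_and] at h2
      obtain ⟨A, ⟨hsum, hcol⟩, hAM⟩ := h2
      subst hAM
      refine ⟨hsum, fun i j => by show (A i j : ℕ) ≤ 1; have := (A i j).isLt; omega, fun j => ?_⟩
      obtain ⟨i, hi⟩ := hcol j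
      exact ⟨i, Nat.pos_of_ne_zero (fun hv => hi (Fin.ext (by simp [hv])))⟩
  rw [Genmat01Card, hset, Set.ncard_coe_finset, hF, Finset.card_sigma]
  refine Finset.sum_congr rfl (fun k _ => ?_)
  refine (Finset.card_image_of_injective _ ?_).trans (by rw [Gct])
  intro A B hAB
  funext i j
  exact Fin.val_injective (congrFun (congrFun hAB i) j)

private lemma sum_reindex {k : ℕ} (T : Finset (Fin k)) (f : Fin k → ℕ)
    (hf : ∀ c ∉ T, f c = 0) :
    ∑ c, f c = ∑ r : Fin T.card, f (T.orderEmbOfFin rfl r) := by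
  rw [← Finset.sum_subset (Finset.subset_univ T) (fun c _ hc => hf c hc)]
  rw [← Finset.sum_coe_sort T f]
  rw [← Equiv.sum_comp (T.orderIsoOfFin rfl).toEquiv (fun x => f ↑x)]
  rfl

private lemma key1 {k : ℕ} (T : Finset (Fin k)) (r : Fin T.card)
    (h : T.orderEmbOfFin rfl r ∈ T) :
    (T.orderIsoOfFin rfl).symm ⟨T.orderEmbOfFin rfl r, h⟩ = r := by
  have h2 : (⟨T.orderEmbOfFin rfl r, h⟩ : {x // x ∈ T}) = T.orderIsoOfFin rfl r :=
    Subtype.ext (T.coe_orderIsoOfFin_apply rfl r).symm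
  rw [h2, OrderIso.symm_apply_apply]

private lemma key2 {k : ℕ} (T : Finset (Fin k)) (x : {c // c ∈ T}) :
    T.orderEmbOfFin rfl ((T.orderIsoOfFin rfl).symm x) = ↑x := by
  rw [← Finset.coe_orderIsoOfFin_apply, OrderIso.apply_symm_apply]

private lemma fiber_card_s13 (m k n : ℕ) (T : Finset (Fin k)) :
    (univ.filter (fun B : Fin m → Fin k → Fin 2 =>
      (∑ i, ∑ j, (B i j : ℕ)) = n ∧ univ.filter (fun c => ∃ i, B i c ≠ 0) = T)).card
      = Gct m T.card n := by
  classical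
  rw [Gct]
  refine Finset.card_nbij' (fun B => fun i r => B i (T.orderEmbOfFin rfl r))
    (fun A => fun i c => if h : c ∈ T then A i ((T.orderIsoOfFin rfl).symm ⟨c, h⟩) else 0)
    ?_ ?_ ?_ ?_
  · intro B hB
    simp only [Finset.mem_coe, mem_filter, mem_univ, true_and] at hB ⊢
    obtain ⟨hsum, hcs⟩ := hB
    have hzero : ∀ i c, c ∉ T → B i c = 0 := by
      intro i c hc
      rw [← hcs] at hc
      simp only [mem_filter, mem_univ, true_and, not_exists, not_not] at hc
      exact hc i
    constructor
    · rw [← hsum]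
      refine Finset.sum_congr rfl (fun i _ => ?_)
      exact (sum_reindex T (fun c => (B i c : ℕ))
        (fun c hc => by show (B i c : ℕ) = 0; rw [hzero i c hc]; rfl)).symm
    · intro r
      have h3 : T.orderEmbOfFin rfl r ∈ univ.filter (fun c => ∃ i, B i c ≠ 0) := by
        rw [hcs]; exact T.orderEmbOfFin_mem rfl r
      simpa using h3
  · intro A hA
    simp only [Finset.mem_coe, mem_filter, mem_univ, true_and] at hA ⊢
    obtain ⟨hsum, hcol⟩ := hA
    have hval : ∀ i r, (if h : T.orderEmbOfFin rfl r ∈ T then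
        A i ((T.orderIsoOfFin rfl).symm ⟨T.orderEmbOfFin rfl r, h⟩) else 0) = A i r := by
      intro i r
      rw [dif_pos (T.orderEmbOfFin_mem rfl r), key1]
    constructor
    · rw [← hsum]
      refine Finset.sum_congr rfl (fun i _ => ?_)
      rw [sum_reindex T _ (fun c hc => by rw [dif_neg hc]; rfl)]
      exact Finset.sum_congr rfl (fun r _ => by rw [hval])
    · ext c
      simp only [mem_filter, mem_univ, true_and]
      constructor
      · rintro ⟨i, hi⟩
        by_contra hc
        rw [dif_neg hc] at hi
        exact hi rfl
      · intro hc
        obtain ⟨i, hi⟩ := hcol ((T.orderIsoOfFin rfl).symm ⟨c, hc⟩)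
        exact ⟨i, by rwa [dif_pos hc]⟩
  · intro B hB
    simp only [Finset.mem_coe, mem_filter, mem_univ, true_and] at hB
    obtain ⟨-, hcs⟩ := hB
    funext i c
    beta_reduce
    by_cases hc : c ∈ T
    · rw [dif_pos hc]
      congr 1
      exact key2 T ⟨c, hc⟩
    · rw [dif_neg hc]
      rw [← hcs] at hc
      simp only [mem_filter, mem_univ, true_and, not_exists, not_not] at hc
      exact (hc i).symm
  · intro A hA
    funext i r
    beta_reduce
    rw [dif_pos (T.orderEmbOfFin_mem rfl r), key1]

private lemma Fct_sum (m k n : ℕ) :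
    Fct m k n = ∑ j ∈ Finset.range (k + 1), k.choose j * Gct m j n := by
  classical
  have h1 : Fct m k n = ∑ T ∈ (univ : Finset (Fin k)).powerset,
      (univ.filter (fun B : Fin m → Fin k → Fin 2 =>
        (∑ i, ∑ j, (B i j : ℕ)) = n ∧ univ.filter (fun c => ∃ i, B i c ≠ 0) = T)).card := by
    rw [Fct, Finset.card_eq_sum_card_fiberwise
      (f := fun B : Fin m → Fin k → Fin 2 => univ.filter (fun c => ∃ i, B i c ≠ 0))
      (t := (univ : Finset (Fin k)).powerset) (fun B _ => by simp)]
    exact Finset.sum_congr rfl (fun T _ => by rw [Finset.filter_filter])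
  rw [h1]
  have h2 : ∀ T ∈ (univ : Finset (Fin k)).powerset,
      (univ.filter (fun B : Fin m → Fin k → Fin 2 =>
        (∑ i, ∑ j, (B i j : ℕ)) = n ∧ univ.filter (fun c => ∃ i, B i c ≠ 0) = T)).card
        = Gct m T.card n := fun T _ => fiber_card_s13 m k n T
  rw [Finset.sum_congr rfl h2, Finset.sum_powerset]
  rw [Finset.card_univ, Fintype.card_fin]
  refine Finset.sum_congr rfl (fun j _ => ?_)
  rw [Finset.sum_powersetCard j (univ : Finset (Fin k)) (fun c => Gct m c n)]
  rw [Finset.card_univ, Fintype.card_fin, smul_eq_mul]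

private lemma choose_swap {i j k : ℕ} (hi : i ≤ k) (hj : j ≤ k) :
    k.choose i * (k - i).choose j = k.choose j * (k - j).choose i := by
  rcases le_or_gt (i + j) k with h | h
  · have h1 : j ≤ k - i := by omega
    have h2 : i ≤ k - j := by omega
    rw [← Nat.choose_symm hi, Nat.choose_mul h1]
    congr 1
    rw [← Nat.choose_symm h2]
    congr 1
    omega
  · rw [Nat.choose_eq_zero_of_lt (show k - i < j by omega),
      Nat.choose_eq_zero_of_lt (show k - j < i by omega), mul_zero, mul_zero]

private lemma inversion (k : ℕ) (G : ℕ → ℕ) :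
    ∑ i ∈ Finset.range (k + 1), (-1 : ℤ) ^ i * (k.choose i : ℤ) *
      ((∑ j ∈ Finset.range (k - i + 1), (k - i).choose j * G j : ℕ) : ℤ) = G k := by
  have step1 : ∀ i ∈ Finset.range (k + 1),
      (-1 : ℤ) ^ i * (k.choose i : ℤ) *
        ((∑ j ∈ Finset.range (k - i + 1), (k - i).choose j * G j : ℕ) : ℤ)
      = ∑ j ∈ Finset.range (k + 1),
          (-1 : ℤ) ^ i * (k.choose i : ℤ) * ((k - i).choose j * G j : ℤ) := by
    intro i hi
    push_cast
    rw [Finset.mul_sum]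
    refine Finset.sum_subset (Finset.range_subset_range.mpr (by omega)) ?_
    intro j _ hj
    rw [Finset.mem_range, not_lt] at hj
    rw [Nat.choose_eq_zero_of_lt (show k - i < j by omega)]
    push_cast
    ring
  rw [Finset.sum_congr rfl step1, Finset.sum_comm]
  have step2 : ∀ j ∈ Finset.range (k + 1),
      ∑ i ∈ Finset.range (k + 1),
          (-1 : ℤ) ^ i * (k.choose i : ℤ) * ((k - i).choose j * G j : ℤ)
      = ((k.choose j * G j : ℕ) : ℤ) *
          ∑ i ∈ Finset.range (k + 1), (-1 : ℤ) ^ i * ((k - j).choose i : ℤ) := by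
    intro j hj
    rw [Finset.mem_range] at hj
    rw [Finset.mul_sum]
    refine Finset.sum_congr rfl (fun i hi => ?_)
    rw [Finset.mem_range] at hi
    have := choose_swap (show i ≤ k by omega) (show j ≤ k by omega)
    have hz : (k.choose i : ℤ) * ((k - i).choose j : ℤ)
        = (k.choose j : ℤ) * ((k - j).choose i : ℤ) := by exact_mod_cast this
    push_cast
    linear_combination (-1 : ℤ) ^ i * (G j : ℤ) * hz
  rw [Finset.sum_congr rfl step2]
  have step3 : ∀ j ∈ Finset.range (k + 1),
      (∑ i ∈ Finset.range (k + 1), (-1 : ℤ) ^ i * ((k - j).choose i : ℤ))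
      = if j = k then 1 else 0 := by
    intro j hj
    rw [Finset.mem_range] at hj
    have hsub : (∑ i ∈ Finset.range (k - j + 1), (-1 : ℤ) ^ i * ((k - j).choose i : ℤ))
        = ∑ i ∈ Finset.range (k + 1), (-1 : ℤ) ^ i * ((k - j).choose i : ℤ) := by
      refine Finset.sum_subset (Finset.range_subset_range.mpr (by omega)) ?_
      intro i _ hi
      rw [Finset.mem_range, not_lt] at hi
      rw [Nat.choose_eq_zero_of_lt (show k - j < i by omega)]
      ring
    rw [← hsub, Int.alternating_sum_range_choose]
    congr 1
    simp only [eq_iff_iff]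
    omega
  calc ∑ j ∈ Finset.range (k + 1), ((k.choose j * G j : ℕ) : ℤ) *
        ∑ i ∈ Finset.range (k + 1), (-1 : ℤ) ^ i * ((k - j).choose i : ℤ)
      = ∑ j ∈ Finset.range (k + 1),
          (if j = k then ((k.choose j * G j : ℕ) : ℤ) else 0) := by
        refine Finset.sum_congr rfl (fun j hj => ?_)
        rw [step3 j hj]
        split <;> ring
    _ = (G k : ℤ) := by
        rw [Finset.sum_ite_eq' (Finset.range (k + 1)) k]
        simp [Finset.mem_range]


theorem genmat01_card_sign_reversing (m n : ℕ) :
    (Genmat01Card m n : ℤ) =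
      ∑ k ∈ Finset.range (n + 1), ∑ i ∈ Finset.range (k + 1),
        (-1 : ℤ) ^ i * k.choose i * (m * (k - i)).choose n := by
  rw [genmat_eq_sum]
  push_cast
  refine Finset.sum_congr rfl (fun k hk => ?_)
  rw [← inversion k (fun j => Gct m j n)]
  refine Finset.sum_congr rfl (fun i hi => ?_)
  congr 1
  have h1 : (∑ j ∈ Finset.range (k - i + 1), (k - i).choose j * Gct m j n)
      = (m * (k - i)).choose n := (Fct_sum m (k - i) n).symm.trans (Fct_eq m (k - i) n)
  exact_mod_cast congrArg (Nat.cast (R := ℤ)) h1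
end
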